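/- arXiv:1604.08733 — 5 statements merged into one kernel-verified Lean document; each statement's English description precedes it below -/
import Mathlib

section
/- Let D be a strongly connected balanced bipartite digraph with partite sets X and Y, each of size a ≥ 2. If d(x) + d(y) ≥ 2a + 3 for every dominating pair of vertices {x, y}, then the underlying undirected graph UG(D) is 2-connected. -/
open Finset

variable {V : Type*}

/-- Total degree (out-degree plus in-degree) of `x` in the digraph with arc relation `A`. -/
noncomputable def deg (A : V → V → Prop) (x : V) : ℕ :=
  Set.ncard {y | A x y} + Set.ncard {y | A y x}

/-- The digraph with arc relation `A` is strongly connected. -/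
def StrongConn (A : V → V → Prop) : Prop :=
  ∀ u v : V, Relation.ReflTransGen A u v

/-- `{x, y}` is a dominating pair: distinct vertices with a common out-neighbour. -/
def DomPair (A : V → V → Prop) (x y : V) : Prop :=
  x ≠ y ∧ ∃ z, A x z ∧ A y z

/-- `X, Y` is a bipartition of the digraph `A`: the two parts partition the vertex
set and every arc joins the two parts. -/
def IsBipartition (A : V → V → Prop) (X Y : Set V) : Prop :=
  Disjoint X Y ∧ X ∪ Y = Set.univ ∧
    ∀ u v, A u v → (u ∈ X ∧ v ∈ Y) ∨ (u ∈ Y ∧ v ∈ X)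

/-- The underlying undirected graph of the digraph `A`. -/
def UG (A : V → V → Prop) : SimpleGraph V where
  Adj u v := u ≠ v ∧ (A u v ∨ A v u)
  symm := ⟨fun u v h => ⟨h.1.symm, h.2.symm⟩⟩
  loopless := ⟨fun v h => h.1 rfl⟩

/-- A graph on a finite vertex set is 2-connected if it has at least 3 vertices and
deleting any single vertex leaves a connected graph. -/
def TwoConnected [Fintype V] (G : SimpleGraph V) : Prop :=
  3 ≤ Fintype.card V ∧ ∀ v : V, (G.induce {u : V | u ≠ v}).Connected

/-- Reachability off `v`: both endpoints avoid `v` and they are reachable in the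
induced subgraph of `UG A` avoiding `v`. -/
def ROff (A : V → V → Prop) (v x u : V) : Prop :=
  ∃ (hx : x ≠ v) (hu : u ≠ v),
    ((UG A).induce {w : V | w ≠ v}).Reachable ⟨x, hx⟩ ⟨u, hu⟩

lemma ROff.trans_adj {A : V → V → Prop} {v x u z : V} (h : ROff A v x u)
    (hz : z ≠ v) (huz : u ≠ z) (harc : A u z ∨ A z u) : ROff A v x z := by
  obtain ⟨hx, hu, hr⟩ := h
  refine ⟨hx, hz, hr.trans (SimpleGraph.Adj.reachable ?_)⟩
  show (UG A).Adj u z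
  exact ⟨huz, harc⟩

lemma firstHit {A : V → V → Prop} {v : V} (hirr : ∀ w, ¬ A w w) {x : V}
    (h : Relation.ReflTransGen A x v) :
    x ≠ v → ∃ u, A u v ∧ ROff A v x u := by
  induction h using Relation.ReflTransGen.head_induction_on with
  | refl => intro hx; exact absurd rfl hx
  | @head b c hbc hcv ih =>
    intro hb
    by_cases hc : c = v
    · subst hc
      exact ⟨b, hbc, ⟨hb, hb, SimpleGraph.Reachable.refl _⟩⟩
    · obtain ⟨u, huv, hru⟩ := ih hc
      refine ⟨u, huv, ?_⟩
      have hbc' : b ≠ c := fun h => hirr b (h ▸ hbc)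
      have hrbc : ROff A v b c := by
        refine ⟨hb, hc, SimpleGraph.Adj.reachable ?_⟩
        show (UG A).Adj b c
        exact ⟨hbc', Or.inl hbc⟩
      obtain ⟨h1, h2, r1⟩ := hrbc
      obtain ⟨h3, h4, r2⟩ := hru
      exact ⟨h1, h4, r1.trans r2⟩

lemma nbhd_bound [Fintype V] {A : V → V → Prop} {X Y : Set V} (hbip : IsBipartition A X Y)
    {v : V} (hv : v ∈ X) {x u : V} (hru : ROff A v x u) (hAuv : A u v) :
    deg A u ≤ 2 * (({w | ROff A v x w} ∩ X).ncard + 1) := by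
  obtain ⟨hd, -, harc⟩ := hbip
  have huY : u ∈ Y := by
    rcases harc u v hAuv with ⟨_, hvY⟩ | ⟨h, _⟩
    · exact absurd rfl (hd.ne_of_mem hv hvY)
    · exact h
  have key : ∀ z, A u z ∨ A z u → z ∈ ({w | ROff A v x w} ∩ X) ∪ {v} := by
    intro z hz
    have hzX : z ∈ X := by
      rcases hz with h | h
      · rcases harc u z h with ⟨hX, _⟩ | ⟨_, h2⟩
        · exact absurd rfl (hd.ne_of_mem hX huY)
        · exact h2
      · rcases harc z u h with ⟨h2, _⟩ | ⟨_, hX⟩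
        · exact h2
        · exact absurd rfl (hd.ne_of_mem hX huY)
    by_cases hzv : z = v
    · exact Or.inr (by simp [hzv])
    · refine Or.inl ⟨?_, hzX⟩
      have huz : u ≠ z := fun h => (hd.ne_of_mem hzX (h ▸ huY)) rfl
      exact hru.trans_adj hzv huz hz
  have h1 : {z | A u z} ⊆ ({w | ROff A v x w} ∩ X) ∪ {v} := fun z hz => key z (Or.inl hz)
  have h2 : {z | A z u} ⊆ ({w | ROff A v x w} ∩ X) ∪ {v} := fun z hz => key z (Or.inr hz)
  have c1 := Set.ncard_le_ncard h1 (Set.toFinite _)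
  have c2 := Set.ncard_le_ncard h2 (Set.toFinite _)
  have c3 := Set.ncard_union_le ({w | ROff A v x w} ∩ X) {v}
  rw [Set.ncard_singleton] at c3
  unfold deg
  omega

lemma IsBipartition.symm {A : V → V → Prop} {X Y : Set V} (h : IsBipartition A X Y) :
    IsBipartition A Y X :=
  ⟨h.1.symm, by rw [Set.union_comm]; exact h.2.1, fun u w hw => (h.2.2 u w hw).symm⟩

lemma key_count [Fintype V] {A : V → V → Prop} {X Y : Set V} {a : ℕ}
    (hX : X.ncard = a) (hbip : IsBipartition A X Y) {v : V} (hv : v ∈ X)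
    {p q : V} (hp : p ≠ v) (hq : q ≠ v)
    (hnr : ¬ ((UG A).induce {w : V | w ≠ v}).Reachable ⟨p, hp⟩ ⟨q, hq⟩)
    {u1 u2 : V} (h1 : ROff A v p u1) (h2 : ROff A v q u2)
    (hA1 : A u1 v) (hA2 : A u2 v) :
    deg A u1 + deg A u2 ≤ 2 * a + 2 := by
  have hb1 := nbhd_bound hbip hv h1 hA1
  have hb2 := nbhd_bound hbip hv h2 hA2
  set C1 : Set V := {w | ROff A v p w} with hC1
  set C2 : Set V := {w | ROff A v q w} with hC2
  have hdisj : Disjoint (C1 ∩ X) (C2 ∩ X) := by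
    rw [Set.disjoint_left]
    rintro w ⟨hw1, -⟩ ⟨hw2, -⟩
    obtain ⟨hp', hw', r1⟩ := hw1
    obtain ⟨hq', hw'', r2⟩ := hw2
    exact hnr (r1.trans r2.symm)
  have hsub : (C1 ∩ X) ∪ (C2 ∩ X) ⊆ X \ {v} := by
    rintro w (⟨⟨_, hw, -⟩, hwX⟩ | ⟨⟨_, hw, -⟩, hwX⟩) <;> exact ⟨hwX, hw⟩
  have hle := Set.ncard_le_ncard hsub (Set.toFinite _)
  rw [Set.ncard_union_eq hdisj (Set.toFinite _) (Set.toFinite _)] at hle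
  have hdc : (X \ {v}).ncard + 1 = X.ncard :=
    Set.ncard_diff_singleton_add_one hv (Set.toFinite _)
  omega

/-- If `D` is a strongly connected balanced bipartite digraph with parts of size `a ≥ 2`
and `d(x) + d(y) ≥ 2a + 3` for every dominating pair `{x, y}`, then `UG(D)` is
2-connected. -/
theorem stmt0 [Fintype V] (A : V → V → Prop) (X Y : Set V) (a : ℕ) (ha : 2 ≤ a)
    (hX : X.ncard = a) (hY : Y.ncard = a) (hbip : IsBipartition A X Y)
    (hstrong : StrongConn A)
    (hdeg : ∀ x y : V, DomPair A x y → 2 * a + 3 ≤ deg A x + deg A y) :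
    TwoConnected (UG A) := by
  have hirr : ∀ w, ¬ A w w := by
    intro w hw
    rcases hbip.2.2 w w hw with ⟨h1, h2⟩ | ⟨h1, h2⟩
    · exact (hbip.1.ne_of_mem h1 h2) rfl
    · exact (hbip.1.ne_of_mem h2 h1) rfl
  have hcard : Fintype.card V = 2 * a := by
    have := Set.ncard_union_eq hbip.1 (Set.toFinite X) (Set.toFinite Y)
    rw [hbip.2.1, hX, hY, Set.ncard_univ, Nat.card_eq_fintype_card] at this
    omega
  refine ⟨by omega, ?_⟩
  intro v
  have hnt : Nontrivial V := Fintype.one_lt_card_iff_nontrivial.mp (by omega)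
  obtain ⟨w, hw⟩ := exists_ne v
  rw [SimpleGraph.connected_iff]
  refine ⟨?_, ⟨⟨w, hw⟩⟩⟩
  rintro ⟨p, hp⟩ ⟨q, hq⟩
  by_contra hnr
  obtain ⟨u1, hA1, h1⟩ := firstHit hirr (hstrong p v) hp
  obtain ⟨u2, hA2, h2⟩ := firstHit hirr (hstrong q v) hq
  have hne : u1 ≠ u2 := by
    rintro rfl
    obtain ⟨hp', hu', r1⟩ := h1
    obtain ⟨hq', hu'', r2⟩ := h2
    exact hnr (r1.trans r2.symm)
  have hd := hdeg u1 u2 ⟨hne, v, hA1, hA2⟩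
  have hv : v ∈ X ∨ v ∈ Y := by
    have := hbip.2.1
    have : v ∈ X ∪ Y := by rw [this]; trivial
    exact this
  rcases hv with hv | hv
  · have := key_count hX hbip hv hp hq hnr h1 h2 hA1 hA2
    omega
  · have := key_count hY hbip.symm hv hp hq hnr h1 h2 hA1 hA2
    omega
end

section
/- Let D be a strongly connected balanced bipartite digraph of order 2a ≥ 8 with partite sets X and Y. If max{d(x), d(y)} ≥ 2a − 2 for every dominating pair of vertices {x, y}, then D contains a perfect matching from X to Y. -/
open Finset

variable {V : Type*}

/-- A perfect matching from `X` to `Y`: pairwise vertex-disjoint arcs, one leaving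
each vertex of `X`, all ending in `Y`. -/
def PerfectMatchingFromTo (A : V → V → Prop) (X Y : Set V) : Prop :=
  ∃ f : V → V, Set.InjOn f X ∧ ∀ x ∈ X, A x (f x) ∧ f x ∈ Y

/-- If `D` is a strongly connected balanced bipartite digraph of order `2a ≥ 8` and
`max {d(x), d(y)} ≥ 2a − 2` for every dominating pair `{x, y}`, then `D` contains a
perfect matching from `X` to `Y`. -/
theorem stmt2 [Fintype V] (A : V → V → Prop) (X Y : Set V) (a : ℕ) (ha : 4 ≤ a)
    (hX : X.ncard = a) (hY : Y.ncard = a) (hbip : IsBipartition A X Y)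
    (hstrong : StrongConn A)
    (hdeg : ∀ x y : V, DomPair A x y → 2 * a - 2 ≤ max (deg A x) (deg A y)) :
    PerfectMatchingFromTo A X Y := by
  classical
  obtain ⟨hdisj, huniv, harc⟩ := hbip
  have hXY : ∀ v, v ∈ X → v ∉ Y := fun v hv => Set.disjoint_left.mp hdisj hv
  -- finset versions of X and Y
  set XF : Finset V := X.toFinset with hXFdef
  set YF : Finset V := Y.toFinset with hYFdef
  have hXmem : ∀ v, v ∈ XF ↔ v ∈ X := fun v => Set.mem_toFinset
  have hYmem : ∀ v, v ∈ YF ↔ v ∈ Y := fun v => Set.mem_toFinset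
  have hXFcard : XF.card = a := by rw [← Set.ncard_eq_toFinset_card']; exact hX
  have hYFcard : YF.card = a := by rw [← Set.ncard_eq_toFinset_card']; exact hY
  -- the vertex set is nontrivial
  have hnontriv : ∀ v : V, ∃ w : V, w ≠ v := by
    intro v
    have h1 : 1 < Fintype.card V := by
      have : X.ncard ≤ Fintype.card V := by
        have h := Set.ncard_le_ncard (Set.subset_univ X) (Set.toFinite _)
        rwa [Set.ncard_univ, Nat.card_eq_fintype_card] at h
      omega
    haveI : Nontrivial V := Fintype.one_lt_card_iff_nontrivial.mp h1
    exact exists_ne v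
  -- every vertex has an out-neighbour
  have hout : ∀ v : V, ∃ y, A v y := by
    intro v
    obtain ⟨w, hw⟩ := hnontriv v
    rcases (hstrong v w).cases_head with h | ⟨c, hc, _⟩
    · exact absurd h.symm hw
    · exact ⟨c, hc⟩
  -- every vertex has an in-neighbour
  have hin : ∀ v : V, ∃ u, A u v := by
    intro v
    obtain ⟨w, hw⟩ := hnontriv v
    rcases (hstrong w v).cases_tail with h | ⟨c, _, hc⟩
    · exact absurd h (Ne.symm hw)
    · exact ⟨c, hc⟩
  -- out-neighbourhood as a finset
  set Nout : V → Finset V := fun v => univ.filter (fun y => A v y) with hNout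
  have hNoutMem : ∀ v y, y ∈ Nout v ↔ A v y := by
    intro v y; simp [hNout]
  -- the key Hall-type claim
  have claim : ∀ S : Finset V, ↑S ⊆ X → S.card ≤ (S.biUnion Nout).card := by
    intro S hSX
    by_contra hlt
    push_neg at hlt
    set T : Finset V := S.biUnion Nout with hTdef
    -- S is nonempty
    have hSne : S.Nonempty := by
      rcases Finset.eq_empty_or_nonempty S with h | h
      · rw [h] at hlt; simp at hlt
      · exact h
    -- T ⊆ YF
    have hTsubY : T ⊆ YF := by
      intro y hy
      obtain ⟨x, hxS, hxy⟩ := Finset.mem_biUnion.mp hy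
      have hA : A x y := (hNoutMem x y).mp hxy
      rcases harc x y hA with ⟨_, h2⟩ | ⟨h1, _⟩
      · exact (hYmem y).mpr h2
      · exact absurd h1 (hXY x (hSX hxS))
    have hSsubXF : S ⊆ XF := fun v hv => (hXmem v).mpr (hSX hv)
    have hScard : S.card ≤ a := hXFcard ▸ Finset.card_le_card hSsubXF
    have hTcardY : T.card ≤ a := hYFcard ▸ Finset.card_le_card hTsubY
    -- choose out-neighbours
    have hfex : ∀ v, v ∈ S → ∃ y, A v y ∧ y ∈ T := by
      intro v hv
      obtain ⟨y, hy⟩ := hout v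
      exact ⟨y, hy, Finset.mem_biUnion.mpr ⟨v, hv, (hNoutMem v y).mpr hy⟩⟩
    choose! f hf1 hf2 using hfex
    obtain ⟨x, hxS, x', hx'S, hne, hfeq⟩ :=
      Finset.exists_ne_map_eq_of_card_lt_of_maps_to hlt hf2
    have hdom : DomPair A x x' := ⟨hne, f x, hf1 x hxS, hfeq ▸ hf1 x' hx'S⟩
    -- a vertex of S with large degree
    obtain ⟨w, hwS, hw⟩ : ∃ w ∈ S, 2 * a - 2 ≤ deg A w := by
      rcases le_max_iff.mp (hdeg x x' hdom) with h | h
      · exact ⟨x, hxS, h⟩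
      · exact ⟨x', hx'S, h⟩
    -- degree bounds for vertices of S
    have hout_sub : ∀ v ∈ S, {y | A v y} ⊆ (↑T : Set V) := by
      intro v hv y hy
      exact Finset.mem_biUnion.mpr ⟨v, hv, (hNoutMem v y).mpr hy⟩
    have hin_sub : ∀ v ∈ S, {u | A u v} ⊆ Y := by
      intro v hv u hu
      rcases harc u v hu with ⟨_, h2⟩ | ⟨h1, _⟩
      · exact absurd h2 (hXY v (hSX hv))
      · exact h1
    have houtcard : ∀ v ∈ S, ({y | A v y}).ncard ≤ T.card := by
      intro v hv
      calc ({y | A v y}).ncard ≤ (↑T : Set V).ncard :=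
            Set.ncard_le_ncard (hout_sub v hv) (Set.toFinite _)
        _ = T.card := Set.ncard_coe_finset T
    have hincard : ∀ v ∈ S, ({u | A u v}).ncard ≤ a := by
      intro v hv
      calc ({u | A u v}).ncard ≤ Y.ncard :=
            Set.ncard_le_ncard (hin_sub v hv) (Set.toFinite _)
        _ = a := hY
    have hdegw : deg A w ≤ T.card + a := by
      have := houtcard w hwS
      have := hincard w hwS
      unfold deg; omega
    have hTlarge : a - 2 ≤ T.card := by omega
    -- S cannot be all of X
    have hSne_a : S.card ≠ a := by
      intro hSa
      have hSXF : S = XF := Finset.eq_of_subset_of_card_le hSsubXF (by omega)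
      have hTlt : T.card < a := by omega
      have hR : (YF \ T).Nonempty := by
        rw [← Finset.card_pos, Finset.card_sdiff_of_subset hTsubY]; omega
      obtain ⟨r, hr⟩ := hR
      obtain ⟨hrY, hrT⟩ := Finset.mem_sdiff.mp hr
      obtain ⟨u, hu⟩ := hin r
      have huX : u ∈ X := by
        rcases harc u r hu with ⟨h1, _⟩ | ⟨h1, _⟩
        · exact h1
        · exact absurd ((hYmem r).mp hrY) (hXY r ‹r ∈ X›)
      have huS : u ∈ S := hSXF ▸ (hXmem u).mpr huX
      exact hrT (Finset.mem_biUnion.mpr ⟨u, huS, (hNoutMem u r).mpr hu⟩)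
    have hSa1 : S.card = a - 1 := by omega
    have hTa2 : T.card = a - 2 := by omega
    -- every vertex of Y dominates w
    have hwin : {u | A u w} = Y := by
      apply Set.eq_of_subset_of_ncard_le (hin_sub w hwS) _ (Set.toFinite _)
      have h1 := houtcard w hwS
      rw [hY]
      unfold deg at hw; omega
    -- two vertices outside T
    have hRcard : (YF \ T).card = 2 := by
      rw [Finset.card_sdiff_of_subset hTsubY]; omega
    obtain ⟨r, hr, r', hr', hrne⟩ := Finset.one_lt_card.mp (by omega : 1 < (YF \ T).card)
    have hrY : r ∈ Y := (hYmem r).mp (Finset.mem_sdiff.mp hr).1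
    have hr'Y : r' ∈ Y := (hYmem r').mp (Finset.mem_sdiff.mp hr').1
    have hdom2 : DomPair A r r' := by
      refine ⟨hrne, w, ?_, ?_⟩
      · have : r ∈ {u | A u w} := hwin ▸ hrY
        exact this
      · have : r' ∈ {u | A u w} := hwin ▸ hr'Y
        exact this
    obtain ⟨ρ, hρ, hρdeg⟩ : ∃ ρ ∈ YF \ T, 2 * a - 2 ≤ deg A ρ := by
      rcases le_max_iff.mp (hdeg r r' hdom2) with h | h
      · exact ⟨r, hr, h⟩
      · exact ⟨r', hr', h⟩
    obtain ⟨hρYF, hρT⟩ := Finset.mem_sdiff.mp hρ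
    have hρY : ρ ∈ Y := (hYmem ρ).mp hρYF
    -- out-degree of ρ at most a
    have hρout : ({y | A ρ y}).ncard ≤ a := by
      have hsub : {y | A ρ y} ⊆ X := by
        intro y hy
        rcases harc ρ y hy with ⟨h1, _⟩ | ⟨_, h2⟩
        · exact absurd hρY (hXY ρ h1)
        · exact h2
      calc ({y | A ρ y}).ncard ≤ X.ncard :=
            Set.ncard_le_ncard hsub (Set.toFinite _)
        _ = a := hX
    -- in-degree of ρ at most 1
    have hρin : ({u | A u ρ}).ncard ≤ 1 := by
      have hsub : {u | A u ρ} ⊆ (↑(XF \ S) : Set V) := by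
        intro u hu
        have huX : u ∈ X := by
          rcases harc u ρ hu with ⟨h1, _⟩ | ⟨h1, _⟩
          · exact h1
          · exact absurd hρY (hXY ρ ‹ρ ∈ X›)
        have huS : u ∉ S := by
          intro huS
          exact hρT (Finset.mem_biUnion.mpr ⟨u, huS, (hNoutMem u ρ).mpr hu⟩)
        exact Finset.mem_sdiff.mpr ⟨(hXmem u).mpr huX, huS⟩
      calc ({u | A u ρ}).ncard ≤ (↑(XF \ S) : Set V).ncard :=
            Set.ncard_le_ncard hsub (Set.toFinite _)
        _ = (XF \ S).card := Set.ncard_coe_finset _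
        _ ≤ 1 := by rw [Finset.card_sdiff_of_subset hSsubXF]; omega
    unfold deg at hρdeg
    omega
  -- apply Hall's theorem
  have hall : ∀ s : Finset X, s.card ≤ (s.biUnion (fun x : X => Nout (x : V))).card := by
    intro s
    have h1 : (s.image (Subtype.val : X → V)).card = s.card :=
      Finset.card_image_of_injective s Subtype.val_injective
    have h2 : (s.image (Subtype.val : X → V)).biUnion Nout
        = s.biUnion (fun x : X => Nout (x : V)) := Finset.image_biUnion
    have h3 : ↑(s.image (Subtype.val : X → V)) ⊆ X := by
      intro v hv
      obtain ⟨⟨v', hv'⟩, _, rfl⟩ := Finset.mem_image.mp hv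
      exact hv'
    have := claim _ h3
    rw [h1, h2] at this
    exact this
  obtain ⟨f, hfinj, hfmem⟩ :=
    (Finset.all_card_le_biUnion_card_iff_exists_injective
      (fun x : X => Nout (x : V))).mp hall
  refine ⟨fun v => if h : v ∈ X then f ⟨v, h⟩ else v, ?_, ?_⟩
  · intro u hu v hv huv
    simp only [dif_pos hu, dif_pos hv] at huv
    exact congrArg Subtype.val (hfinj huv)
  · intro x hx
    have hA : A x (f ⟨x, hx⟩) := (hNoutMem x _).mp (hfmem ⟨x, hx⟩)
    have hfY : f ⟨x, hx⟩ ∈ Y := by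
      rcases harc x _ hA with ⟨_, h2⟩ | ⟨h1, _⟩
      · exact h2
      · exact absurd h1 (hXY x hx)
    simp only [dif_pos hx]
    exact ⟨hA, hfY⟩
end

section
/- Let D be a strongly connected balanced bipartite digraph of order 2a ≥ 8 with partite sets X and Y. If max{d(x), d(y)} ≥ 2a − 2 for every dominating pair of vertices {x, y}, then D contains a cycle factor (a collection of vertex-disjoint directed cycles covering all vertices of D). -/
open Finset

variable {V : Type*}

/-- A cycle factor: a spanning collection of pairwise vertex-disjoint directed cycles,
encoded as a permutation `e` such that every `v → e v` is an arc and no vertex is fixed. -/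
def CycleFactor (A : V → V → Prop) : Prop :=
  ∃ e : Equiv.Perm V, ∀ v, A v (e v) ∧ e v ≠ v


open scoped Classical in
noncomputable def outN [Fintype V] (A : V → V → Prop) (x : V) : Finset V :=
  Finset.univ.filter (fun y => A x y)

open scoped Classical in
noncomputable def inN [Fintype V] (A : V → V → Prop) (x : V) : Finset V :=
  Finset.univ.filter (fun y => A y x)

lemma mem_outN [Fintype V] {A : V → V → Prop} {x y : V} : y ∈ outN A x ↔ A x y := by
  simp [outN]

lemma mem_inN [Fintype V] {A : V → V → Prop} {x y : V} : y ∈ inN A x ↔ A y x := by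
  simp [inN]

lemma deg_eq [Fintype V] (A : V → V → Prop) (x : V) :
    deg A x = (outN A x).card + (inN A x).card := by
  have h1 : {y | A x y} = ↑(outN A x) := by ext y; simp [mem_outN]
  have h2 : {y | A y x} = ↑(inN A x) := by ext y; simp [mem_inN]
  rw [deg, h1, h2, Set.ncard_coe_finset, Set.ncard_coe_finset]

lemma exists_out [Fintype V] {A : V → V → Prop} (hstrong : StrongConn A)
    (hnt : Nontrivial V) (v : V) : ∃ w, A v w := by
  obtain ⟨u, hu⟩ := exists_ne v
  rcases (hstrong v u).cases_head with h | ⟨w, hw, _⟩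
  · exact absurd h.symm hu
  · exact ⟨w, hw⟩

lemma exists_in [Fintype V] {A : V → V → Prop} (hstrong : StrongConn A)
    (hnt : Nontrivial V) (v : V) : ∃ w, A w v := by
  obtain ⟨u, hu⟩ := exists_ne v
  rcases (hstrong u v).cases_tail with h | ⟨w, _, hw⟩
  · exact absurd h.symm hu
  · exact ⟨w, hw⟩

/-- The key combinatorial lemma: Hall's condition for out-arcs from `X` to `Y`. -/
lemma hall_out [Fintype V] [DecidableEq V] (A : V → V → Prop) (X Y : Finset V) (a : ℕ) (ha : 4 ≤ a)
    (hX : X.card = a) (hY : Y.card = a) (hdisj : Disjoint X Y)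
    (huniv : X ∪ Y = Finset.univ)
    (hbip : ∀ u v, A u v → (u ∈ X ∧ v ∈ Y) ∨ (u ∈ Y ∧ v ∈ X))
    (hstrong : StrongConn A)
    (hdeg : ∀ x y : V, DomPair A x y → 2 * a - 2 ≤ max (deg A x) (deg A y)) :
    ∀ S ⊆ X, S.card ≤ (S.biUnion (outN A)).card := by
  classical
  -- nontriviality
  have hnt : Nontrivial V := by
    have hcard : Fintype.card V = 2 * a := by
      rw [← Finset.card_univ, ← huniv, Finset.card_union_of_disjoint hdisj, hX, hY]; ring
    have : 1 < Fintype.card V := by omega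
    exact Fintype.one_lt_card_iff_nontrivial.mp this
  by_contra hcon
  push_neg at hcon
  obtain ⟨S, hSX, hScard⟩ := hcon
  set R := S.biUnion (outN A) with hR
  -- basic part-membership facts
  have hXY : ∀ {u}, u ∈ X → u ∉ Y := fun hu hv =>
    Finset.disjoint_left.mp hdisj hu hv
  have hout_part : ∀ {u v}, u ∈ X → A u v → v ∈ Y := by
    intro u v hu huv
    rcases hbip u v huv with ⟨_, h⟩ | ⟨h, _⟩
    · exact h
    · exact absurd h (hXY hu)
  have hin_part : ∀ {u v}, v ∈ Y → A u v → u ∈ X := by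
    intro u v hv huv
    rcases hbip u v huv with ⟨h, _⟩ | ⟨_, h⟩
    · exact h
    · exact absurd h (hXY · hv)
  have hRY : R ⊆ Y := by
    intro y hy
    obtain ⟨s, hs, hys⟩ := Finset.mem_biUnion.mp hy
    exact hout_part (hSX hs) (mem_outN.mp hys)
  -- in-neighbours of Y \ R lie in X \ S
  have hinYR : ∀ {t u}, t ∈ Y \ R → A u t → u ∈ X \ S := by
    intro t u ht hut
    rw [Finset.mem_sdiff] at ht ⊢
    refine ⟨hin_part ht.1 hut, fun hu => ht.2 ?_⟩
    exact Finset.mem_biUnion.mpr ⟨u, hu, mem_outN.mpr hut⟩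
  -- S.card < a
  have hSlt : S.card < a := by
    have hRlt : R.card < Y.card := by
      have := Finset.card_le_card hSX
      omega
    have hYRpos : 0 < (Y \ R).card := by
      have h3 : Y.card - R.card ≤ (Y \ R).card := Finset.le_card_sdiff R Y
      omega
    obtain ⟨t, ht⟩ := Finset.card_pos.mp hYRpos
    obtain ⟨u, hu⟩ := exists_in hstrong hnt t
    have huXS := hinYR ht hu
    rw [Finset.mem_sdiff] at huXS
    have : S ⊂ X := ⟨hSX, fun h => huXS.2 (h huXS.1)⟩
    have := Finset.card_lt_card this
    omega
  -- the key claim: no x ∈ S can have degree ≥ 2a-2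
  have claim : ∀ x ∈ S, 2 * a - 2 ≤ deg A x → False := by
    intro x hxS hdx
    have houtR : outN A x ⊆ R := fun y hy =>
      Finset.mem_biUnion.mpr ⟨x, hxS, hy⟩
    have hinY : inN A x ⊆ Y := fun y hy => by
      rcases hbip y x (mem_inN.mp hy) with ⟨hyX, hxY⟩ | ⟨hyY, _⟩
      · exact absurd hxY (hXY (hSX hxS))
      · exact hyY
    have h1 : (outN A x).card ≤ R.card := Finset.card_le_card houtR
    have h2 : (inN A x).card ≤ a := hY ▸ Finset.card_le_card hinY
    rw [deg_eq] at hdx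
    have hRcard : R.card = a - 2 := by omega
    have hinfull : inN A x = Y :=
      Finset.eq_of_subset_of_card_le hinY (by omega)
    -- Y \ R has exactly 2 elements
    have hYR2 : (Y \ R).card = 2 := by
      rw [Finset.card_sdiff_of_subset hRY, hY, hRcard]; omega
    obtain ⟨t₁, ht₁, t₂, ht₂, hne⟩ := Finset.one_lt_card.mp (by omega : 1 < (Y \ R).card)
    have hat1 : A t₁ x := mem_inN.mp (hinfull ▸ (Finset.mem_sdiff.mp ht₁).1)
    have hat2 : A t₂ x := mem_inN.mp (hinfull ▸ (Finset.mem_sdiff.mp ht₂).1)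
    have hdp : DomPair A t₁ t₂ := ⟨hne, x, hat1, hat2⟩
    -- both t₁, t₂ have degree ≤ a + 1
    have hXS1 : (X \ S).card = 1 := by
      rw [Finset.card_sdiff_of_subset hSX, hX]
      omega
    have hdegsmall : ∀ t ∈ Y \ R, deg A t ≤ a + 1 := by
      intro t ht
      rw [deg_eq]
      have hin' : inN A t ⊆ X \ S := fun u hu => hinYR ht (mem_inN.mp hu)
      have hout' : outN A t ⊆ X := fun u hu => by
        rcases hbip t u (mem_outN.mp hu) with ⟨h, _⟩ | ⟨_, h⟩
        · exact absurd (Finset.mem_sdiff.mp ht).1 (hXY h)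
        · exact h
      have := Finset.card_le_card hin'
      have := Finset.card_le_card hout'
      omega
    have := hdeg t₁ t₂ hdp
    have h1 := hdegsmall t₁ ht₁
    have h2 := hdegsmall t₂ ht₂
    rcases max_cases (deg A t₁) (deg A t₂) with ⟨h, _⟩ | ⟨h, _⟩ <;> omega
  -- pigeonhole: two vertices of S with a common out-neighbour
  have hmaps : ∀ s ∈ S, ∃ w ∈ R, A s w := by
    intro s hs
    obtain ⟨w, hw⟩ := exists_out hstrong hnt s
    exact ⟨w, Finset.mem_biUnion.mpr ⟨s, hs, mem_outN.mpr hw⟩, hw⟩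
  choose φ hφR hφA using hmaps
  set f : {x // x ∈ S} → V := fun x => φ x.1 x.2 with hf
  have hcard : R.card < S.attach.card := by rwa [Finset.card_attach]
  have hmapsto : ∀ x ∈ S.attach, f x ∈ R := fun x _ => hφR x.1 x.2
  obtain ⟨⟨x, hx⟩, _, ⟨y, hy⟩, _, hxy, hfeq⟩ :=
    Finset.exists_ne_map_eq_of_card_lt_of_maps_to hcard hmapsto
  have hxyne : x ≠ y := fun h => hxy (by simp [h])
  have hfeq' : φ x hx = φ y hy := hfeq
  have hdp : DomPair A x y := ⟨hxyne, φ x hx, hφA x hx, hfeq' ▸ hφA y hy⟩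
  rcases le_max_iff.mp (hdeg x y hdp) with h | h
  · exact claim x hx h
  · exact claim y hy h

/-- If `D` is a strongly connected balanced bipartite digraph of order `2a ≥ 8` and
`max {d(x), d(y)} ≥ 2a − 2` for every dominating pair `{x, y}`, then `D` contains a
cycle factor. -/
theorem stmt3 [Fintype V] (A : V → V → Prop) (X Y : Set V) (a : ℕ) (ha : 4 ≤ a)
    (hX : X.ncard = a) (hY : Y.ncard = a) (hbip : IsBipartition A X Y)
    (hstrong : StrongConn A)
    (hdeg : ∀ x y : V, DomPair A x y → 2 * a - 2 ≤ max (deg A x) (deg A y)) :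
    CycleFactor A := by
  classical
  obtain ⟨hdisj, huniv, hbipc⟩ := hbip
  set Xf : Finset V := Finset.univ.filter (· ∈ X) with hXfdef
  set Yf : Finset V := Finset.univ.filter (· ∈ Y) with hYfdef
  have hmemX : ∀ v, v ∈ Xf ↔ v ∈ X := by intro v; simp [hXfdef]
  have hmemY : ∀ v, v ∈ Yf ↔ v ∈ Y := by intro v; simp [hYfdef]
  have hXeq : X = ↑Xf := by ext v; simp [hmemX]
  have hYeq : Y = ↑Yf := by ext v; simp [hmemY]
  have hXf : Xf.card = a := by rw [← hX, hXeq, Set.ncard_coe_finset]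
  have hYf : Yf.card = a := by rw [← hY, hYeq, Set.ncard_coe_finset]
  have hdisjf : Disjoint Xf Yf := by
    rw [Finset.disjoint_left]
    intro v hv hv'
    exact Set.disjoint_left.mp hdisj ((hmemX v).mp hv) ((hmemY v).mp hv')
  have hunivf : Xf ∪ Yf = Finset.univ := by
    ext v
    simp only [Finset.mem_union, Finset.mem_univ, iff_true, hmemX, hmemY]
    have : v ∈ X ∪ Y := huniv ▸ Set.mem_univ v
    exact this
  have hbipf : ∀ u v, A u v → (u ∈ Xf ∧ v ∈ Yf) ∨ (u ∈ Yf ∧ v ∈ Xf) := by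
    intro u v huv
    rcases hbipc u v huv with ⟨h1, h2⟩ | ⟨h1, h2⟩
    · exact Or.inl ⟨(hmemX u).mpr h1, (hmemY v).mpr h2⟩
    · exact Or.inr ⟨(hmemY u).mpr h1, (hmemX v).mpr h2⟩
  have hbipf' : ∀ u v, A u v → (u ∈ Yf ∧ v ∈ Xf) ∨ (u ∈ Xf ∧ v ∈ Yf) := by
    intro u v huv; exact (hbipf u v huv).symm
  have hallX := hall_out A Xf Yf a ha hXf hYf hdisjf hunivf hbipf hstrong hdeg
  have hallY := hall_out A Yf Xf a ha hYf hXf hdisjf.symm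
    (by rw [Finset.union_comm]; exact hunivf) hbipf' hstrong hdeg
  -- Apply Hall's marriage theorem on each side.
  have getF : ∀ (Z : Finset V),
      (∀ S ⊆ Z, S.card ≤ (S.biUnion (outN A)).card) →
      ∃ f : {x // x ∈ Z} → V, Function.Injective f ∧ ∀ x, f x ∈ outN A x.1 := by
    intro Z hZ
    apply (Finset.all_card_le_biUnion_card_iff_exists_injective
      (fun x : {x // x ∈ Z} => outN A x.1)).mp
    intro s
    have himg : (s.image Subtype.val).card = s.card :=
      Finset.card_image_of_injective _ Subtype.val_injective
    have hsub : s.image Subtype.val ⊆ Z := by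
      intro v hv
      obtain ⟨x, _, rfl⟩ := Finset.mem_image.mp hv
      exact x.2
    have := hZ _ hsub
    rw [himg] at this
    refine this.trans (le_of_eq ?_)
    congr 1
    ext y
    simp only [Finset.mem_biUnion, Finset.mem_image]
    constructor
    · rintro ⟨v, ⟨x, hx, rfl⟩, hy⟩; exact ⟨x, hx, hy⟩
    · rintro ⟨x, hx, hy⟩; exact ⟨x.1, ⟨x, hx, rfl⟩, hy⟩
  obtain ⟨f, hfinj, hfmem⟩ := getF Xf hallX
  obtain ⟨g, hginj, hgmem⟩ := getF Yf hallY
  have hmemXY : ∀ v, v ∉ Xf → v ∈ Yf := by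
    intro v hv
    have : v ∈ Xf ∪ Yf := hunivf ▸ Finset.mem_univ v
    rcases Finset.mem_union.mp this with h | h
    · exact absurd h hv
    · exact h
  have hfY : ∀ x : {x // x ∈ Xf}, f x ∈ Yf := by
    intro x
    rcases hbipf x.1 (f x) (mem_outN.mp (hfmem x)) with ⟨_, h⟩ | ⟨h, _⟩
    · exact h
    · exact absurd x.2 (Finset.disjoint_right.mp hdisjf h)
  have hgX : ∀ y : {y // y ∈ Yf}, g y ∈ Xf := by
    intro y
    rcases hbipf y.1 (g y) (mem_outN.mp (hgmem y)) with ⟨h, _⟩ | ⟨_, h⟩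
    · exact absurd y.2 (Finset.disjoint_left.mp hdisjf h)
    · exact h
  set e : V → V := fun v => if h : v ∈ Xf then f ⟨v, h⟩ else g ⟨v, hmemXY v h⟩ with he
  have heX : ∀ v (h : v ∈ Xf), e v = f ⟨v, h⟩ := by intro v h; simp [he, h]
  have heY : ∀ v (h : v ∉ Xf), e v = g ⟨v, hmemXY v h⟩ := by intro v h; simp [he, h]
  have hinj : Function.Injective e := by
    intro u v huv
    by_cases hu : u ∈ Xf <;> by_cases hv : v ∈ Xf
    · rw [heX u hu, heX v hv] at huv
      have := hfinj huv
      exact congrArg Subtype.val this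
    · rw [heX u hu, heY v hv] at huv
      have h1 : f ⟨u, hu⟩ ∈ Xf := by rw [huv]; exact hgX _
      exact absurd (hfY ⟨u, hu⟩) (Finset.disjoint_left.mp hdisjf h1)
    · rw [heY u hu, heX v hv] at huv
      have h1 : g ⟨u, hmemXY u hu⟩ ∈ Yf := by rw [huv]; exact hfY _
      exact absurd (hgX ⟨u, hmemXY u hu⟩) (Finset.disjoint_right.mp hdisjf h1)
    · rw [heY u hu, heY v hv] at huv
      have := hginj huv
      exact congrArg Subtype.val this
  have hbij : Function.Bijective e := Finite.injective_iff_bijective.mp hinj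
  refine ⟨Equiv.ofBijective e hbij, fun v => ?_⟩
  have hev : (Equiv.ofBijective e hbij) v = e v := rfl
  rw [hev]
  by_cases hv : v ∈ Xf
  · rw [heX v hv]
    refine ⟨mem_outN.mp (hfmem ⟨v, hv⟩), fun h => ?_⟩
    have h1 : f ⟨v, hv⟩ ∈ Xf := by rw [h]; exact hv
    exact Finset.disjoint_left.mp hdisjf h1 (hfY ⟨v, hv⟩)
  · rw [heY v hv]
    refine ⟨mem_outN.mp (hgmem ⟨v, hmemXY v hv⟩), fun h => ?_⟩
    have h1 : g ⟨v, hmemXY v hv⟩ ∈ Xf := hgX _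
    rw [h] at h1
    exact hv h1
end

section
/- Let D be a strongly connected balanced bipartite digraph of order 2a ≥ 8 with partite sets X and Y. If D is not a directed cycle and max{d(x), d(y)} ≥ 2a − 2 for every dominating pair of vertices {x, y}, then D contains a non-hamiltonian directed cycle of length at least 4. -/
open Finset

variable {V : Type*}

/-- The digraph `A` has a directed cycle of length `m`. -/
def HasCycleLen (A : V → V → Prop) (m : ℕ) : Prop :=
  ∃ f : ZMod m → V, Function.Injective f ∧ ∀ i, A (f i) (f (i + 1))

/-- The digraph `A` is (isomorphic to) the directed cycle on its vertex set. -/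
def IsDirectedCycleDigraph [Fintype V] (A : V → V → Prop) : Prop :=
  ∃ e : V ≃ ZMod (Fintype.card V), ∀ u v, A u v ↔ e v = e u + 1

set_option linter.unusedSectionVars false

section
variable [Fintype V] (A : V → V → Prop)

open Classical in
noncomputable def No (u : V) : Finset V := Finset.univ.filter (fun v => A u v)

open Classical in
noncomputable def Ni (u : V) : Finset V := Finset.univ.filter (fun v => A v u)

@[simp] lemma mem_No {u v : V} : v ∈ No A u ↔ A u v := by
  classical
  simp [No]

@[simp] lemma mem_Ni {u v : V} : v ∈ Ni A u ↔ A v u := by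
  classical
  simp [Ni]

lemma deg_eq_s4 (u : V) : deg A u = (No A u).card + (Ni A u).card := by
  classical
  unfold deg No Ni
  rw [Set.ncard_eq_toFinset_card', Set.ncard_eq_toFinset_card']
  congr 1 <;> · simp [Set.toFinset_setOf]

lemma mk4 {u y x y' : V} (a1 : A u y) (a2 : A y x) (a3 : A x y') (a4 : A y' u)
    (hux : u ≠ x) (hyy : y ≠ y') (h1 : u ≠ y) (h2 : u ≠ y') (h3 : x ≠ y) (h4 : x ≠ y') :
    HasCycleLen A 4 := by
  classical
  set f : ZMod 4 → V := fun i => if i = 0 then u else if i = 1 then y else if i = 2 then x else y' with hf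
  have e0 : f 0 = u := by simp +decide [hf]
  have e1 : f 1 = y := by simp +decide [hf]
  have e2 : f 2 = x := by simp +decide [hf]
  have e3 : f 3 = y' := by simp +decide [hf]
  have s1 : x ≠ u := hux.symm
  have s2 : y' ≠ y := hyy.symm
  have s3 : y ≠ u := h1.symm
  have s4 : y' ≠ u := h2.symm
  have s5 : y ≠ x := h3.symm
  have s6 : y' ≠ x := h4.symm
  have hi : ∀ k : ZMod 4, k = 0 ∨ k = 1 ∨ k = 2 ∨ k = 3 := by decide
  have c0 : (0 : ZMod 4) + 1 = 1 := by decide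
  have c1 : (1 : ZMod 4) + 1 = 2 := by decide
  have c2 : (2 : ZMod 4) + 1 = 3 := by decide
  have c3 : (3 : ZMod 4) + 1 = 0 := by decide
  refine ⟨f, ?_, ?_⟩
  · intro i j hij
    rcases hi i with rfl | rfl | rfl | rfl <;> rcases hi j with rfl | rfl | rfl | rfl <;>
      simp only [e0, e1, e2, e3] at hij <;>
      first
        | rfl
        | exact absurd hij (by assumption)
  · intro i
    rcases hi i with rfl | rfl | rfl | rfl
    · rw [c0, e0, e1]; exact a1
    · rw [c1, e1, e2]; exact a2
    · rw [c2, e2, e3]; exact a3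
    · rw [c3, e3, e0]; exact a4
end

section
variable [Fintype V] {A : V → V → Prop} {P Q : Set V}

lemma bip_swap (h : IsBipartition A P Q) : IsBipartition A Q P :=
  ⟨h.1.symm, by rw [Set.union_comm]; exact h.2.1, fun u v huv => (h.2.2 u v huv).symm⟩

lemma bip_mem (h : IsBipartition A P Q) (v : V) : v ∈ P ∨ v ∈ Q := by
  have := h.2.1
  have hv : v ∈ P ∪ Q := by rw [this]; trivial
  exact hv

lemma bip_notboth (h : IsBipartition A P Q) {v : V} (h1 : v ∈ P) (h2 : v ∈ Q) : False :=
  Set.disjoint_left.mp h.1 h1 h2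

lemma bip_arc_PQ (h : IsBipartition A P Q) {u v : V} (huv : A u v) (hu : u ∈ P) : v ∈ Q := by
  rcases h.2.2 u v huv with ⟨_, hv⟩ | ⟨hu', _⟩
  · exact hv
  · exact absurd hu' (fun h' => bip_notboth h hu h')

lemma bip_arc_QP (h : IsBipartition A P Q) {u v : V} (huv : A u v) (hv : v ∈ Q) : u ∈ P := by
  rcases h.2.2 u v huv with ⟨hu, _⟩ | ⟨_, hv'⟩
  · exact hu
  · exact absurd hv (fun h' => bip_notboth h hv' h')

lemma no_selfloop (h : IsBipartition A P Q) {v : V} (hv : A v v) : False := by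
  rcases h.2.2 v v hv with ⟨h1, h2⟩ | ⟨h1, h2⟩
  · exact bip_notboth h h1 h2
  · exact bip_notboth h h2 h1

end

section
variable [Fintype V] {A : V → V → Prop}

open Classical in
noncomputable def NiIn (A : V → V → Prop) (s : Finset V) (w : V) : Finset V :=
  s.filter (fun v => A v w)

@[simp] lemma mem_NiIn {s : Finset V} {w v : V} : v ∈ NiIn A s w ↔ v ∈ s ∧ A v w := by
  classical
  simp [NiIn]

lemma sum_out_eq (A : V → V → Prop) (s : Finset V) :
    ∑ v ∈ s, (No A v).card = ∑ w ∈ Finset.univ, (NiIn A s w).card := by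
  classical
  simp only [No, NiIn, Finset.card_filter]
  rw [Finset.sum_comm]

lemma sum_out_eq_sum_in (A : V → V → Prop) :
    ∑ v ∈ Finset.univ, (No A v).card = ∑ w ∈ Finset.univ, (Ni A w).card := by
  classical
  rw [sum_out_eq]
  apply Finset.sum_congr rfl
  intro w _
  have : NiIn A Finset.univ w = Ni A w := by ext v; simp
  rw [this]

lemma exists_out_s4 (hs : ∀ u v : V, Relation.ReflTransGen A u v)
    (hn : 2 ≤ Fintype.card V) (v : V) : ∃ w, A v w := by
  obtain ⟨w, hw⟩ := Fintype.exists_ne_of_one_lt_card (by omega) v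
  rcases (Relation.ReflTransGen.cases_head (hs v w)) with h | ⟨c, hc, _⟩
  · exact absurd h.symm hw
  · exact ⟨c, hc⟩

lemma exists_in_s4 (hs : ∀ u v : V, Relation.ReflTransGen A u v)
    (hn : 2 ≤ Fintype.card V) (v : V) : ∃ w, A w v := by
  obtain ⟨w, hw⟩ := Fintype.exists_ne_of_one_lt_card (by omega) v
  rcases (hs w v).cases_tail with h | ⟨c, _, hc⟩
  · exact absurd h.symm hw
  · exact ⟨c, hc⟩

lemma cycle_struct (hs : ∀ u v : V, Relation.ReflTransGen A u v)
    (hone : ∀ v : V, ∃! w, A v w)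
    (hin : ∀ v w w' : V, A w v → A w' v → w = w')
    (hn : 2 ≤ Fintype.card V) :
    ∃ e : V ≃ ZMod (Fintype.card V), ∀ u v, A u v ↔ e v = e u + 1 := by
  classical
  have hne : Nonempty V := Fintype.card_pos_iff.mp (by omega)
  obtain ⟨v0⟩ := hne
  choose σ hσ using fun v => (hone v).exists
  have huniq : ∀ v w, A v w → w = σ v := fun v w h => ((hone v).unique h (hσ v))
  have hinj : Function.Injective σ := by
    intro v v' h
    exact hin (σ v) v v' (hσ v) (h ▸ hσ v')
  have reach : ∀ v, ∃ k, σ^[k] v0 = v := by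
    intro v
    induction hs v0 v with
    | refl => exact ⟨0, rfl⟩
    | tail h1 h2 ih =>
      obtain ⟨k, hk⟩ := ih
      exact ⟨k + 1, by rw [Function.iterate_succ_apply', hk]; exact (huniq _ _ h2).symm⟩
  have cancel : ∀ i j : ℕ, i ≤ j → σ^[i] v0 = σ^[j] v0 → σ^[j - i] v0 = v0 := by
    intro i j hij h
    have h2 : σ^[i] (σ^[j - i] v0) = σ^[i] v0 := by
      rw [← Function.iterate_add_apply]
      rw [show i + (j - i) = j by omega]
      exact h.symm
    exact (hinj.iterate i) h2
  have hrep : ∃ k, 0 < k ∧ σ^[k] v0 = v0 := by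
    obtain ⟨i, j, hij, hEq⟩ :=
      Fintype.exists_ne_map_eq_of_card_lt (fun k : Fin (Fintype.card V + 1) => σ^[k.1] v0)
        (by simp)
    rcases lt_or_gt_of_ne (fun h => hij (Fin.ext h) : (i:ℕ) ≠ j) with h | h
    · exact ⟨j - i, by omega, cancel i j (le_of_lt h) hEq⟩
    · exact ⟨i - j, by omega, cancel j i (le_of_lt h) hEq.symm⟩
  set m := Nat.find hrep with hmdef
  obtain ⟨hmpos, hmper⟩ := Nat.find_spec hrep
  have hmin : ∀ k, 0 < k → k < m → σ^[k] v0 ≠ v0 := by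
    intro k hk hkm hEq
    exact Nat.find_min hrep hkm ⟨hk, hEq⟩
  have hmul : ∀ q, σ^[m * q] v0 = v0 := by
    intro q
    induction q with
    | zero => simp
    | succ q ih =>
      rw [Nat.mul_succ, Function.iterate_add_apply, hmper, ih]
  have hmod : ∀ k, σ^[k % m] v0 = σ^[k] v0 := by
    intro k
    conv_rhs => rw [← Nat.mod_add_div k m, Function.iterate_add_apply, hmul]
  have hinj_le : ∀ i j : ℕ, i ≤ j → j < m → σ^[i] v0 = σ^[j] v0 → i = j := by
    intro i j hij hjm h
    by_contra hne'
    exact hmin (j - i) (by omega) (by omega) (cancel i j hij h)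
  have hinj_below : ∀ i j : ℕ, i < m → j < m → σ^[i] v0 = σ^[j] v0 → i = j := by
    intro i j him hjm h
    rcases le_total i j with hle | hle
    · exact hinj_le i j hle hjm h
    · exact (hinj_le j i hle him h.symm).symm
  have hbijF : Function.Bijective (fun k : Fin m => σ^[k.1] v0) := by
    constructor
    · intro i j h
      exact Fin.ext (hinj_below i.1 j.1 i.2 j.2 h)
    · intro v
      obtain ⟨k, hk⟩ := reach v
      exact ⟨⟨k % m, Nat.mod_lt _ hmpos⟩, by simp only; rw [hmod]; exact hk⟩
  have hcard : m = Fintype.card V := by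
    rw [← Fintype.card_fin m]
    exact Fintype.card_of_bijective hbijF
  haveI : NeZero (Fintype.card V) := ⟨by omega⟩
  haveI : Fact (1 < Fintype.card V) := ⟨by omega⟩
  set n := Fintype.card V with hndef
  have hmodn : ∀ k, σ^[k % n] v0 = σ^[k] v0 := by rw [← hcard]; exact hmod
  set f : ZMod n → V := fun i => σ^[i.val] v0 with hfdef
  have hbijf : Function.Bijective f := by
    constructor
    · intro i j h
      have := hinj_below i.val j.val (by rw [hcard]; exact ZMod.val_lt i)
        (by rw [hcard]; exact ZMod.val_lt j) h
      exact ZMod.val_injective n this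
    · intro v
      obtain ⟨k, hk⟩ := reach v
      refine ⟨(k : ZMod n), ?_⟩
      rw [hfdef]
      simp only
      rw [ZMod.val_natCast, hmodn]
      exact hk
  set g := Equiv.ofBijective f hbijf with hgdef
  have hkey : ∀ i : ZMod n, f (i + 1) = σ (f i) := by
    intro i
    rw [hfdef]
    simp only
    rw [ZMod.val_add, ZMod.val_one, hmodn, Function.iterate_succ_apply']
  refine ⟨g.symm, ?_⟩
  intro u v
  have h1 : A u v ↔ v = σ u := by
    constructor
    · exact huniq u v
    · rintro rfl; exact hσ u
  rw [h1, Equiv.symm_apply_eq]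
  have h2 : g (g.symm u + 1) = σ u := by
    have : g (g.symm u + 1) = f (g.symm u + 1) := rfl
    rw [this, hkey]
    have : f (g.symm u) = g (g.symm u) := rfl
    rw [this, Equiv.apply_symm_apply]
  rw [h2]

end

section
variable [Fintype V] [DecidableEq V] {A : V → V → Prop} {P Q : Set V}

lemma deg_one_package (hs : ∀ u v : V, Relation.ReflTransGen A u v)
    (hn : 2 ≤ Fintype.card V) (hin1 : ∀ v : V, (Ni A v).card ≤ 1) :
    (∀ v : V, ∃! w, A v w) ∧ (∀ v w w' : V, A w v → A w' v → w = w') := by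
  classical
  have hinu : ∀ v w w' : V, A w v → A w' v → w = w' := by
    intro v w w' h h'
    exact Finset.card_le_one.mp (hin1 v) w (by simpa using h) w' (by simpa using h')
  have hin_eq : ∀ v : V, (Ni A v).card = 1 := by
    intro v
    obtain ⟨w, hw⟩ := exists_in_s4 hs hn v
    have h1 : 1 ≤ (Ni A v).card := Finset.card_pos.mpr ⟨w, by simpa using hw⟩
    have h2 := hin1 v
    omega
  have hout_ge : ∀ v : V, 1 ≤ (No A v).card := by
    intro v
    obtain ⟨w, hw⟩ := exists_out_s4 hs hn v
    exact Finset.card_pos.mpr ⟨w, by simpa using hw⟩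
  have hsum : ∑ v ∈ Finset.univ, (No A v).card = Fintype.card V := by
    rw [sum_out_eq_sum_in]
    simp [hin_eq]
  have hout_eq : ∀ v : V, (No A v).card = 1 := by
    intro v
    by_contra hne
    have h2 : 2 ≤ (No A v).card := by have := hout_ge v; omega
    have he : ∑ x ∈ Finset.univ.erase v, (No A x).card + (No A v).card
        = ∑ x ∈ Finset.univ, (No A x).card := Finset.sum_erase_add _ _ (Finset.mem_univ v)
    have hge : (Finset.univ.erase v).card ≤ ∑ x ∈ Finset.univ.erase v, (No A x).card := by
      calc (Finset.univ.erase v).card = ∑ _x ∈ Finset.univ.erase v, 1 := by simp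
      _ ≤ _ := Finset.sum_le_sum (fun x _ => hout_ge x)
    have hc : (Finset.univ.erase v).card = Fintype.card V - 1 := by
      rw [Finset.card_erase_of_mem (Finset.mem_univ v)]
      simp
    omega
  refine ⟨?_, hinu⟩
  intro v
  obtain ⟨w, hw⟩ := Finset.card_eq_one.mp (hout_eq v)
  refine ⟨w, ?_, ?_⟩
  · have : w ∈ No A v := by rw [hw]; exact Finset.mem_singleton_self w
    simpa using this
  · intro y hy
    have : y ∈ No A v := by simpa using hy
    rw [hw] at this
    simpa using this

lemma nePQ (hbip : IsBipartition A P Q) {v z : V} (hv : v ∈ P) (hz : z ∈ Q) : v ≠ z := by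
  intro h
  exact bip_notboth hbip hv (h ▸ hz)

lemma No_subset (hbip : IsBipartition A P Q) {u : V} (hu : u ∈ P) :
    No A u ⊆ (Set.toFinite Q).toFinset := by
  intro v hv
  rw [Set.Finite.mem_toFinset]
  exact bip_arc_PQ hbip (by simpa using hv) hu

lemma Ni_subset (hbip : IsBipartition A P Q) {u : V} (hu : u ∈ P) :
    Ni A u ⊆ (Set.toFinite Q).toFinset := by
  intro v hv
  rw [Set.Finite.mem_toFinset]
  rcases hbip.2.2 v u (by simpa using hv) with ⟨hv', hu'⟩ | ⟨hv', _⟩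
  · exact absurd hu' (fun h => bip_notboth hbip hu h)
  · exact hv'

lemma lemB0 {a : ℕ} (hbip : IsBipartition A P Q) (ha : 4 ≤ a)
    (hP : P.ncard = a) (hQ : Q.ncard = a)
    (hs : ∀ u v : V, Relation.ReflTransGen A u v)
    {u w : V} (huP : u ∈ P) (hwP : w ∈ P) (huw : u ≠ w)
    (hub : 2 * a - 2 ≤ deg A u) (hwb : 2 * a - 2 ≤ deg A w)
    (hempty : No A u ∩ Ni A w = ∅) : HasCycleLen A 4 := by
  classical
  set Qf := (Set.toFinite Q).toFinset with hQfdef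
  have hQfcard : Qf.card = a := by
    rw [hQfdef, ← Set.ncard_eq_toFinset_card]
    exact hQ
  have hmemQf : ∀ v, v ∈ Qf ↔ v ∈ Q := fun v => Set.Finite.mem_toFinset _
  have hdu : (No A u).card + (Ni A u).card = deg A u := (deg_eq_s4 A u).symm
  have hdw : (No A w).card + (Ni A w).card = deg A w := (deg_eq_s4 A w).symm
  have hcu1 : (No A u).card ≤ a := hQfcard ▸ Finset.card_le_card (No_subset hbip huP)
  have hcu2 : (Ni A u).card ≤ a := hQfcard ▸ Finset.card_le_card (Ni_subset hbip huP)
  have hcw1 : (No A w).card ≤ a := hQfcard ▸ Finset.card_le_card (No_subset hbip hwP)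
  have hcw2 : (Ni A w).card ≤ a := hQfcard ▸ Finset.card_le_card (Ni_subset hbip hwP)
  have hun : (No A u ∪ Ni A w).card ≤ a :=
    hQfcard ▸ Finset.card_le_card (Finset.union_subset (No_subset hbip huP) (Ni_subset hbip hwP))
  have hie : (No A u ∪ Ni A w).card + (No A u ∩ Ni A w).card
      = (No A u).card + (Ni A w).card := Finset.card_union_add_card_inter _ _
  have hiec : (No A u ∩ Ni A w).card = 0 := by rw [hempty]; simp
  -- derive Ni A u = Qf and No A w = Qf
  have hNiu : Ni A u = Qf := by
    apply Finset.eq_of_subset_of_card_le (Ni_subset hbip huP)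
    show Qf.card ≤ (Ni A u).card
    omega
  have hNow : No A w = Qf := by
    apply Finset.eq_of_subset_of_card_le (No_subset hbip hwP)
    show Qf.card ≤ (No A w).card
    omega
  -- key dichotomy
  by_cases F1 : ∀ y, A u y → ∀ x, A y x → x ≠ u → ∀ y'', A x y'' → y'' = y
  · -- contradiction with strong connectivity
    exfalso
    set T : Set V := {v | v = u ∨ A u v ∨ (∃ y, A u y ∧ A y v ∧ v ≠ u)} with hTdef
    have hclosed : ∀ v, Relation.ReflTransGen A u v → v ∈ T := by
      intro v h
      induction h with
      | refl => exact Or.inl rfl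
      | tail h1 h2 ih =>
        rename_i b c
        rcases ih with rfl | hb | ⟨y, hy1, hy2, hbu⟩
        · exact Or.inr (Or.inl h2)
        · by_cases hcu : c = u
          · exact Or.inl hcu
          · exact Or.inr (Or.inr ⟨b, hb, h2, hcu⟩)
        · have : c = y := F1 y hy1 b hy2 hbu c h2
          rw [this]
          exact Or.inr (Or.inl hy1)
    have hwT : w ∈ T := hclosed w (hs u w)
    rcases hwT with rfl | hw | ⟨y, hy1, hy2, hwu⟩
    · exact huw rfl
    · exact bip_notboth hbip hwP (bip_arc_PQ hbip hw huP)
    · -- w has all of Qf as out-neighbours, in particular two distinct ones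
      have h2a : 2 ≤ Qf.card := by omega
      obtain ⟨y1, hy1', y2, hy2', hne⟩ := Finset.one_lt_card.mp (by omega : 1 < Qf.card)
      have e1 : y1 = y := F1 y hy1 w hy2 hwu y1 (by
        have : y1 ∈ No A w := hNow ▸ hy1'
        simpa using this)
      have e2 : y2 = y := F1 y hy1 w hy2 hwu y2 (by
        have : y2 ∈ No A w := hNow ▸ hy2'
        simpa using this)
      exact hne (e1.trans e2.symm)
  · -- extract the 4-cycle
    push_neg at F1
    obtain ⟨y, hy1, x, hy2, hxu, y'', hy3, hyy⟩ := F1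
    have hyQ : y ∈ Q := bip_arc_PQ hbip hy1 huP
    have hxP : x ∈ P := bip_arc_PQ (bip_swap hbip) hy2 hyQ
    have hyQ2 : y'' ∈ Q := bip_arc_PQ hbip hy3 hxP
    have hy4 : A y'' u := by
      have : y'' ∈ Ni A u := hNiu ▸ (hmemQf y'').mpr hyQ2
      simpa using this
    exact mk4 A hy1 hy2 hy3 hy4 (Ne.symm hxu) (fun h => hyy h.symm) (nePQ hbip huP hyQ)
      (nePQ hbip huP hyQ2) (nePQ hbip hxP hyQ) (nePQ hbip hxP hyQ2)

lemma lemB {a : ℕ} (hbip : IsBipartition A P Q) (ha : 4 ≤ a)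
    (hP : P.ncard = a) (hQ : Q.ncard = a)
    (hs : ∀ u v : V, Relation.ReflTransGen A u v)
    {u w : V} (huP : u ∈ P) (hwP : w ∈ P) (huw : u ≠ w)
    (hub : 2 * a - 2 ≤ deg A u) (hwb : 2 * a - 2 ≤ deg A w) : HasCycleLen A 4 := by
  classical
  set Qf := (Set.toFinite Q).toFinset with hQfdef
  have hQfcard : Qf.card = a := by
    rw [hQfdef, ← Set.ncard_eq_toFinset_card]
    exact hQ
  by_cases h1 : No A u ∩ Ni A w = ∅
  · exact lemB0 hbip ha hP hQ hs huP hwP huw hub hwb h1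
  by_cases h2 : No A w ∩ Ni A u = ∅
  · exact lemB0 hbip ha hP hQ hs hwP huP (Ne.symm huw) hwb hub h2
  have hdu : (No A u).card + (Ni A u).card = deg A u := (deg_eq_s4 A u).symm
  have hdw : (No A w).card + (Ni A w).card = deg A w := (deg_eq_s4 A w).symm
  have hun1 : (No A u ∪ Ni A w).card ≤ a :=
    hQfcard ▸ Finset.card_le_card (Finset.union_subset (No_subset hbip huP) (Ni_subset hbip hwP))
  have hun2 : (No A w ∪ Ni A u).card ≤ a :=
    hQfcard ▸ Finset.card_le_card (Finset.union_subset (No_subset hbip hwP) (Ni_subset hbip huP))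
  have hie1 : (No A u ∪ Ni A w).card + (No A u ∩ Ni A w).card
      = (No A u).card + (Ni A w).card := Finset.card_union_add_card_inter _ _
  have hie2 : (No A w ∪ Ni A u).card + (No A w ∩ Ni A u).card
      = (No A w).card + (Ni A u).card := Finset.card_union_add_card_inter _ _
  have hc1 : 1 ≤ (No A u ∩ Ni A w).card := Finset.card_pos.mpr (Finset.nonempty_iff_ne_empty.mpr h1)
  have hc2 : 1 ≤ (No A w ∩ Ni A u).card := Finset.card_pos.mpr (Finset.nonempty_iff_ne_empty.mpr h2)
  have hsum : 4 ≤ (No A u ∩ Ni A w).card + (No A w ∩ Ni A u).card := by omega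
  rcases (by omega : 2 ≤ (No A u ∩ Ni A w).card ∨ 2 ≤ (No A w ∩ Ni A u).card) with hbig | hbig
  · obtain ⟨y', hy'⟩ := Finset.nonempty_iff_ne_empty.mpr h2
    have hcd : 1 ≤ ((No A u ∩ Ni A w) \ {y'}).card := by
      have := Finset.le_card_sdiff ({y'} : Finset V) (No A u ∩ Ni A w)
      have hs1 : ({y'} : Finset V).card = 1 := Finset.card_singleton y'
      omega
    obtain ⟨y, hy⟩ := Finset.card_pos.mp hcd
    have hyy' : y ≠ y' := by
      have := (Finset.mem_sdiff.mp hy).2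
      simpa using this
    have hy'' := (Finset.mem_sdiff.mp hy).1
    have a1 : A u y := by have := Finset.mem_inter.mp hy'' |>.1; simpa using this
    have a2 : A y w := by have := Finset.mem_inter.mp hy'' |>.2; simpa using this
    have a3 : A w y' := by have := Finset.mem_inter.mp hy' |>.1; simpa using this
    have a4 : A y' u := by have := Finset.mem_inter.mp hy' |>.2; simpa using this
    have hyQ : y ∈ Q := bip_arc_PQ hbip a1 huP
    have hy'Q : y' ∈ Q := bip_arc_PQ hbip a3 hwP
    exact mk4 A a1 a2 a3 a4 huw hyy' (nePQ hbip huP hyQ) (nePQ hbip huP hy'Q)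
      (nePQ hbip hwP hyQ) (nePQ hbip hwP hy'Q)
  · obtain ⟨y', hy'⟩ := Finset.nonempty_iff_ne_empty.mpr h1
    have hcd : 1 ≤ ((No A w ∩ Ni A u) \ {y'}).card := by
      have := Finset.le_card_sdiff ({y'} : Finset V) (No A w ∩ Ni A u)
      have hs1 : ({y'} : Finset V).card = 1 := Finset.card_singleton y'
      omega
    obtain ⟨y, hy⟩ := Finset.card_pos.mp hcd
    have hyy' : y ≠ y' := by
      have := (Finset.mem_sdiff.mp hy).2
      simpa using this
    have hy'' := (Finset.mem_sdiff.mp hy).1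
    have a1 : A w y := by have := Finset.mem_inter.mp hy'' |>.1; simpa using this
    have a2 : A y u := by have := Finset.mem_inter.mp hy'' |>.2; simpa using this
    have a3 : A u y' := by have := Finset.mem_inter.mp hy' |>.1; simpa using this
    have a4 : A y' w := by have := Finset.mem_inter.mp hy' |>.2; simpa using this
    have hyQ : y ∈ Q := bip_arc_PQ hbip a1 hwP
    have hy'Q : y' ∈ Q := bip_arc_PQ hbip a3 huP
    exact mk4 A a1 a2 a3 a4 (Ne.symm huw) hyy' (nePQ hbip hwP hyQ) (nePQ hbip hwP hy'Q)
      (nePQ hbip huP hyQ) (nePQ hbip huP hy'Q)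

end

section
variable [Fintype V] [DecidableEq V] {A : V → V → Prop} {P Q : Set V}

lemma sum_bip (hbip : IsBipartition A P Q) :
    ∑ v ∈ (Set.toFinite P).toFinset, (No A v).card
      = ∑ w ∈ (Set.toFinite Q).toFinset, (Ni A w).card := by
  classical
  rw [sum_out_eq]
  have h1 : ∑ w ∈ Finset.univ, (NiIn A (Set.toFinite P).toFinset w).card
      = ∑ w ∈ (Set.toFinite Q).toFinset, (NiIn A (Set.toFinite P).toFinset w).card := by
    refine (Finset.sum_subset (Finset.subset_univ _) ?_).symm
    intro w _ hw
    have hwP : w ∈ P := by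
      rcases bip_mem hbip w with h | h
      · exact h
      · exact absurd ((Set.Finite.mem_toFinset _).mpr h) hw
    rw [Finset.card_eq_zero]
    ext v
    simp only [mem_NiIn, Finset.notMem_empty, iff_false, not_and]
    intro hv hA
    exact bip_notboth hbip hwP (bip_arc_PQ hbip hA ((Set.Finite.mem_toFinset _).mp hv))
  rw [h1]
  apply Finset.sum_congr rfl
  intro w hw
  have hwQ : w ∈ Q := (Set.Finite.mem_toFinset _).mp hw
  congr 1
  ext v
  simp only [mem_NiIn, mem_Ni, Set.Finite.mem_toFinset]
  constructor
  · rintro ⟨_, h⟩; exact h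
  · intro h; exact ⟨bip_arc_QP hbip h hwQ, h⟩

lemma trap (hs : ∀ u v : V, Relation.ReflTransGen A u v) {p q r : V}
    (hp : No A p = {q}) (hq : No A q = {p}) (hr : r ≠ p) (hr' : r ≠ q) : False := by
  have key : ∀ v, Relation.ReflTransGen A p v → v = p ∨ v = q := by
    intro v h
    induction h with
    | refl => exact Or.inl rfl
    | tail h1 h2 ih =>
      rename_i b c
      rcases ih with rfl | rfl
      · have hc : c ∈ No A b := by simpa using h2
        rw [hp] at hc
        exact Or.inr (by simpa using hc)
      · have hc : c ∈ No A b := by simpa using h2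
        rw [hq] at hc
        exact Or.inl (by simpa using hc)
  rcases key r (hs p r) with h | h
  · exact hr h
  · exact hr' h

end

section
variable [Fintype V] [DecidableEq V] {A : V → V → Prop} {P Q : Set V}

set_option maxHeartbeats 2000000 in
lemma main_aux {a : ℕ} (hbip : IsBipartition A P Q) (ha : 4 ≤ a)
    (hP : P.ncard = a) (hQ : Q.ncard = a)
    (hs : ∀ u v : V, Relation.ReflTransGen A u v)
    (hcard2 : 2 ≤ Fintype.card V)
    (hdp : ∀ x y z : V, A x z → A y z → x ≠ y →
      2 * a - 2 ≤ deg A x ∨ 2 * a - 2 ≤ deg A y)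
    {u0 : V} (hu0P : u0 ∈ P) (hu0b : 2 * a - 2 ≤ deg A u0) : HasCycleLen A 4 := by
  classical
  set Pf := (Set.toFinite P).toFinset with hPfdef
  set Qf := (Set.toFinite Q).toFinset with hQfdef
  have hQfcard : Qf.card = a := by rw [hQfdef, ← Set.ncard_eq_toFinset_card]; exact hQ
  have hPfcard : Pf.card = a := by rw [hPfdef, ← Set.ncard_eq_toFinset_card]; exact hP
  have memQf : ∀ v, v ∈ Qf ↔ v ∈ Q := fun v => Set.Finite.mem_toFinset _
  have memPf : ∀ v, v ∈ Pf ↔ v ∈ P := fun v => Set.Finite.mem_toFinset _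
  have degE : ∀ v : V, (No A v).card + (Ni A v).card = deg A v := fun v => (deg_eq_s4 A v).symm
  have houtP : ∀ v ∈ P, (No A v).card ≤ a :=
    fun v hv => hQfcard ▸ Finset.card_le_card (No_subset hbip hv)
  have hinP : ∀ v ∈ P, (Ni A v).card ≤ a :=
    fun v hv => hQfcard ▸ Finset.card_le_card (Ni_subset hbip hv)
  have houtQ : ∀ v ∈ Q, (No A v).card ≤ a :=
    fun v hv => hPfcard ▸ Finset.card_le_card (No_subset (bip_swap hbip) hv)
  have hinQ : ∀ v ∈ Q, (Ni A v).card ≤ a :=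
    fun v hv => hPfcard ▸ Finset.card_le_card (Ni_subset (bip_swap hbip) hv)
  -- a big in-neighbour y1 of u0
  have h2le : 2 ≤ (Ni A u0).card := by
    have h1 := houtP u0 hu0P
    have h2 := degE u0
    omega
  obtain ⟨c, hc, d, hd, hcd⟩ := Finset.one_lt_card.mp (by omega : 1 < (Ni A u0).card)
  obtain ⟨y1, hy1Q, hy1b, hy1arc⟩ : ∃ y1, y1 ∈ Q ∧ 2 * a - 2 ≤ deg A y1 ∧ A y1 u0 := by
    have hcQ : c ∈ Q := (memQf c).mp (Ni_subset hbip hu0P hc)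
    have hdQ : d ∈ Q := (memQf d).mp (Ni_subset hbip hu0P hd)
    rcases hdp c d u0 (by simpa using hc) (by simpa using hd) hcd with hb | hb
    · exact ⟨c, hcQ, hb, by simpa using hc⟩
    · exact ⟨d, hdQ, hb, by simpa using hd⟩
  -- two bigs on one side?
  by_cases hPuniq : ∃ u', u' ∈ P ∧ u' ≠ u0 ∧ 2 * a - 2 ≤ deg A u'
  · obtain ⟨u', hu'P, hu'ne, hu'b⟩ := hPuniq
    exact lemB hbip ha hP hQ hs hu0P hu'P (Ne.symm hu'ne) hu0b hu'b
  by_cases hQuniq : ∃ y', y' ∈ Q ∧ y' ≠ y1 ∧ 2 * a - 2 ≤ deg A y'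
  · obtain ⟨y', hy'Q, hy'ne, hy'b⟩ := hQuniq
    exact lemB (bip_swap hbip) ha hQ hP hs hy1Q hy'Q (Ne.symm hy'ne) hy1b hy'b
  push_neg at hPuniq hQuniq
  have hPbig : ∀ v ∈ P, 2 * a - 2 ≤ deg A v → v = u0 := by
    intro v hv hb
    by_contra hne
    have := hPuniq v hv hne
    omega
  have hQbig : ∀ v ∈ Q, 2 * a - 2 ≤ deg A v → v = y1 := by
    intro v hv hb
    by_contra hne
    have := hQuniq v hv hne
    omega
  -- in-degree at most 2 everywhere
  have hin2P : ∀ z ∈ P, (Ni A z).card ≤ 2 := by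
    intro z hz
    have hone : (Ni A z \ {y1}).card ≤ 1 := by
      apply Finset.card_le_one.mpr
      intro c' hc' d' hd'
      by_contra hne
      have hc'm := Finset.mem_sdiff.mp hc'
      have hd'm := Finset.mem_sdiff.mp hd'
      have hc'Q : c' ∈ Q := (memQf c').mp (Ni_subset hbip hz hc'm.1)
      have hd'Q : d' ∈ Q := (memQf d').mp (Ni_subset hbip hz hd'm.1)
      rcases hdp c' d' z (by simpa using hc'm.1) (by simpa using hd'm.1) hne with hb | hb
      · exact hc'm.2 (by simp [hQbig c' hc'Q hb])
      · exact hd'm.2 (by simp [hQbig d' hd'Q hb])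
    have hsub : Ni A z ⊆ (Ni A z \ {y1}) ∪ {y1} := by
      intro t ht
      by_cases hty : t = y1
      · simp [hty]
      · simp [Finset.mem_sdiff, ht, hty]
    calc (Ni A z).card ≤ ((Ni A z \ {y1}) ∪ {y1}).card := Finset.card_le_card hsub
      _ ≤ (Ni A z \ {y1}).card + 1 := by
          have := Finset.card_union_le (Ni A z \ {y1}) ({y1} : Finset V)
          simpa using this
      _ ≤ 2 := by omega
  have hin2Q : ∀ z ∈ Q, (Ni A z).card ≤ 2 := by
    intro z hz
    have hone : (Ni A z \ {u0}).card ≤ 1 := by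
      apply Finset.card_le_one.mpr
      intro c' hc' d' hd'
      by_contra hne
      have hc'm := Finset.mem_sdiff.mp hc'
      have hd'm := Finset.mem_sdiff.mp hd'
      have hc'P : c' ∈ P := (memPf c').mp (Ni_subset (bip_swap hbip) hz hc'm.1)
      have hd'P : d' ∈ P := (memPf d').mp (Ni_subset (bip_swap hbip) hz hd'm.1)
      rcases hdp c' d' z (by simpa using hc'm.1) (by simpa using hd'm.1) hne with hb | hb
      · exact hc'm.2 (by simp [hPbig c' hc'P hb])
      · exact hd'm.2 (by simp [hPbig d' hd'P hb])
    have hsub : Ni A z ⊆ (Ni A z \ {u0}) ∪ {u0} := by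
      intro t ht
      by_cases hty : t = u0
      · simp [hty]
      · simp [Finset.mem_sdiff, ht, hty]
    calc (Ni A z).card ≤ ((Ni A z \ {u0}) ∪ {u0}).card := Finset.card_le_card hsub
      _ ≤ (Ni A z \ {u0}).card + 1 := by
          have := Finset.card_union_le (Ni A z \ {u0}) ({u0} : Finset V)
          simpa using this
      _ ≤ 2 := by omega
  -- a = 4 and hub structure
  have ha4 : a = 4 := by
    have h1 := hin2P u0 hu0P
    have h2 := degE u0
    have h3 := houtP u0 hu0P
    omega
  have hNou0 : No A u0 = Qf := by
    apply Finset.eq_of_subset_of_card_le (No_subset hbip hu0P)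
    show Qf.card ≤ (No A u0).card
    have h1 := hin2P u0 hu0P
    have h2 := degE u0
    have h3 := houtP u0 hu0P
    omega
  have hNou0c : (No A u0).card = 4 := by rw [hNou0]; omega
  have hNiu0c : (Ni A u0).card = 2 := by
    have h1 := hin2P u0 hu0P
    have h2 := degE u0
    omega
  have hNoy1 : No A y1 = Pf := by
    apply Finset.eq_of_subset_of_card_le (No_subset (bip_swap hbip) hy1Q)
    show Pf.card ≤ (No A y1).card
    have h1 := hin2Q y1 hy1Q
    have h2 := degE y1
    have h3 := houtQ y1 hy1Q
    omega
  have hNoy1c : (No A y1).card = 4 := by rw [hNoy1]; omega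
  have hNiy1c : (Ni A y1).card = 2 := by
    have h1 := hin2Q y1 hy1Q
    have h2 := degE y1
    omega
  have hAu0 : ∀ y ∈ Q, A u0 y := by
    intro y hy
    have : y ∈ No A u0 := by rw [hNou0]; exact (memQf y).mpr hy
    simpa using this
  have hAy1 : ∀ x ∈ P, A y1 x := by
    intro x hx
    have : x ∈ No A y1 := by rw [hNoy1]; exact (memPf x).mpr hx
    simpa using this
  -- Ni u0 = {y1, y2}
  obtain ⟨y2, hy2ne, hNiu0⟩ : ∃ y2, y2 ≠ y1 ∧ Ni A u0 = {y1, y2} := by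
    obtain ⟨p, q, hpq, hset⟩ := Finset.card_eq_two.mp hNiu0c
    have hy1mem : y1 ∈ Ni A u0 := by simpa using hy1arc
    rw [hset] at hy1mem
    rcases Finset.mem_insert.mp hy1mem with rfl | hq
    · exact ⟨q, fun h => hpq h.symm, by rw [hset]⟩
    · have : y1 = q := by simpa using hq
      subst this
      exact ⟨p, fun h => hpq h, by rw [hset, Finset.pair_comm]⟩
  have hy2arc : A y2 u0 := by
    have : y2 ∈ Ni A u0 := by rw [hNiu0]; simp
    simpa using this
  have hy2Q : y2 ∈ Q := (memQf y2).mp (Ni_subset hbip hu0P (by rw [hNiu0]; simp))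
  -- Ni y1 = {u0, x2}
  obtain ⟨x2, hx2ne, hNiy1⟩ : ∃ x2, x2 ≠ u0 ∧ Ni A y1 = {u0, x2} := by
    obtain ⟨p, q, hpq, hset⟩ := Finset.card_eq_two.mp hNiy1c
    have hu0mem : u0 ∈ Ni A y1 := by simpa using hAu0 y1 hy1Q
    rw [hset] at hu0mem
    rcases Finset.mem_insert.mp hu0mem with rfl | hq
    · exact ⟨q, fun h => hpq h.symm, by rw [hset]⟩
    · have : u0 = q := by simpa using hq
      subst this
      exact ⟨p, fun h => hpq h, by rw [hset, Finset.pair_comm]⟩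
  have hx2arc : A x2 y1 := by
    have : x2 ∈ Ni A y1 := by rw [hNiy1]; simp
    simpa using this
  have hx2P : x2 ∈ P := (memPf x2).mp (Ni_subset (bip_swap hbip) hy1Q (by rw [hNiy1]; simp))
  -- case D1
  by_cases hD1 : ∃ yy, A yy x2 ∧ yy ≠ y1
  · obtain ⟨yy, hyy1, hyy2⟩ := hD1
    have hyyQ : yy ∈ Q := bip_arc_QP (bip_swap hbip) hyy1 hx2P
    exact mk4 A hy1arc (hAu0 yy hyyQ) hyy1 hx2arc (Ne.symm hyy2) (Ne.symm hx2ne)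
      (nePQ hbip hu0P hy1Q).symm (nePQ hbip hx2P hy1Q).symm
      (nePQ hbip hu0P hyyQ).symm (nePQ hbip hx2P hyyQ).symm
  -- case D2
  by_cases hD2 : ∃ xx, A xx y2 ∧ xx ≠ u0
  · obtain ⟨xx, hxx1, hxx2⟩ := hD2
    have hxxP : xx ∈ P := bip_arc_QP hbip hxx1 hy2Q
    exact mk4 A (hAu0 y1 hy1Q) (hAy1 xx hxxP) hxx1 hy2arc (Ne.symm hxx2) hy2ne.symm
      (nePQ hbip hu0P hy1Q) (nePQ hbip hu0P hy2Q) (nePQ hbip hxxP hy1Q)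
      (nePQ hbip hxxP hy2Q)
  push_neg at hD1 hD2
  have hNix2 : Ni A x2 = {y1} := by
    apply Finset.eq_singleton_iff_unique_mem.mpr
    constructor
    · simpa using hAy1 x2 hx2P
    · intro t ht
      exact hD1 t (by simpa using ht)
  have hNiy2 : Ni A y2 = {u0} := by
    apply Finset.eq_singleton_iff_unique_mem.mpr
    constructor
    · simpa using hAu0 y2 hy2Q
    · intro t ht
      exact hD2 t (by simpa using ht)
  -- enumerate Qf and Pf
  have hy12sub : ({y1, y2} : Finset V) ⊆ Qf := by
    intro t ht
    rcases Finset.mem_insert.mp ht with rfl | ht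
    · exact (memQf t).mpr hy1Q
    · have : t = y2 := by simpa using ht
      subst this
      exact (memQf t).mpr hy2Q
  have hy12card : ({y1, y2} : Finset V).card = 2 := by
    rw [Finset.card_insert_of_notMem (by simp [hy2ne.symm]), Finset.card_singleton]
  have hQsd : (Qf \ {y1, y2}).card = 2 := by
    rw [Finset.card_sdiff_of_subset hy12sub]
    omega
  obtain ⟨y3, y4, hy34, hy34set⟩ := Finset.card_eq_two.mp hQsd
  have hy3m := by
    have : y3 ∈ Qf \ {y1, y2} := by rw [hy34set]; simp
    exact this
  have hy4m := by
    have : y4 ∈ Qf \ {y1, y2} := by rw [hy34set]; simp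
    exact this
  have hy3Q : y3 ∈ Q := (memQf y3).mp (Finset.mem_sdiff.mp hy3m).1
  have hy4Q : y4 ∈ Q := (memQf y4).mp (Finset.mem_sdiff.mp hy4m).1
  have hy31 : y3 ≠ y1 := by have := (Finset.mem_sdiff.mp hy3m).2; simp at this; exact this.1
  have hy32 : y3 ≠ y2 := by have := (Finset.mem_sdiff.mp hy3m).2; simp at this; exact this.2
  have hy41 : y4 ≠ y1 := by have := (Finset.mem_sdiff.mp hy4m).2; simp at this; exact this.1
  have hy42 : y4 ≠ y2 := by have := (Finset.mem_sdiff.mp hy4m).2; simp at this; exact this.2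
  have hQenum : Qf = {y1, y2, y3, y4} := by
    have h1 : ({y1, y2} : Finset V) ∪ (Qf \ {y1, y2}) = Qf := Finset.union_sdiff_of_subset hy12sub
    rw [hy34set] at h1
    rw [← h1]
    ext t
    simp only [Finset.mem_union, Finset.mem_insert, Finset.mem_singleton]
    tauto
  have hx2subP : ({u0, x2} : Finset V) ⊆ Pf := by
    intro t ht
    rcases Finset.mem_insert.mp ht with rfl | ht
    · exact (memPf t).mpr hu0P
    · have : t = x2 := by simpa using ht
      subst this
      exact (memPf t).mpr hx2P
  have hx12card : ({u0, x2} : Finset V).card = 2 := by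
    rw [Finset.card_insert_of_notMem (by simp [hx2ne.symm]), Finset.card_singleton]
  have hPsd : (Pf \ {u0, x2}).card = 2 := by
    rw [Finset.card_sdiff_of_subset hx2subP]
    omega
  obtain ⟨x3, x4, hx34, hx34set⟩ := Finset.card_eq_two.mp hPsd
  have hx3m := by
    have : x3 ∈ Pf \ {u0, x2} := by rw [hx34set]; simp
    exact this
  have hx4m := by
    have : x4 ∈ Pf \ {u0, x2} := by rw [hx34set]; simp
    exact this
  have hx3P : x3 ∈ P := (memPf x3).mp (Finset.mem_sdiff.mp hx3m).1
  have hx4P : x4 ∈ P := (memPf x4).mp (Finset.mem_sdiff.mp hx4m).1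
  have hx30 : x3 ≠ u0 := by have := (Finset.mem_sdiff.mp hx3m).2; simp at this; exact this.1
  have hx32 : x3 ≠ x2 := by have := (Finset.mem_sdiff.mp hx3m).2; simp at this; exact this.2
  have hx40 : x4 ≠ u0 := by have := (Finset.mem_sdiff.mp hx4m).2; simp at this; exact this.1
  have hx42 : x4 ≠ x2 := by have := (Finset.mem_sdiff.mp hx4m).2; simp at this; exact this.2
  have hPenum : Pf = {u0, x2, x3, x4} := by
    have h1 : ({u0, x2} : Finset V) ∪ (Pf \ {u0, x2}) = Pf := Finset.union_sdiff_of_subset hx2subP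
    rw [hx34set] at h1
    rw [← h1]
    ext t
    simp only [Finset.mem_union, Finset.mem_insert, Finset.mem_singleton]
    tauto
  -- prepare degree sums
  have houtpos : ∀ v : V, 1 ≤ (No A v).card := by
    intro v
    obtain ⟨w, hw⟩ := exists_out_s4 hs hcard2 v
    exact Finset.card_pos.mpr ⟨w, by simpa using hw⟩
  have hNix2c : (Ni A x2).card = 1 := by rw [hNix2]; simp
  have hNiy2c : (Ni A y2).card = 1 := by rw [hNiy2]; simp
  have hsum1 : ∑ v ∈ Pf, (No A v).card = ∑ w ∈ Qf, (Ni A w).card := sum_bip hbip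
  have hsum2 : ∑ v ∈ Qf, (No A v).card = ∑ w ∈ Pf, (Ni A w).card := sum_bip (bip_swap hbip)
  have hPsum : ∑ v ∈ Pf, (No A v).card
      = (No A u0).card + (No A x2).card + (No A x3).card + (No A x4).card := by
    rw [hPenum]
    rw [Finset.sum_insert (by simp [hx2ne.symm, hx30.symm, hx40.symm]),
      Finset.sum_insert (by simp [hx32.symm, hx42.symm]),
      Finset.sum_insert (by simp [hx34]), Finset.sum_singleton]
    ring
  have hQsumi : ∑ w ∈ Qf, (Ni A w).card
      = (Ni A y1).card + (Ni A y2).card + (Ni A y3).card + (Ni A y4).card := by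
    rw [hQenum]
    rw [Finset.sum_insert (by simp [hy2ne.symm, hy31.symm, hy41.symm]),
      Finset.sum_insert (by simp [hy32.symm, hy42.symm]),
      Finset.sum_insert (by simp [hy34]), Finset.sum_singleton]
    ring
  have hQsum : ∑ v ∈ Qf, (No A v).card
      = (No A y1).card + (No A y2).card + (No A y3).card + (No A y4).card := by
    rw [hQenum]
    rw [Finset.sum_insert (by simp [hy2ne.symm, hy31.symm, hy41.symm]),
      Finset.sum_insert (by simp [hy32.symm, hy42.symm]),
      Finset.sum_insert (by simp [hy34]), Finset.sum_singleton]
    ring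
  have hPsumi : ∑ w ∈ Pf, (Ni A w).card
      = (Ni A u0).card + (Ni A x2).card + (Ni A x3).card + (Ni A x4).card := by
    rw [hPenum]
    rw [Finset.sum_insert (by simp [hx2ne.symm, hx30.symm, hx40.symm]),
      Finset.sum_insert (by simp [hx32.symm, hx42.symm]),
      Finset.sum_insert (by simp [hx34]), Finset.sum_singleton]
    ring
  have hiny3 : (Ni A y3).card = 2 ∧ (Ni A y4).card = 2 ∧ (No A x2).card = 1
      ∧ (No A x3).card = 1 ∧ (No A x4).card = 1 := by
    have e1 := hsum1
    rw [hPsum, hQsumi] at e1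
    have b1 := houtpos x2
    have b2 := houtpos x3
    have b3 := houtpos x4
    have b4 := hin2Q y3 hy3Q
    have b5 := hin2Q y4 hy4Q
    omega
  have hinx3 : (Ni A x3).card = 2 ∧ (Ni A x4).card = 2 ∧ (No A y2).card = 1
      ∧ (No A y3).card = 1 ∧ (No A y4).card = 1 := by
    have e1 := hsum2
    rw [hQsum, hPsumi] at e1
    have b1 := houtpos y2
    have b2 := houtpos y3
    have b3 := houtpos y4
    have b4 := hin2P x3 hx3P
    have b5 := hin2P x4 hx4P
    omega
  obtain ⟨hiy3, hiy4, hox2, hox3, hox4⟩ := hiny3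
  obtain ⟨hix3, hix4, hoy2, hoy3, hoy4⟩ := hinx3
  -- out-neighbour targets of x3, x4
  have target : ∀ x, x ∈ P → x ≠ u0 → x ≠ x2 → (No A x).card = 1 →
      (A x y3 ∧ No A x = {y3}) ∨ (A x y4 ∧ No A x = {y4}) := by
    intro x hx hxu0 hxx2 hcard1
    obtain ⟨t, hset⟩ := Finset.card_eq_one.mp hcard1
    have hAxt : A x t := by
      have : t ∈ No A x := by rw [hset]; simp
      simpa using this
    have htQ : t ∈ Qf := No_subset hbip hx (by rw [hset]; simp)
    have ht1 : t ≠ y1 := by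
      intro h
      rw [h] at hAxt
      have : x ∈ Ni A y1 := by simpa using hAxt
      rw [hNiy1] at this
      rcases Finset.mem_insert.mp this with h | h
      · exact hxu0 h
      · exact hxx2 (by simpa using h)
    have ht2 : t ≠ y2 := by
      intro h
      rw [h] at hAxt
      have : x ∈ Ni A y2 := by simpa using hAxt
      rw [hNiy2] at this
      exact hxu0 (by simpa using this)
    rw [hQenum] at htQ
    simp [ht1, ht2] at htQ
    rcases htQ with rfl | rfl
    · exact Or.inl ⟨hAxt, hset⟩
    · exact Or.inr ⟨hAxt, hset⟩
  have target' : ∀ y, y ∈ Q → y ≠ y1 → y ≠ y2 → (No A y).card = 1 →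
      (A y x3 ∧ No A y = {x3}) ∨ (A y x4 ∧ No A y = {x4}) := by
    intro y hy hyy1 hyy2' hcard1
    obtain ⟨t, hset⟩ := Finset.card_eq_one.mp hcard1
    have hAyt : A y t := by
      have : t ∈ No A y := by rw [hset]; simp
      simpa using this
    have htP : t ∈ Pf := No_subset (bip_swap hbip) hy (by rw [hset]; simp)
    have ht1 : t ≠ u0 := by
      intro h
      rw [h] at hAyt
      have : y ∈ Ni A u0 := by simpa using hAyt
      rw [hNiu0] at this
      rcases Finset.mem_insert.mp this with h | h
      · exact hyy1 h
      · exact hyy2' (by simpa using h)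
    have ht2 : t ≠ x2 := by
      intro h
      rw [h] at hAyt
      have : y ∈ Ni A x2 := by simpa using hAyt
      rw [hNix2] at this
      exact hyy1 (by simpa using this)
    rw [hPenum] at htP
    simp [ht1, ht2] at htP
    rcases htP with rfl | rfl
    · exact Or.inl ⟨hAyt, hset⟩
    · exact Or.inr ⟨hAyt, hset⟩
  have tx3 := target x3 hx3P hx30 hx32 hox3
  have tx4 := target x4 hx4P hx40 hx42 hox4
  have ty3 := target' y3 hy3Q hy31 hy32 hoy3
  have ty4 := target' y4 hy4Q hy41 hy42 hoy4
  -- not both x3, x4 to the same target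
  have hcollide : ∀ y, y ∈ Q → (Ni A y).card = 2 → A x3 y → A x4 y → False := by
    intro y hy hc h3 h4
    have hsub : ({u0, x3, x4} : Finset V) ⊆ Ni A y := by
      intro t ht
      simp at ht
      rcases ht with rfl | rfl | rfl
      · simpa using hAu0 y hy
      · simpa using h3
      · simpa using h4
    have hcd : ({u0, x3, x4} : Finset V).card = 3 := by
      rw [Finset.card_insert_of_notMem (by simp [hx30.symm, hx40.symm]),
        Finset.card_insert_of_notMem (by simp [hx34]), Finset.card_singleton]
    have := Finset.card_le_card hsub
    omega
  have hcollide' : ∀ x, x ∈ P → (Ni A x).card = 2 → A y3 x → A y4 x → False := by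
    intro x hx hc h3 h4
    have hsub : ({y1, y3, y4} : Finset V) ⊆ Ni A x := by
      intro t ht
      simp at ht
      rcases ht with rfl | rfl | rfl
      · simpa using hAy1 x hx
      · simpa using h3
      · simpa using h4
    have hcd : ({y1, y3, y4} : Finset V).card = 3 := by
      rw [Finset.card_insert_of_notMem (by simp [hy31.symm, hy41.symm]),
        Finset.card_insert_of_notMem (by simp [hy34]), Finset.card_singleton]
    have := Finset.card_le_card hsub
    omega
  -- final case analysis
  rcases tx3 with ⟨ax3, nx3⟩ | ⟨ax3, nx3⟩ <;> rcases tx4 with ⟨ax4, nx4⟩ | ⟨ax4, nx4⟩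
  · exact absurd (hcollide y3 hy3Q hiy3 ax3 ax4) (by simp)
  · -- x3 → y3, x4 → y4
    rcases ty3 with ⟨ay3, ny3⟩ | ⟨ay3, ny3⟩
    · exact absurd (trap hs nx3 ny3 (Ne.symm hx30) (nePQ hbip hu0P hy3Q)) (by simp)
    · rcases ty4 with ⟨ay4, ny4⟩ | ⟨ay4, ny4⟩
      · exact mk4 A ax3 ay3 ax4 ay4 hx34 hy34
          (nePQ hbip hx3P hy3Q) (nePQ hbip hx3P hy4Q)
          (nePQ hbip hx4P hy3Q) (nePQ hbip hx4P hy4Q)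
      · exact absurd (hcollide' x4 hx4P hix4 ay3 ay4) (by simp)
  · -- x3 → y4, x4 → y3
    rcases ty4 with ⟨ay4, ny4⟩ | ⟨ay4, ny4⟩
    · exact absurd (trap hs nx3 ny4 (Ne.symm hx30) (nePQ hbip hu0P hy4Q)) (by simp)
    · rcases ty3 with ⟨ay3, ny3⟩ | ⟨ay3, ny3⟩
      · exact mk4 A ax3 ay4 ax4 ay3 hx34 (Ne.symm hy34)
          (nePQ hbip hx3P hy4Q) (nePQ hbip hx3P hy3Q)
          (nePQ hbip hx4P hy4Q) (nePQ hbip hx4P hy3Q)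
      · exact absurd (trap hs nx4 ny3 (Ne.symm hx40) (nePQ hbip hu0P hy3Q)) (by simp)
  · exact absurd (hcollide y4 hy4Q hiy4 ax3 ax4) (by simp)

end


/-- If `D` is a strongly connected balanced bipartite digraph of order `2a ≥ 8` which is
not a directed cycle and `max {d(x), d(y)} ≥ 2a − 2` for every dominating pair, then `D`
contains a non-hamiltonian directed cycle of length at least 4. -/
theorem stmt4 [Fintype V] (A : V → V → Prop) (X Y : Set V) (a : ℕ) (ha : 4 ≤ a)
    (hX : X.ncard = a) (hY : Y.ncard = a) (hbip : IsBipartition A X Y)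
    (hstrong : StrongConn A)
    (hnotcyc : ¬ IsDirectedCycleDigraph A)
    (hdeg : ∀ x y : V, DomPair A x y → 2 * a - 2 ≤ max (deg A x) (deg A y)) :
    ∃ m : ℕ, 4 ≤ m ∧ m < 2 * a ∧ HasCycleLen A m := by
  classical
  have hstrong' : ∀ u v : V, Relation.ReflTransGen A u v := hstrong
  have hcardV : Fintype.card V = 2 * a := by
    have h1 : (X ∪ Y).ncard = X.ncard + Y.ncard :=
      Set.ncard_union_eq hbip.1 (Set.toFinite X) (Set.toFinite Y)
    rw [hbip.2.1] at h1
    rw [Set.ncard_univ, Nat.card_eq_fintype_card] at h1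
    omega
  have hcard2 : 2 ≤ Fintype.card V := by omega
  have hdp : ∀ x y z : V, A x z → A y z → x ≠ y →
      2 * a - 2 ≤ deg A x ∨ 2 * a - 2 ≤ deg A y := by
    intro x y z hxz hyz hxy
    exact le_max_iff.mp (hdeg x y ⟨hxy, z, hxz, hyz⟩)
  by_cases hex : ∃ z c d : V, c ≠ d ∧ A c z ∧ A d z
  · obtain ⟨z, c, d, hcd, hcz, hdz⟩ := hex
    have hbig : 2 * a - 2 ≤ deg A c ∨ 2 * a - 2 ≤ deg A d := hdp c d z hcz hdz hcd
    obtain ⟨v0, hv0b⟩ : ∃ v0, 2 * a - 2 ≤ deg A v0 := by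
      rcases hbig with h | h
      · exact ⟨c, h⟩
      · exact ⟨d, h⟩
    have h4 : HasCycleLen A 4 := by
      rcases bip_mem hbip v0 with hv0 | hv0
      · exact main_aux hbip ha hX hY hstrong' hcard2 hdp hv0 hv0b
      · exact main_aux (bip_swap hbip) ha hY hX hstrong' hcard2 hdp hv0 hv0b
    exact ⟨4, le_refl 4, by omega, h4⟩
  · exfalso
    push_neg at hex
    have hin1 : ∀ v : V, (Ni A v).card ≤ 1 := by
      intro v
      apply Finset.card_le_one.mpr
      intro c hc d hd
      by_contra hne
      exact hex v c d hne (by simpa using hc) (by simpa using hd)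
    obtain ⟨hone, hinu⟩ := deg_one_package hstrong' hcard2 hin1
    exact hnotcyc (cycle_struct hstrong' hone hinu hcard2)
end

section
/- Let D be a strongly connected balanced bipartite digraph of order 2a ≥ 8. Suppose max{d(x), d(y)} ≥ 2a − 1 for every pair of distinct vertices x, y with a common out-neighbour. If D is not isomorphic to the exceptional digraph D(8), then D is hamiltonian. -/
open Finset

variable {V : Type*}

/-- The digraph `A` has a hamiltonian (directed) cycle. -/
def Hamiltonian [Fintype V] (A : V → V → Prop) : Prop :=
  ∃ f : ZMod (Fintype.card V) → V, Function.Bijective f ∧ ∀ i, A (f i) (f (i + 1))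

/-- The arcs of the exceptional digraph `D(8)`; vertices `0,1,2,3` are `x₀,…,x₃` and
`4,5,6,7` are `y₀,…,y₃`. -/
def D8Arcs : List (Fin 8 × Fin 8) :=
  [(4,1), (5,0), (2,7), (3,6),
   (0,4), (4,0), (1,5), (5,1), (2,6), (6,2), (3,7), (7,3),
   (4,2), (2,4), (4,3), (3,4), (5,2), (2,5), (5,3), (3,5)]

/-- The exceptional digraph `D(8)`. -/
def D8 (u v : Fin 8) : Prop := (u, v) ∈ D8Arcs


set_option linter.unusedSectionVars false
set_option linter.unusedVariables false
set_option maxHeartbeats 1000000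
open Equiv


namespace BBD
variable {V : Type*} [Fintype V] [DecidableEq V]

open scoped Classical in
noncomputable def outs (A : V → V → Prop) (v : V) : Finset V := univ.filter fun w => A v w
open scoped Classical in
noncomputable def ins (A : V → V → Prop) (v : V) : Finset V := univ.filter fun w => A w v

noncomputable def DegF (A : V → V → Prop) (v : V) : ℕ := (outs A v).card + (ins A v).card

def BigV (A : V → V → Prop) (a : ℕ) (v : V) : Prop := 2 * a - 1 ≤ DegF A v

@[simp] lemma mem_outs {A : V → V → Prop} {v w : V} : w ∈ outs A v ↔ A v w := by
  simp [outs]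

@[simp] lemma mem_ins {A : V → V → Prop} {v w : V} : w ∈ ins A v ↔ A w v := by
  simp [ins]

structure Hyps (A : V → V → Prop) (X Y : Finset V) (a : ℕ) : Prop where
  ha : 4 ≤ a
  hX : X.card = a
  hY : Y.card = a
  hdisj : ∀ v, v ∈ X → v ∈ Y → False
  hunion : ∀ v : V, v ∈ X ∨ v ∈ Y
  hbip : ∀ u v, A u v → (u ∈ X ∧ v ∈ Y) ∨ (u ∈ Y ∧ v ∈ X)
  hdom : ∀ u v z, u ≠ v → A u z → A v z → BigV A a u ∨ BigV A a v
  hstr : ∀ S : Finset V, S.Nonempty → S ≠ univ → ∃ u ∈ S, ∃ v, v ∉ S ∧ A u v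

namespace Hyps

variable {A : V → V → Prop} {X Y : Finset V} {a : ℕ}

lemma symm (H : Hyps A X Y a) : Hyps A Y X a where
  ha := H.ha
  hX := H.hY
  hY := H.hX
  hdisj := fun v hy hx => H.hdisj v hx hy
  hunion := fun v => (H.hunion v).symm
  hbip := fun u v h => (H.hbip u v h).symm
  hdom := H.hdom
  hstr := H.hstr

lemma arc_mem_left (H : Hyps A X Y a) {u v : V} (h : A u v) (hu : u ∈ X) : v ∈ Y := by
  rcases H.hbip u v h with ⟨_, hv⟩ | ⟨hu', _⟩
  · exact hv
  · exact absurd hu' (fun h' => H.hdisj u hu h')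

lemma arc_mem_right (H : Hyps A X Y a) {u v : V} (h : A u v) (hv : v ∈ Y) : u ∈ X := by
  rcases H.hbip u v h with ⟨hu, _⟩ | ⟨_, hv'⟩
  · exact hu
  · exact absurd hv' (fun h' => H.hdisj v h' hv)

lemma outs_subset (H : Hyps A X Y a) {u : V} (hu : u ∈ X) : outs A u ⊆ Y := by
  intro w hw; exact H.arc_mem_left (mem_outs.1 hw) hu

lemma ins_subset (H : Hyps A X Y a) {u : V} (hu : u ∈ X) : ins A u ⊆ Y := by
  intro w hw
  rcases H.hbip w u (mem_ins.1 hw) with ⟨hw', hu'⟩ | ⟨hw', _⟩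
  · exact absurd hu' (fun h' => H.hdisj u hu h')
  · exact hw'

/-- A big vertex cannot have two distinct out-misses. -/
lemma big_out_unique (H : Hyps A X Y a) {u y₁ y₂ : V} (hb : BigV A a u) (hu : u ∈ X)
    (h1 : y₁ ∈ Y) (h2 : y₂ ∈ Y) (m1 : ¬ A u y₁) (m2 : ¬ A u y₂) : y₁ = y₂ := by
  by_contra hne
  have hsub : outs A u ⊆ (Y.erase y₁).erase y₂ := by
    intro w hw
    have hwY : w ∈ Y := H.outs_subset hu hw
    have hw' : A u w := mem_outs.1 hw
    refine Finset.mem_erase.2 ⟨?_, Finset.mem_erase.2 ⟨?_, hwY⟩⟩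
    · rintro rfl; exact m2 hw'
    · rintro rfl; exact m1 hw'
  have hco : (outs A u).card ≤ a - 2 := by
    calc (outs A u).card ≤ ((Y.erase y₁).erase y₂).card := Finset.card_le_card hsub
    _ ≤ Y.card - 2 := by
        rw [Finset.card_erase_of_mem (Finset.mem_erase.2 ⟨fun h => hne h.symm, h2⟩),
          Finset.card_erase_of_mem h1]
        omega
    _ = a - 2 := by rw [H.hY]
  have hci : (ins A u).card ≤ a := by
    calc (ins A u).card ≤ Y.card := Finset.card_le_card (H.ins_subset hu)
    _ = a := H.hY
  have := hb
  unfold BigV DegF at this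
  have ha := H.ha
  omega

/-- A big vertex cannot have both an out-miss and an in-miss. -/
lemma big_no_out_in_miss (H : Hyps A X Y a) {u y₁ y₂ : V} (hb : BigV A a u) (hu : u ∈ X)
    (h1 : y₁ ∈ Y) (h2 : y₂ ∈ Y) (m1 : ¬ A u y₁) (m2 : ¬ A y₂ u) : False := by
  have hco : (outs A u).card ≤ a - 1 := by
    calc (outs A u).card ≤ (Y.erase y₁).card := Finset.card_le_card (by
      intro w hw
      refine Finset.mem_erase.2 ⟨?_, H.outs_subset hu hw⟩
      rintro rfl; exact m1 (mem_outs.1 hw))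
    _ = a - 1 := by rw [Finset.card_erase_of_mem h1, H.hY]
  have hci : (ins A u).card ≤ a - 1 := by
    calc (ins A u).card ≤ (Y.erase y₂).card := Finset.card_le_card (by
      intro w hw
      refine Finset.mem_erase.2 ⟨?_, H.ins_subset hu hw⟩
      rintro rfl; exact m2 (mem_ins.1 hw))
    _ = a - 1 := by rw [Finset.card_erase_of_mem h2, H.hY]
  have := hb
  unfold BigV DegF at this
  have ha := H.ha
  omega

/-- A big vertex with two distinct in-misses is impossible. -/
lemma big_in_unique (H : Hyps A X Y a) {u y₁ y₂ : V} (hb : BigV A a u) (hu : u ∈ X)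
    (h1 : y₁ ∈ Y) (h2 : y₂ ∈ Y) (m1 : ¬ A y₁ u) (m2 : ¬ A y₂ u) : y₁ = y₂ := by
  by_contra hne
  have hci : (ins A u).card ≤ a - 2 := by
    calc (ins A u).card ≤ ((Y.erase y₁).erase y₂).card := Finset.card_le_card (by
      intro w hw
      refine Finset.mem_erase.2 ⟨?_, Finset.mem_erase.2 ⟨?_, H.ins_subset hu hw⟩⟩
      · rintro rfl; exact m2 (mem_ins.1 hw)
      · rintro rfl; exact m1 (mem_ins.1 hw))
    _ ≤ Y.card - 2 := by
        rw [Finset.card_erase_of_mem (Finset.mem_erase.2 ⟨fun h => hne h.symm, h2⟩),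
          Finset.card_erase_of_mem h1]
        omega
    _ = a - 2 := by rw [H.hY]
  have hco : (outs A u).card ≤ a := by
    calc (outs A u).card ≤ Y.card := Finset.card_le_card (H.outs_subset hu)
    _ = a := H.hY
  have := hb
  unfold BigV DegF at this
  have ha := H.ha
  omega

lemma big_fullI (H : Hyps A X Y a) {u y₀ : V} (hb : BigV A a u) (hu : u ∈ X)
    (h0 : y₀ ∈ Y) (m0 : ¬ A u y₀) : ∀ y ∈ Y, A y u := by
  intro y hy
  by_contra hm
  exact H.big_no_out_in_miss hb hu h0 hy m0 hm

lemma big_out_rest (H : Hyps A X Y a) {u y₀ : V} (hb : BigV A a u) (hu : u ∈ X)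
    (h0 : y₀ ∈ Y) (m0 : ¬ A u y₀) : ∀ y ∈ Y, y ≠ y₀ → A u y := by
  intro y hy hne
  by_contra hm
  exact hne (H.big_out_unique hb hu hy h0 hm m0)

lemma big_fullO (H : Hyps A X Y a) {u y₀ : V} (hb : BigV A a u) (hu : u ∈ X)
    (h0 : y₀ ∈ Y) (m0 : ¬ A y₀ u) : ∀ y ∈ Y, A u y := by
  intro y hy
  by_contra hm
  exact H.big_no_out_in_miss hb hu hy h0 hm m0

/-- R0: two distinct small vertices have no common out-neighbour. -/
lemma small_in_unique (H : Hyps A X Y a) {z u v : V} (hu : A u z) (hv : A v z)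
    (hsu : ¬ BigV A a u) (hsv : ¬ BigV A a v) : u = v := by
  by_contra hne
  rcases H.hdom u v z hne hu hv with h | h
  · exact hsu h
  · exact hsv h

lemma big_ins_card (H : Hyps A X Y a) {u : V} (hb : BigV A a u) (hu : u ∈ X) :
    a - 1 ≤ (ins A u).card := by
  have hco : (outs A u).card ≤ a := by
    calc (outs A u).card ≤ Y.card := Finset.card_le_card (H.outs_subset hu)
    _ = a := H.hY
  have := hb; unfold BigV DegF at this
  have ha := H.ha
  omega

lemma big_outs_card (H : Hyps A X Y a) {u : V} (hb : BigV A a u) (hu : u ∈ X) :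
    a - 1 ≤ (outs A u).card := by
  have hci : (ins A u).card ≤ a := by
    calc (ins A u).card ≤ Y.card := Finset.card_le_card (H.ins_subset hu)
    _ = a := H.hY
  have := hb; unfold BigV DegF at this
  have ha := H.ha
  omega

lemma X_union_Y (H : Hyps A X Y a) : X ∪ Y = univ := by
  apply Finset.eq_univ_iff_forall.2
  intro v
  rcases H.hunion v with h | h
  · exact Finset.mem_union_left _ h
  · exact Finset.mem_union_right _ h

lemma card_univ_eq (H : Hyps A X Y a) : Fintype.card V = 2 * a := by
  have hd : Disjoint X Y := Finset.disjoint_left.2 fun {v} hx hy => H.hdisj v hx hy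
  have := Finset.card_union_of_disjoint hd
  rw [H.X_union_Y] at this
  simp only [Finset.card_univ] at this
  rw [this, H.hX, H.hY]; ring

lemma exists_out (H : Hyps A X Y a) (v : V) : ∃ w, A v w := by
  have h1 : ({v} : Finset V).Nonempty := ⟨v, Finset.mem_singleton_self v⟩
  have h2 : ({v} : Finset V) ≠ univ := by
    intro h
    have := Finset.card_univ (α := V)
    rw [← h] at this
    have hc := H.card_univ_eq
    have ha := H.ha
    simp [Finset.card_singleton] at this
    omega
  obtain ⟨u, hu, w, _, hw⟩ := H.hstr _ h1 h2
  rw [Finset.mem_singleton] at hu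
  subst hu
  exact ⟨w, hw⟩

lemma exists_in (H : Hyps A X Y a) (v : V) : ∃ w, A w v := by
  have h1 : (univ.erase v).Nonempty := by
    rw [← Finset.card_pos, Finset.card_erase_of_mem (Finset.mem_univ v), Finset.card_univ,
      H.card_univ_eq]
    have := H.ha; omega
  have h2 : univ.erase v ≠ univ := by
    intro h
    have : v ∈ univ.erase v := by rw [h]; exact Finset.mem_univ v
    exact (Finset.mem_erase.1 this).1 rfl
  obtain ⟨u, hu, w, hw, harc⟩ := H.hstr _ h1 h2
  have : w = v := by
    by_contra hne
    exact hw (Finset.mem_erase.2 ⟨hne, Finset.mem_univ w⟩)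
  subst this
  exact ⟨u, harc⟩

lemma outs_nonempty (H : Hyps A X Y a) (v : V) : (outs A v).Nonempty := by
  obtain ⟨w, hw⟩ := H.exists_out v
  exact ⟨w, mem_outs.2 hw⟩

/-- Hall condition on one side. -/
lemma hall_side (H : Hyps A X Y a) (s : Finset V) (hs : s ⊆ X) :
    s.card ≤ (s.biUnion (outs A)).card := by
  by_cases hbig : ∃ u ∈ s, BigV A a u
  · obtain ⟨u, hu, hb⟩ := hbig
    have h1 : outs A u ⊆ s.biUnion (outs A) := fun w hw =>
      Finset.mem_biUnion.2 ⟨u, hu, hw⟩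
    have h2 : a - 1 ≤ (s.biUnion (outs A)).card :=
      le_trans (H.big_outs_card hb (hs hu)) (Finset.card_le_card h1)
    by_cases hcard : s.card ≤ a - 1
    · omega
    · -- s = X
      have hsX : s = X := by
        apply Finset.eq_of_subset_of_card_le hs
        rw [H.hX]; omega
      have hY2 : Y ⊆ s.biUnion (outs A) := by
        intro y hy
        obtain ⟨x, hx⟩ := H.exists_in y
        have hxX : x ∈ X := H.arc_mem_right hx hy
        exact Finset.mem_biUnion.2 ⟨x, by rw [hsX]; exact hxX, mem_outs.2 hx⟩
      have h3 := Finset.card_le_card hY2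
      have h4 : s.card = a := by rw [hsX, H.hX]
      rw [H.hY] at h3
      omega
  · push_neg at hbig
    rw [Finset.card_biUnion ?hdisj]
    · calc s.card = ∑ _u ∈ s, 1 := by simp
      _ ≤ ∑ u ∈ s, (outs A u).card := Finset.sum_le_sum fun u hu =>
          Finset.card_pos.2 (H.outs_nonempty u)
    case hdisj =>
      intro u hu v hv hne
      rw [Function.onFun, Finset.disjoint_left]
      intro w hwu hwv
      exact hne (H.small_in_unique (mem_outs.1 hwu) (mem_outs.1 hwv) (hbig u hu) (hbig v hv))

lemma exists_factor (H : Hyps A X Y a) : ∃ f : Equiv.Perm V, ∀ v, A v (f v) := by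
  have hall : ∀ s : Finset V, s.card ≤ (s.biUnion (outs A)).card := by
    intro s
    classical
    set sX := s.filter (· ∈ X) with hsX
    set sY := s.filter (· ∉ X) with hsY
    have hsplit : s = sX ∪ sY := by
      simp [hsX, hsY, ← Finset.filter_or]
      exact (Finset.filter_true_of_mem (fun x _ => em _)).symm
    have hYsub : sY ⊆ Y := by
      intro v hv
      rw [hsY, Finset.mem_filter] at hv
      rcases H.hunion v with h | h
      · exact absurd h hv.2
      · exact h
    have hXsub : sX ⊆ X := by
      intro v hv
      rw [hsX, Finset.mem_filter] at hv
      exact hv.2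
    have c1 : sX.card ≤ (sX.biUnion (outs A)).card := H.hall_side sX hXsub
    have c2 : sY.card ≤ (sY.biUnion (outs A)).card := H.symm.hall_side sY hYsub
    have hdisjB : Disjoint (sX.biUnion (outs A)) (sY.biUnion (outs A)) := by
      rw [Finset.disjoint_left]
      intro w hw1 hw2
      obtain ⟨u1, hu1, hw1⟩ := Finset.mem_biUnion.1 hw1
      obtain ⟨u2, hu2, hw2⟩ := Finset.mem_biUnion.1 hw2
      rw [hsX, Finset.mem_filter] at hu1
      have hw1Y : w ∈ Y := H.arc_mem_left (mem_outs.1 hw1) hu1.2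
      have hu2Y : u2 ∈ Y := hYsub hu2
      have hw2X : w ∈ X := H.symm.arc_mem_left (mem_outs.1 hw2) hu2Y
      exact H.hdisj w hw2X hw1Y
    have hdisjS : Disjoint sX sY := by
      rw [Finset.disjoint_left]
      intro v h1 h2
      rw [hsX, Finset.mem_filter] at h1
      rw [hsY, Finset.mem_filter] at h2
      exact h2.2 h1.2
    calc s.card = sX.card + sY.card := by rw [hsplit, Finset.card_union_of_disjoint hdisjS]
    _ ≤ (sX.biUnion (outs A)).card + (sY.biUnion (outs A)).card := by omega
    _ = ((sX.biUnion (outs A)) ∪ (sY.biUnion (outs A))).card :=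
        (Finset.card_union_of_disjoint hdisjB).symm
    _ ≤ (s.biUnion (outs A)).card := by
        apply Finset.card_le_card
        intro w hw
        rcases Finset.mem_union.1 hw with h | h
        · obtain ⟨u, hu, hw'⟩ := Finset.mem_biUnion.1 h
          exact Finset.mem_biUnion.2 ⟨u, by rw [hsplit]; exact Finset.mem_union_left _ hu, hw'⟩
        · obtain ⟨u, hu, hw'⟩ := Finset.mem_biUnion.1 h
          exact Finset.mem_biUnion.2 ⟨u, by rw [hsplit]; exact Finset.mem_union_right _ hu, hw'⟩
  obtain ⟨f₀, hinj, hmem⟩ := (Finset.all_card_le_biUnion_card_iff_exists_injective (outs A)).1 hall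
  have hbij : Function.Bijective f₀ := Finite.injective_iff_bijective.1 hinj
  exact ⟨Equiv.ofBijective f₀ hbij, fun v => mem_outs.1 (hmem v)⟩

end Hyps


lemma sc_exists_pow {f : Perm V} {x y : V} (h : f.SameCycle x y) :
    ∃ i, 0 < i ∧ (f ^ i) x = y := by
  obtain ⟨i, hi, _, he⟩ := h.exists_pow_eq f
  exact ⟨i, hi, he⟩

lemma sc_mem_closed (g : Perm V) (T : Finset V) (hcl : ∀ z ∈ T, g z ∈ T)
    {w z : V} (hw : w ∈ T) (h : g.SameCycle w z) : z ∈ T := by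
  obtain ⟨i, _, he⟩ := sc_exists_pow h
  have hall : ∀ n : ℕ, (g ^ n) w ∈ T := by
    intro n
    induction n with
    | zero => simpa using hw
    | succ n ih =>
        have hp : (g ^ (n + 1)) w = g ((g ^ n) w) := by
          rw [pow_succ', Equiv.Perm.mul_apply]
        rw [hp]
        exact hcl _ ih
  exact he ▸ hall i

lemma merge_half (f : Perm V) (u v : V) (h : ¬ f.SameCycle u v) :
    ∀ z, f.SameCycle v z → (f * Equiv.swap u v).SameCycle u z := by
  have base : (f * Equiv.swap u v).SameCycle u (f v) := by
    have he : (f * Equiv.swap u v) u = f v := by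
      rw [Equiv.Perm.mul_apply, Equiv.swap_apply_left]
    exact he ▸ ⟨1, by simp⟩
  have chain : ∀ k : ℕ, (f * Equiv.swap u v).SameCycle u ((f ^ (k + 1)) v) := by
    intro k
    induction k with
    | zero => simpa using base
    | succ n ih =>
        by_cases hv : (f ^ (n + 1)) v = v
        · have : (f ^ (n + 2)) v = f v := by
            rw [pow_succ', Equiv.Perm.mul_apply, hv]
          rw [this]; exact base
        · have hu' : (f ^ (n + 1)) v ≠ u := by
            intro he
            exact h (Equiv.Perm.SameCycle.symm ⟨(n + 1 : ℕ), by exact_mod_cast he⟩)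
          have hstep : (f * Equiv.swap u v) ((f ^ (n + 1)) v) = (f ^ (n + 2)) v := by
            rw [Equiv.Perm.mul_apply, Equiv.swap_apply_of_ne_of_ne hu' hv,
              ← Equiv.Perm.mul_apply, ← pow_succ']
          rw [← hstep]
          exact Equiv.Perm.sameCycle_apply_right.2 ih
  intro z hz
  obtain ⟨i, hip, he⟩ := sc_exists_pow hz
  obtain ⟨k, rfl⟩ : ∃ k, i = k + 1 := ⟨i - 1, by omega⟩
  exact he ▸ chain k

lemma merge_sc (f : Perm V) (u v : V) (h : ¬ f.SameCycle u v) (w : V) :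
    (f * Equiv.swap u v).SameCycle u w ↔ f.SameCycle u w ∨ f.SameCycle v w := by
  classical
  constructor
  · intro hw
    by_contra hcon
    push_neg at hcon
    set T : Finset V := univ.filter (fun z => f.SameCycle u z ∨ f.SameCycle v z) with hT
    have hmem : ∀ z, z ∈ T ↔ (f.SameCycle u z ∨ f.SameCycle v z) := by
      intro z; simp [hT]
    have hcl : ∀ t ∈ T, (f * Equiv.swap u v) t ∈ T := by
      intro t ht
      rcases (hmem t).1 ht with ht' | ht'
      · by_cases htv : t = v
        · exact absurd (htv ▸ ht') h
        · by_cases htu : t = u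
          · have : (f * Equiv.swap u v) t = f v := by
              rw [Equiv.Perm.mul_apply, htu, Equiv.swap_apply_left]
            rw [this, hmem]
            exact Or.inr (Equiv.Perm.sameCycle_apply_right.2 (Equiv.Perm.SameCycle.refl f v))
          · have : (f * Equiv.swap u v) t = f t := by
              rw [Equiv.Perm.mul_apply, Equiv.swap_apply_of_ne_of_ne htu htv]
            rw [this, hmem]
            exact Or.inl (Equiv.Perm.sameCycle_apply_right.2 ht')
      · by_cases htu : t = u
        · exact absurd (htu ▸ ht').symm h
        · by_cases htv : t = v
          · have : (f * Equiv.swap u v) t = f u := by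
              rw [Equiv.Perm.mul_apply, htv, Equiv.swap_apply_right]
            rw [this, hmem]
            exact Or.inl (Equiv.Perm.sameCycle_apply_right.2 (Equiv.Perm.SameCycle.refl f u))
          · have : (f * Equiv.swap u v) t = f t := by
              rw [Equiv.Perm.mul_apply, Equiv.swap_apply_of_ne_of_ne htu htv]
            rw [this, hmem]
            exact Or.inr (Equiv.Perm.sameCycle_apply_right.2 ht')
    have hu : u ∈ T := (hmem u).2 (Or.inl (Equiv.Perm.SameCycle.refl f u))
    have := sc_mem_closed _ T hcl hu hw
    rw [hmem] at this
    exact absurd this (by tauto)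
  · intro hw
    rcases hw with hw | hw
    · have h2 : ¬ f.SameCycle v u := fun hh => h hh.symm
      have h3 := merge_half f v u h2 w hw
      rw [Equiv.swap_comm] at h3
      exact (merge_half f u v h v (Equiv.Perm.SameCycle.refl f v)).trans h3
    · exact merge_half f u v h w hw

lemma merge_sc_other (f : Perm V) (u v : V) (h : ¬ f.SameCycle u v) {w : V}
    (hwu : ¬ f.SameCycle u w) (hwv : ¬ f.SameCycle v w) (z : V) :
    (f * Equiv.swap u v).SameCycle w z ↔ f.SameCycle w z := by
  classical
  have fwd : ∀ z, (f * Equiv.swap u v).SameCycle w z → f.SameCycle w z := by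
    intro z hz
    set T : Finset V := univ.filter (fun t => f.SameCycle w t) with hT
    have hmem : ∀ t, t ∈ T ↔ f.SameCycle w t := by intro t; simp [hT]
    have hcl : ∀ t ∈ T, (f * Equiv.swap u v) t ∈ T := by
      intro t ht
      have ht' := (hmem t).1 ht
      have htu : t ≠ u := fun he => hwu (he ▸ ht').symm
      have htv : t ≠ v := fun he => hwv (he ▸ ht').symm
      have : (f * Equiv.swap u v) t = f t := by
        rw [Equiv.Perm.mul_apply, Equiv.swap_apply_of_ne_of_ne htu htv]
      rw [this, hmem]
      exact Equiv.Perm.sameCycle_apply_right.2 ht'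
    have hw : w ∈ T := (hmem w).2 (Equiv.Perm.SameCycle.refl f w)
    exact (hmem z).1 (sc_mem_closed _ T hcl hw hz)
  constructor
  · exact fwd z
  · intro hz
    set T : Finset V := univ.filter (fun t => (f * Equiv.swap u v).SameCycle w t) with hT
    have hmem : ∀ t, t ∈ T ↔ (f * Equiv.swap u v).SameCycle w t := by intro t; simp [hT]
    have hcl : ∀ t ∈ T, f t ∈ T := by
      intro t ht
      have ht' := (hmem t).1 ht
      have htf := fwd t ht'
      have htu : t ≠ u := fun he => hwu (he ▸ htf).symm
      have htv : t ≠ v := fun he => hwv (he ▸ htf).symm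
      have : f t = (f * Equiv.swap u v) t := by
        rw [Equiv.Perm.mul_apply, Equiv.swap_apply_of_ne_of_ne htu htv]
      rw [this, hmem]
      exact Equiv.Perm.sameCycle_apply_right.2 ht'
    have hw : w ∈ T := (hmem w).2 (Equiv.Perm.SameCycle.refl _ w)
    exact (hmem z).1 (sc_mem_closed _ T hcl hw hz)

open scoped Classical in
noncomputable def orbF (f : Perm V) (v : V) : Finset V := univ.filter (fun w => f.SameCycle v w)

noncomputable def ncyc (f : Perm V) : ℕ := (univ.image (orbF f)).card

lemma mem_orbF {f : Perm V} {v w : V} : w ∈ orbF f v ↔ f.SameCycle v w := by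
  simp [orbF]

lemma orbF_eq_of_sc {f : Perm V} {v w : V} (h : f.SameCycle v w) : orbF f v = orbF f w := by
  ext z
  rw [mem_orbF, mem_orbF]
  exact ⟨fun hz => h.symm.trans hz, fun hz => h.trans hz⟩

lemma sc_of_orbF_eq {f : Perm V} {v w : V} (h : orbF f v = orbF f w) : f.SameCycle v w := by
  have : w ∈ orbF f w := mem_orbF.2 (Equiv.Perm.SameCycle.refl f w)
  rw [← h] at this
  exact mem_orbF.1 this

lemma ncyc_lt (f : Perm V) (u v : V) (h : ¬ f.SameCycle u v) :
    ncyc (f * Equiv.swap u v) < ncyc f := by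
  classical
  set f' := f * Equiv.swap u v with hf'
  have key : univ.image (orbF f') ⊆
      insert (orbF f u ∪ orbF f v)
        (((univ.image (orbF f)).erase (orbF f u)).erase (orbF f v)) := by
    intro T hT
    obtain ⟨w, _, rfl⟩ := Finset.mem_image.1 hT
    by_cases hw : f'.SameCycle u w
    · have h1 : orbF f' w = orbF f' u := (orbF_eq_of_sc hw).symm
      have h2 : orbF f' u = orbF f u ∪ orbF f v := by
        ext z
        rw [mem_orbF, Finset.mem_union, mem_orbF, mem_orbF]
        exact merge_sc f u v h z
      exact Finset.mem_insert.2 (Or.inl (h1.trans h2))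
    · have hwu : ¬ f.SameCycle u w := fun hh => hw ((merge_sc f u v h w).2 (Or.inl hh))
      have hwv : ¬ f.SameCycle v w := fun hh => hw ((merge_sc f u v h w).2 (Or.inr hh))
      have heq : orbF f' w = orbF f w := by
        ext z
        rw [mem_orbF, mem_orbF]
        exact merge_sc_other f u v h hwu hwv z
      rw [heq]
      have g1 : orbF f w ≠ orbF f v := fun he => hwv (sc_of_orbF_eq he.symm)
      have g2 : orbF f w ≠ orbF f u := fun he => hwu (sc_of_orbF_eq he.symm)
      exact Finset.mem_insert.2 (Or.inr (Finset.mem_erase.2 ⟨g1, Finset.mem_erase.2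
        ⟨g2, Finset.mem_image.2 ⟨w, Finset.mem_univ w, rfl⟩⟩⟩))
  have hmu : orbF f u ∈ univ.image (orbF f) := Finset.mem_image.2 ⟨u, Finset.mem_univ u, rfl⟩
  have hmv : orbF f v ∈ univ.image (orbF f) := Finset.mem_image.2 ⟨v, Finset.mem_univ v, rfl⟩
  have hne : orbF f u ≠ orbF f v := fun he => h (sc_of_orbF_eq he)
  have h1 : ncyc f' ≤ (((univ.image (orbF f)).erase (orbF f u)).erase (orbF f v)).card + 1 :=
    le_trans (Finset.card_le_card key) (Finset.card_insert_le _ _)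
  have hmv' : orbF f v ∈ (univ.image (orbF f)).erase (orbF f u) :=
    Finset.mem_erase.2 ⟨hne.symm, hmv⟩
  have h2 : (((univ.image (orbF f)).erase (orbF f u)).erase (orbF f v)).card
      = (univ.image (orbF f)).card - 2 := by
    rw [Finset.card_erase_of_mem hmv', Finset.card_erase_of_mem hmu]
    omega
  have h3 : 2 ≤ (univ.image (orbF f)).card := by
    have : ({orbF f u, orbF f v} : Finset (Finset V)) ⊆ univ.image (orbF f) := by
      intro T hT
      rcases Finset.mem_insert.1 hT with h' | h'
      · exact h' ▸ hmu
      · exact (Finset.mem_singleton.1 h') ▸ hmv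
    have hc := Finset.card_le_card this
    rw [Finset.card_insert_of_notMem (fun hc' => hne (Finset.mem_singleton.1 hc')),
      Finset.card_singleton] at hc
    exact hc
  unfold ncyc at h1 ⊢
  omega

/-- Construct the Hamiltonian bijection from a single-cycle factor. -/
lemma ham_single {A : V → V → Prop} (f : Perm V) (harc : ∀ v, A v (f v))
    (hone : ∀ v w, f.SameCycle v w) (h2n : 2 ≤ Fintype.card V) :
    ∃ g : ZMod (Fintype.card V) → V, Function.Bijective g ∧ ∀ i, A (g i) (g (i + 1)) := by
  classical
  set n := Fintype.card V with hn
  haveI : NeZero n := ⟨by omega⟩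
  haveI : Fact (1 < n) := ⟨by omega⟩
  obtain ⟨v₀⟩ : Nonempty V := Fintype.card_pos_iff.1 (by omega)
  have hDex : ∃ d, 0 < d ∧ (f ^ d) v₀ = v₀ :=
    ⟨orderOf f, orderOf_pos f, by rw [pow_orderOf_eq_one]; rfl⟩
  set d := Nat.find hDex with hd
  obtain ⟨hd0, hdfix⟩ : 0 < d ∧ (f ^ d) v₀ = v₀ := Nat.find_spec hDex
  have hmod : ∀ m, (f ^ m) v₀ = (f ^ (m % d)) v₀ := by
    intro m
    induction m using Nat.strong_induction_on with
    | _ m ih =>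
      by_cases hm : m < d
      · rw [Nat.mod_eq_of_lt hm]
      · push_neg at hm
        have h1 : m = (m - d) + d := by omega
        have h2 : (f ^ m) v₀ = (f ^ (m - d)) v₀ := by
          conv_lhs => rw [h1]
          rw [pow_add, Equiv.Perm.mul_apply, hdfix]
        rw [h2, ih (m - d) (by omega), Nat.mod_eq_sub_mod hm]
  have hinj : ∀ i < d, ∀ j < d, (f ^ i) v₀ = (f ^ j) v₀ → i = j := by
    have haux : ∀ i j, i ≤ j → j < d → (f ^ i) v₀ = (f ^ j) v₀ → i = j := by
      intro i j hij hjd he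
      by_contra hne
      have h1 : j = i + (j - i) := by omega
      have h2 : (f ^ j) v₀ = (f ^ i) ((f ^ (j - i)) v₀) := by
        conv_lhs => rw [h1]
        rw [pow_add, Equiv.Perm.mul_apply]
      rw [h2] at he
      have h3 : (f ^ (j - i)) v₀ = v₀ := (f ^ i).injective he.symm
      have h4 : 0 < j - i := by omega
      exact Nat.find_min hDex (show j - i < d by omega) ⟨h4, h3⟩
    intro i hi j hj he
    rcases le_total i j with h | h
    · exact haux i j h hj he
    · exact (haux j i h hi he.symm).symm
  have hsurj : ∀ w, ∃ i < d, (f ^ i) v₀ = w := by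
    intro w
    obtain ⟨m, _, hm⟩ := sc_exists_pow (hone v₀ w)
    exact ⟨m % d, Nat.mod_lt _ hd0, by rw [← hmod]; exact hm⟩
  have hdn : d = n := by
    have hle : d ≤ n := by
      have : Function.Injective (fun i : Fin d => (f ^ (i : ℕ)) v₀) := by
        intro i j he
        exact Fin.ext (hinj i i.isLt j j.isLt he)
      simpa [hn] using Fintype.card_le_of_injective _ this
    have hge : n ≤ d := by
      have : Function.Surjective (fun i : Fin d => (f ^ (i : ℕ)) v₀) := by
        intro w
        obtain ⟨i, hi, he⟩ := hsurj w
        exact ⟨⟨i, hi⟩, he⟩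
      simpa [hn] using Fintype.card_le_of_surjective _ this
    omega
  refine ⟨fun i => (f ^ i.val) v₀, ?_, ?_⟩
  · rw [Fintype.bijective_iff_injective_and_card]
    constructor
    · intro i j he
      have h1 := i.val_lt
      have h2 := j.val_lt
      have := hinj i.val (by omega) j.val (by omega) he
      exact ZMod.val_injective n this
    · rw [ZMod.card]
  · intro i
    show A ((f ^ i.val) v₀) ((f ^ (i + 1).val) v₀)
    have hval : (i + 1).val = (i.val + 1) % n := by
      rw [ZMod.val_add, ZMod.val_one]
    have hmod' : ∀ m, (f ^ m) v₀ = (f ^ (m % n)) v₀ := hdn ▸ hmod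
    have h3 : (f ^ ((i.val + 1) % n)) v₀ = f ((f ^ i.val) v₀) := by
      rw [← hmod', pow_succ', Equiv.Perm.mul_apply]
    rw [hval, h3]
    exact harc _

lemma Hyps.exists_min_factor {A : V → V → Prop} {X Y : Finset V} {a : ℕ} (H : Hyps A X Y a) :
    ∃ f : Equiv.Perm V, (∀ v, A v (f v)) ∧
      ((∀ v w, f.SameCycle v w) ∨
        ∀ u v, ¬ f.SameCycle u v → ¬ (A u (f v) ∧ A v (f u))) := by
  classical
  obtain ⟨f₀, hf₀⟩ := H.exists_factor
  have hex : ∃ n, ∃ f : Equiv.Perm V, (∀ v, A v (f v)) ∧ ncyc f = n := ⟨ncyc f₀, f₀, hf₀, rfl⟩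
  obtain ⟨f, hf, hn⟩ := Nat.find_spec hex
  refine ⟨f, hf, ?_⟩
  by_cases hone : ∀ v w, f.SameCycle v w
  · exact Or.inl hone
  · refine Or.inr fun u v hsc hcon => ?_
    obtain ⟨h1, h2⟩ := hcon
    have harc' : ∀ z, A z ((f * Equiv.swap u v) z) := by
      intro z
      by_cases hzu : z = u
      · have : (f * Equiv.swap u v) z = f v := by
          rw [Equiv.Perm.mul_apply, hzu, Equiv.swap_apply_left]
        rw [this, hzu]; exact h1
      · by_cases hzv : z = v
        · have : (f * Equiv.swap u v) z = f u := by
            rw [Equiv.Perm.mul_apply, hzv, Equiv.swap_apply_right]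
          rw [this, hzv]; exact h2
        · have : (f * Equiv.swap u v) z = f z := by
            rw [Equiv.Perm.mul_apply, Equiv.swap_apply_of_ne_of_ne hzu hzv]
          rw [this]; exact hf z
    have hlt : ncyc (f * Equiv.swap u v) < Nat.find hex := by
      rw [← hn]; exact ncyc_lt f u v hsc
    exact Nat.find_min hex hlt ⟨f * Equiv.swap u v, harc', rfl⟩


theorem Equiv.Perm.apply_inv_self {α : Type*} (f : Equiv.Perm α) (x : α) : f (f⁻¹ x) = x :=
  Equiv.apply_symm_apply f x

theorem Equiv.Perm.inv_apply_self {α : Type*} (f : Equiv.Perm α) (x : α) : f⁻¹ (f x) = x :=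
  Equiv.symm_apply_apply f x

theorem Equiv.Perm.sameCycle_inv_apply_left {α : Type*} {f : Equiv.Perm α} {x y : α} :
    f.SameCycle (f⁻¹ x) y ↔ f.SameCycle x y :=
  Equiv.Perm.sameCycle_symm_apply_left

theorem Equiv.Perm.sameCycle_inv_apply_right {α : Type*} {f : Equiv.Perm α} {x y : α} :
    f.SameCycle x (f⁻¹ y) ↔ f.SameCycle x y :=
  Equiv.Perm.sameCycle_symm_apply_right

/-! ### The blocked-factor analysis -/

structure BS (A : V → V → Prop) (X Y : Finset V) (a : ℕ) (f : Perm V) : Prop where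
  H : Hyps A X Y a
  harc : ∀ v, A v (f v)
  hblk : ∀ u v, ¬ f.SameCycle u v → ¬ (A u (f v) ∧ A v (f u))

namespace BS
variable {A : V → V → Prop} {X Y : Finset V} {a : ℕ} {f : Perm V}

lemma symm (B : BS A X Y a f) : BS A Y X a f := ⟨B.H.symm, B.harc, B.hblk⟩

lemma fY (B : BS A X Y a f) {v : V} (hv : v ∈ X) : f v ∈ Y :=
  B.H.arc_mem_left (B.harc v) hv

lemma fiY (B : BS A X Y a f) {v : V} (hv : v ∈ X) : f⁻¹ v ∈ Y := by
  have h := B.harc (f⁻¹ v)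
  rw [Equiv.Perm.apply_inv_self] at h
  exact B.H.symm.arc_mem_right h hv

lemma sc_fv (f : Perm V) (v : V) : f.SameCycle v (f v) := ⟨1, by simp⟩

lemma orb_two {u : V} (f : Perm V) (hp : f (f u) = u) :
    ∀ t, f.SameCycle u t → t = u ∨ t = f u := by
  have key : ∀ n : ℕ, (f ^ n) u = u ∨ (f ^ n) u = f u := by
    intro n
    induction n with
    | zero => exact Or.inl (by simp)
    | succ m ih =>
        have hs : (f ^ (m + 1)) u = f ((f ^ m) u) := by
          rw [pow_succ', Equiv.Perm.mul_apply]
        rcases ih with h | h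
        · rw [hs, h]; exact Or.inr rfl
        · rw [hs, h, hp]; exact Or.inl rfl
  intro t ht
  obtain ⟨i, _, he⟩ := sc_exists_pow ht
  exact he ▸ key i

lemma sc_even (B : BS A X Y a f) {u v : V} (hu : u ∈ X) (hv : v ∈ X)
    (h : f.SameCycle u v) : ∃ k, ((f * f) ^ k) u = v := by
  have parity : ∀ j : ℕ, (Even j → (f ^ j) u ∈ X) ∧ (¬ Even j → (f ^ j) u ∈ Y) := by
    intro j
    induction j with
    | zero => exact ⟨fun _ => by simpa using hu, fun h => absurd Even.zero h⟩
    | succ m ih =>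
        have hs : (f ^ (m + 1)) u = f ((f ^ m) u) := by
          rw [pow_succ', Equiv.Perm.mul_apply]
        constructor
        · intro he
          have hm : ¬ Even m := by
            intro h'; rw [Nat.even_add_one] at he; exact he h'
          rw [hs]
          exact B.symm.fY (ih.2 hm)
        · intro he
          have hm : Even m := by
            rw [Nat.even_add_one] at he; push_neg at he; exact he
          rw [hs]
          exact B.fY (ih.1 hm)
  obtain ⟨i, _, he⟩ := sc_exists_pow h
  have hieven : Even i := by
    by_contra ho
    have := (parity i).2 ho
    rw [he] at this
    exact B.H.hdisj v hv this
  obtain ⟨k, rfl⟩ := hieven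
  refine ⟨k, ?_⟩
  have : f * f = f ^ 2 := (sq f).symm
  rw [this, ← pow_mul]
  rw [show 2 * k = k + k by ring]
  exact he

lemma K1a (B : BS A X Y a f) {u : V} (hu : u ∈ X) (hfi : ∀ y ∈ Y, A y u) {y : V}
    (hy : y ∈ Y) (hsc : ¬ f.SameCycle u y) : ¬ A (f⁻¹ u) (f y) := by
  intro hA
  have hb := B.hblk (f⁻¹ u) y (by rwa [Equiv.Perm.sameCycle_inv_apply_left])
  refine hb ⟨hA, ?_⟩
  rw [Equiv.Perm.apply_inv_self]
  exact hfi y hy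

lemma K1aX (B : BS A X Y a f) {u : V} (hu : u ∈ X) (hfi : ∀ y ∈ Y, A y u) {z : V}
    (hz : z ∈ X) (hsc : ¬ f.SameCycle u z) : ¬ A (f⁻¹ u) z := by
  have h := B.K1a hu hfi (B.fiY hz) (by rwa [Equiv.Perm.sameCycle_inv_apply_right])
  rwa [Equiv.Perm.apply_inv_self] at h

lemma K1 (B : BS A X Y a f) {u w : V} (hu : u ∈ X) (hw : w ∈ X) (hne : u ≠ w)
    (hfu : ∀ y ∈ Y, A y u) (hfw : ∀ y ∈ Y, A y w) {z : V} (hz : z ∈ X)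
    (hscu : ¬ f.SameCycle u z) (hscw : ¬ f.SameCycle w z) : ¬ BigV A a z := by
  intro hbz
  have h1 : ¬ A (f⁻¹ u) z := B.K1aX hu hfu hz hscu
  have h2 : ¬ A (f⁻¹ w) z := B.K1aX hw hfw hz hscw
  have := B.H.big_in_unique hbz hz (B.fiY hu) (B.fiY hw) h1 h2
  exact hne (f⁻¹.injective this)

lemma lemA (B : BS A X Y a f) {u w : V} (hu : u ∈ X) (hw : w ∈ X)
    (hsc : ¬ f.SameCycle u w) (hou : ∀ y ∈ Y, A u y) (how : ∀ y ∈ Y, A w y) : False :=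
  B.hblk u w hsc ⟨hou _ (B.fY hw), how _ (B.fY hu)⟩

/-- The core lemma: two big X-vertices in different cycles, with `u` missing the
out-arc to `f w`, are impossible. -/
lemma gap1aux (B : BS A X Y a f) {u w : V} (hu : u ∈ X) (hw : w ∈ X)
    (hbu : BigV A a u) (hbw : BigV A a w) (hnsc : ¬ f.SameCycle u w)
    (hmiss : ¬ A u (f w)) : False := by
  have hufI : ∀ y ∈ Y, A y u := B.H.big_fullI hbu hu (B.fY hw) hmiss
  have huout : ∀ y ∈ Y, y ≠ f w → A u y := B.H.big_out_rest hbu hu (B.fY hw) hmiss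
  have hOmX : ∀ z ∈ X, ¬ f.SameCycle u z → ¬ A (f⁻¹ u) z := fun z hz hsc =>
    B.K1aX hu hufI hz hsc
  have hmY : f⁻¹ u ∈ Y := B.fiY hu
  by_cases hbm : BigV A a (f⁻¹ u)
  · -- case (a1): the predecessor of u is big
    have hAmw : ¬ A (f⁻¹ u) w := hOmX w hw hnsc
    have hmfI : ∀ x ∈ X, A x (f⁻¹ u) := B.H.symm.big_fullI hbm hmY hw hAmw
    have hmout : ∀ x ∈ X, x ≠ w → A (f⁻¹ u) x := B.H.symm.big_out_rest hbm hmY hw hAmw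
    have houts : ∀ z ∈ X, ¬ f.SameCycle u z → z = w := by
      intro z hz hsc
      by_contra hne
      exact hOmX z hz hsc (hmout z hz hne)
    -- find a second big vertex u' in the cycle of u
    have hwne : w ≠ u := by
      intro h
      subst h
      exact hnsc (Equiv.Perm.SameCycle.refl f w)
    have hcard : 2 ≤ ((X.erase u).erase w).card := by
      rw [Finset.card_erase_of_mem (Finset.mem_erase.2 ⟨hwne, hw⟩),
        Finset.card_erase_of_mem hu, B.H.hX]
      have := B.H.ha; omega
    obtain ⟨x₁, hx₁, x₂, hx₂, hne12⟩ := Finset.one_lt_card.1 (by omega : 1 < ((X.erase u).erase w).card)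
    have hx₁X : x₁ ∈ X := Finset.mem_of_mem_erase (Finset.mem_of_mem_erase hx₁)
    have hx₂X : x₂ ∈ X := Finset.mem_of_mem_erase (Finset.mem_of_mem_erase hx₂)
    have hbig12 : BigV A a x₁ ∨ BigV A a x₂ := by
      by_contra hcon
      push_neg at hcon
      exact hne12 (B.H.small_in_unique (hmfI x₁ hx₁X) (hmfI x₂ hx₂X) hcon.1 hcon.2)
    obtain ⟨u', hu'X, hbu', hu'u, hu'w⟩ :
        ∃ u', u' ∈ X ∧ BigV A a u' ∧ u' ≠ u ∧ u' ≠ w := by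
      rcases hbig12 with h | h
      · exact ⟨x₁, hx₁X, h, (Finset.mem_erase.1 (Finset.mem_of_mem_erase hx₁)).1,
          (Finset.mem_erase.1 hx₁).1⟩
      · exact ⟨x₂, hx₂X, h, (Finset.mem_erase.1 (Finset.mem_of_mem_erase hx₂)).1,
          (Finset.mem_erase.1 hx₂).1⟩
    have hscuu' : f.SameCycle u u' := by
      by_contra h
      exact hu'w (houts u' hu'X h)
    have hnscu'w : ¬ f.SameCycle u' w := fun h => hnsc (hscuu'.trans h)
    by_cases hA : A u' (f w)
    · have h2 : ¬ A w (f u') := fun h2 => B.hblk u' w hnscu'w ⟨hA, h2⟩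
      have hwfI : ∀ y ∈ Y, A y w := B.H.big_fullI hbw hw (B.fY hu'X) h2
      exact hAmw (hwfI _ hmY)
    · have hu'fI : ∀ y ∈ Y, A y u' := B.H.big_fullI hbu' hu'X (B.fY hw) hA
      exact B.K1 hu hu'X hu'u.symm hufI hu'fI hw hnsc hnscu'w hbw
  · -- case (a2): the predecessor of u is small
    have hbigy : ∀ y ∈ Y, y ≠ f⁻¹ u → BigV A a y := by
      intro y hy hne
      by_contra hs
      exact hne (B.H.small_in_unique (hufI y hy) (hufI _ hmY) hs hbm)
    have honlyw : ∀ z ∈ X, BigV A a z → ¬ f.SameCycle u z → z = w := by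
      intro z hz hbz hscz
      by_cases hA : A u (f z)
      · have h2 : ¬ A z (f u) := fun h2 => B.hblk u z hscz ⟨hA, h2⟩
        have hzfI : ∀ y ∈ Y, A y z := B.H.big_fullI hbz hz (B.fY hu) h2
        exact absurd (hzfI _ hmY) (hOmX z hz hscz)
      · have := B.H.big_out_unique hbu hu (B.fY hz) (B.fY hw) hA hmiss
        exact f.injective this
    have hbfw : BigV A a (f w) := by
      apply hbigy _ (B.fY hw)
      intro he
      apply hnsc
      have h1 : f (f w) = u := by rw [he, Equiv.Perm.apply_inv_self]
      have h2 : f.SameCycle w (f (f w)) := (sc_fv f w).trans (sc_fv f (f w))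
      rw [h1] at h2
      exact h2.symm
    have hfwO : ∀ x ∈ X, A (f w) x := B.H.symm.big_fullO hbfw (B.fY hw) hu hmiss
    by_cases hp : f (f u) = u
    · -- the cycle of u is a 2-cycle
      have hbigsX : ∀ z ∈ X, BigV A a z → z = u ∨ z = w := by
        intro z hz hbz
        by_cases hscz : f.SameCycle u z
        · rcases orb_two f hp z hscz with h | h
          · exact Or.inl h
          · exact absurd (h ▸ hz) (fun hmem => B.H.hdisj z hmem (h ▸ B.fY hu))
        · exact Or.inr (honlyw z hz hbz hscz)
      have hinsfw : a - 1 ≤ (ins A (f w)).card := B.H.symm.big_ins_card hbfw (B.fY hw)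
      have hinsub : ins A (f w) ⊆ X.erase u := by
        intro z hz
        refine Finset.mem_erase.2 ⟨?_, B.H.symm.ins_subset (B.fY hw) hz⟩
        rintro rfl
        exact hmiss (mem_ins.1 hz)
      have hins_eq : X.erase u ⊆ ins A (f w) := by
        apply Finset.subset_of_eq
        symm
        apply Finset.eq_of_subset_of_card_le hinsub
        rw [Finset.card_erase_of_mem hu, B.H.hX]
        omega
      have hwne : w ≠ u := by
        intro h
        subst h
        exact hnsc (Equiv.Perm.SameCycle.refl f w)
      have hcard2 : 2 ≤ ((X.erase u).erase w).card := by
        rw [Finset.card_erase_of_mem (Finset.mem_erase.2 ⟨hwne, hw⟩),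
          Finset.card_erase_of_mem hu, B.H.hX]
        have := B.H.ha; omega
      obtain ⟨z₁, hz₁, z₂, hz₂, hne12⟩ := Finset.one_lt_card.1 (by omega : 1 < ((X.erase u).erase w).card)
      have hz₁X : z₁ ∈ X := Finset.mem_of_mem_erase (Finset.mem_of_mem_erase hz₁)
      have hz₂X : z₂ ∈ X := Finset.mem_of_mem_erase (Finset.mem_of_mem_erase hz₂)
      have hs₁ : ¬ BigV A a z₁ := by
        intro hb
        rcases hbigsX z₁ hz₁X hb with h | h
        · exact (Finset.mem_erase.1 (Finset.mem_of_mem_erase hz₁)).1 h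
        · exact (Finset.mem_erase.1 hz₁).1 h
      have hs₂ : ¬ BigV A a z₂ := by
        intro hb
        rcases hbigsX z₂ hz₂X hb with h | h
        · exact (Finset.mem_erase.1 (Finset.mem_of_mem_erase hz₂)).1 h
        · exact (Finset.mem_erase.1 hz₂).1 h
      have hA1 : A z₁ (f w) := mem_ins.1 (hins_eq (Finset.mem_of_mem_erase hz₁))
      have hA2 : A z₂ (f w) := mem_ins.1 (hins_eq (Finset.mem_of_mem_erase hz₂))
      exact hne12 (B.H.small_in_unique hA1 hA2 hs₁ hs₂)
    · -- the cycle of u has length ≥ 4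
      have hfuY : f u ∈ Y := B.fY hu
      have hfune : f u ≠ f⁻¹ u := by
        intro he
        apply hp
        have := congrArg f he
        rwa [Equiv.Perm.apply_inv_self] at this
      have hbfu : BigV A a (f u) := hbigy _ hfuY hfune
      have hnsc2 : ¬ f.SameCycle (f u) (f w) := by
        rw [Equiv.Perm.sameCycle_apply_left, Equiv.Perm.sameCycle_apply_right]
        exact hnsc
      have hffwX : f (f w) ∈ X := B.symm.fY (B.fY hw)
      have hAfw : A (f w) (f (f u)) := hfwO _ (B.symm.fY hfuY)
      have hmiss2 : ¬ A (f u) (f (f w)) := fun h => B.hblk (f u) (f w) hnsc2 ⟨h, hAfw⟩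
      have hfufI : ∀ x ∈ X, A x (f u) := B.H.symm.big_fullI hbfu hfuY hffwX hmiss2
      have hsXu : ∀ x₁ ∈ X, ∀ x₂ ∈ X, ¬ BigV A a x₁ → ¬ BigV A a x₂ → x₁ = x₂ :=
        fun x₁ h₁ x₂ h₂ hs₁ hs₂ => B.H.small_in_unique (hfufI x₁ h₁) (hfufI x₂ h₂) hs₁ hs₂
      -- every y in the cycle of u other than f⁻¹ u is "full-in"
      have hyfI : ∀ y ∈ Y, f.SameCycle u y → y ≠ f⁻¹ u → (∀ x ∈ X, A x y) := by
        intro y hy hsc hnem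
        have hnsc3 : ¬ f.SameCycle y (f w) := by
          intro h
          apply hnsc
          rw [← Equiv.Perm.sameCycle_apply_right]
          exact hsc.trans h
        have hAfw3 : A (f w) (f y) := hfwO _ (B.symm.fY hy)
        have hmiss3 : ¬ A y (f (f w)) := fun h => B.hblk y (f w) hnsc3 ⟨h, hAfw3⟩
        exact B.H.symm.big_fullI (hbigy y hy hnem) hy hffwX hmiss3
      -- the Y-part of the cycle of u is {f⁻¹ u, f u}
      have hYC : ∀ y ∈ Y, f.SameCycle u y → y = f⁻¹ u ∨ y = f u := by
        intro y hy hsc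
        by_contra hcon
        push_neg at hcon
        have h1 := hyfI y hy hsc hcon.1
        have h2 : ∀ x ∈ X, A x (f u) := hfufI
        have hscfu : f.SameCycle u (f u) := sc_fv f u
        have hnsc4 : ¬ f.SameCycle y (f w) := by
          intro h
          apply hnsc
          rw [← Equiv.Perm.sameCycle_apply_right]
          exact hsc.trans h
        exact B.symm.K1 hy hfuY hcon.2 h1 h2 (B.fY hw) hnsc4 hnsc2 hbfw
      have hXC : ∀ z ∈ X, f.SameCycle u z → z = u ∨ z = f (f u) := by
        intro z hz hsc
        have h1 : f⁻¹ z ∈ Y := B.fiY hz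
        have h2 : f.SameCycle u (f⁻¹ z) := by
          rwa [Equiv.Perm.sameCycle_inv_apply_right]
        rcases hYC _ h1 h2 with h | h
        · left
          have := congrArg f h
          rwa [Equiv.Perm.apply_inv_self, Equiv.Perm.apply_inv_self] at this
        · right
          have := congrArg f h
          rwa [Equiv.Perm.apply_inv_self] at this
      have hu₂X : f (f u) ∈ X := B.symm.fY hfuY
      have hsmallelse : ∀ z ∈ X, z ≠ u → z ≠ f (f u) → z ≠ w → ¬ BigV A a z := by
        intro z hz h1 h2 h3 hb
        by_cases hsc : f.SameCycle u z
        · rcases hXC z hz hsc with h | h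
          · exact h1 h
          · exact h2 h
        · exact h3 (honlyw z hz hb hsc)
      -- f (f u) is big
      have hbu₂ : BigV A a (f (f u)) := by
        by_contra hs
        -- pick another element outside {u, f (f u), w}; it is small too
        have hcard3 : 1 ≤ (((X.erase u).erase (f (f u))).erase w).card := by
          have hwu : w ≠ u := by
            intro h; subst h; exact hnsc (Equiv.Perm.SameCycle.refl f w)
          have hwu₂ : w ≠ f (f u) := by
            intro h
            apply hnsc
            have : f.SameCycle u (f (f u)) := (sc_fv f u).trans (sc_fv f (f u))
            rw [← h] at this
            exact this
          have hu₂u : f (f u) ≠ u := hp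
          rw [Finset.card_erase_of_mem (Finset.mem_erase.2 ⟨hwu₂, Finset.mem_erase.2 ⟨hwu, hw⟩⟩),
            Finset.card_erase_of_mem (Finset.mem_erase.2 ⟨hu₂u, hu₂X⟩),
            Finset.card_erase_of_mem hu, B.H.hX]
          have := B.H.ha; omega
        obtain ⟨z₀, hz₀⟩ := Finset.card_pos.1 hcard3
        have hz₀X : z₀ ∈ X :=
          Finset.mem_of_mem_erase (Finset.mem_of_mem_erase (Finset.mem_of_mem_erase hz₀))
        have h1 := (Finset.mem_erase.1 hz₀).1
        have h2 := (Finset.mem_erase.1 (Finset.mem_of_mem_erase hz₀)).1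
        have h3 := (Finset.mem_erase.1 (Finset.mem_of_mem_erase (Finset.mem_of_mem_erase hz₀))).1
        have hsz₀ : ¬ BigV A a z₀ := hsmallelse z₀ hz₀X h3 h2 h1
        have := hsXu _ hu₂X _ hz₀X hs hsz₀
        exact h2 this.symm
      have hnscu₂w : ¬ f.SameCycle (f (f u)) w := by
        intro h
        apply hnsc
        exact ((sc_fv f u).trans (sc_fv f (f u))).trans h
      by_cases hA4 : A (f (f u)) (f w)
      · have h5 : ¬ A w (f (f (f u))) := fun h5 => B.hblk (f (f u)) w hnscu₂w ⟨hA4, h5⟩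
        have hwfI : ∀ y ∈ Y, A y w := B.H.big_fullI hbw hw (B.fY hu₂X) h5
        exact hOmX w hw hnsc (hwfI _ hmY)
      · have hu₂fI : ∀ y ∈ Y, A y (f (f u)) := B.H.big_fullI hbu₂ hu₂X (B.fY hw) hA4
        exact B.K1 hu hu₂X (fun h => hp h.symm) hufI hu₂fI hw hnsc hnscu₂w hbw

/-- No two big X-vertices lie in different cycles. -/
lemma gap1 (B : BS A X Y a f) {u w : V} (hu : u ∈ X) (hw : w ∈ X)
    (hbu : BigV A a u) (hbw : BigV A a w) (hnsc : ¬ f.SameCycle u w) : False := by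
  by_cases hA : A u (f w)
  · by_cases hA2 : A w (f u)
    · exact B.hblk u w hnsc ⟨hA, hA2⟩
    · exact B.gap1aux hw hu hbw hbu (fun h => hnsc h.symm) hA2
  · exact B.gap1aux hu hw hbu hbw hnsc hA


end BS

lemma perm_closed_inv (g : Perm V) (T : Finset V) (hcl : ∀ t ∈ T, g t ∈ T) :
    ∀ t ∈ T, g⁻¹ t ∈ T := by
  classical
  have himg : T.image g = T := by
    apply Finset.eq_of_subset_of_card_le
    · intro t ht
      obtain ⟨s, hs, rfl⟩ := Finset.mem_image.1 ht
      exact hcl s hs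
    · rw [Finset.card_image_of_injective _ g.injective]
  intro t ht
  have h2 : t ∈ T.image g := by rw [himg]; exact ht
  obtain ⟨s, hs, hst⟩ := Finset.mem_image.1 h2
  have h3 : g⁻¹ t = s := by rw [← hst, Equiv.Perm.inv_apply_self]
  rw [h3]; exact hs

namespace BS
variable {A : V → V → Prop} {X Y : Finset V} {a : ℕ} {f : Perm V}

lemma cc_aux (B : BS A X Y a f) {u z e₂ : V} (hall : ∀ v, BigV A a v → f.SameCycle u v)
    (hzX : z ∈ X) (hA : A z e₂) (h1 : ¬ f.SameCycle u z) (h3 : ¬ f.SameCycle z e₂) :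
    False := by
  classical
  have he₂Y : e₂ ∈ Y := B.H.arc_mem_left hA hzX
  have hw'X : f⁻¹ e₂ ∈ X := B.symm.fiY he₂Y
  have hne_zw : z ≠ f⁻¹ e₂ := by
    intro h
    apply h3
    have h2 : f z = e₂ := by rw [h, Equiv.Perm.apply_inv_self]
    exact h2 ▸ sc_fv f z
  have hAw' : A (f⁻¹ e₂) e₂ := by
    have := B.harc (f⁻¹ e₂)
    rwa [Equiv.Perm.apply_inv_self] at this
  have hbw' : BigV A a (f⁻¹ e₂) := by
    rcases B.H.hdom z (f⁻¹ e₂) e₂ hne_zw hA hAw' with h | h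
    · exact absurd (hall _ h) h1
    · exact h
  have hsc_uw' : f.SameCycle u (f⁻¹ e₂) := hall _ hbw'
  have hnsc_zw' : ¬ f.SameCycle z (f⁻¹ e₂) := fun h => h1 (hsc_uw'.trans h.symm)
  have hmiss_w' : ¬ A (f⁻¹ e₂) (f z) := by
    intro hh
    apply B.hblk z (f⁻¹ e₂) hnsc_zw'
    rw [Equiv.Perm.apply_inv_self]
    exact ⟨hA, hh⟩
  have hfIw' : ∀ y ∈ Y, A y (f⁻¹ e₂) := B.H.big_fullI hbw' hw'X (B.fY hzX) hmiss_w'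
  have hfzY : f z ∈ Y := B.fY hzX
  have hms_small : ¬ BigV A a (f z) := by
    intro hb
    have := hall _ hb
    rw [Equiv.Perm.sameCycle_apply_right] at this
    exact h1 this
  have huniqY : ∀ y ∈ Y, ¬ f.SameCycle u y → y = f z := by
    intro y hy hsc
    have hsy : ¬ BigV A a y := fun hb => hsc (hall _ hb)
    exact B.H.small_in_unique (hfIw' y hy) (hfIw' _ hfzY) hsy hms_small
  have huniqX : ∀ x ∈ X, ¬ f.SameCycle u x → x = z := by
    intro x hx hsc
    have h4 : ¬ f.SameCycle u (f x) := by
      rw [Equiv.Perm.sameCycle_apply_right]; exact hsc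
    have := huniqY (f x) (B.fY hx) h4
    exact f.injective this
  have hfms : f (f z) = z := by
    have hmem : f (f z) ∈ X := B.symm.fY hfzY
    apply huniqX _ hmem
    intro h
    rw [Equiv.Perm.sameCycle_apply_right, Equiv.Perm.sameCycle_apply_right] at h
    exact h1 h
  have hYbig : ∀ y ∈ Y, y ≠ f z → BigV A a y := by
    intro y hy hne
    by_contra hs
    exact hne (B.H.small_in_unique (hfIw' y hy) (hfIw' _ hfzY) hs hms_small)
  -- the propagation step
  have hstep : ∀ x ∈ X, f.SameCycle u x → (∀ y ∈ Y, A y x) →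
      ((∀ y ∈ Y, A y (f⁻¹ (f⁻¹ x))) ∧ ¬ A (f⁻¹ x) z ∧ ¬ A (f⁻¹ (f⁻¹ x)) (f z)) := by
    intro x hx hscx hQ
    have hy' : f⁻¹ x ∈ Y := B.fiY hx
    have hsc1 : ¬ f.SameCycle (f⁻¹ x) (f z) := by
      intro h
      have h5 : f.SameCycle u (f⁻¹ x) := Equiv.Perm.sameCycle_inv_apply_right.2 hscx
      have h6 := h5.trans h
      rw [Equiv.Perm.sameCycle_apply_right] at h6
      exact h1 h6
    have hAmsx : A (f z) x := hQ _ hfzY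
    have h2' : A (f z) (f (f⁻¹ x)) := by
      rw [Equiv.Perm.apply_inv_self]; exact hAmsx
    have hm1 : ¬ A (f⁻¹ x) (f (f z)) := fun hh => B.hblk (f⁻¹ x) (f z) hsc1 ⟨hh, h2'⟩
    rw [hfms] at hm1
    have hy'ne : f⁻¹ x ≠ f z := by
      intro h
      have h5 : x = f (f z) := by rw [← h, Equiv.Perm.apply_inv_self]
      rw [hfms] at h5
      exact h1 (h5 ▸ hscx)
    have hby' : BigV A a (f⁻¹ x) := hYbig _ hy' hy'ne
    have hfIy' : ∀ x' ∈ X, A x' (f⁻¹ x) := B.H.symm.big_fullI hby' hy' hzX hm1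
    have hxpX : f⁻¹ (f⁻¹ x) ∈ X := B.symm.fiY hy'
    have hscxp : f.SameCycle u (f⁻¹ (f⁻¹ x)) := by
      rw [Equiv.Perm.sameCycle_inv_apply_right, Equiv.Perm.sameCycle_inv_apply_right]
      exact hscx
    have hnsc5 : ¬ f.SameCycle z (f⁻¹ (f⁻¹ x)) := fun h => h1 (hscxp.trans h.symm)
    have hAz : A z (f (f⁻¹ (f⁻¹ x))) := by
      rw [Equiv.Perm.apply_inv_self]; exact hfIy' z hzX
    have hm2 : ¬ A (f⁻¹ (f⁻¹ x)) (f z) := fun hh => B.hblk z (f⁻¹ (f⁻¹ x)) hnsc5 ⟨hAz, hh⟩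
    have hAxp : A (f⁻¹ (f⁻¹ x)) (f⁻¹ x) := by
      have := B.harc (f⁻¹ (f⁻¹ x))
      rwa [Equiv.Perm.apply_inv_self] at this
    have hnexp : z ≠ f⁻¹ (f⁻¹ x) := by
      intro h
      exact hnsc5 (h ▸ Equiv.Perm.SameCycle.refl f z)
    have hbxp : BigV A a (f⁻¹ (f⁻¹ x)) := by
      rcases B.H.hdom z _ (f⁻¹ x) hnexp (hfIy' z hzX) hAxp with h | h
      · exact absurd (hall _ h) h1
      · exact h
    have hQxp : ∀ y ∈ Y, A y (f⁻¹ (f⁻¹ x)) := B.H.big_fullI hbxp hxpX (B.fY hzX) hm2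
    exact ⟨hQxp, hm1, hm2⟩
  -- closure
  set T : Finset V := X.filter (fun x => f.SameCycle u x ∧ ∀ y ∈ Y, A y x) with hT
  have hTmem : ∀ x, x ∈ T ↔ (x ∈ X ∧ f.SameCycle u x ∧ ∀ y ∈ Y, A y x) := by
    intro x; simp [hT, Finset.mem_filter]
  have hTcl : ∀ t ∈ T, (f⁻¹ * f⁻¹ : Perm V) t ∈ T := by
    intro t ht
    obtain ⟨htX, htsc, htQ⟩ := (hTmem t).1 ht
    obtain ⟨hQ', _, _⟩ := hstep t htX htsc htQ
    refine (hTmem _).2 ⟨?_, ?_, ?_⟩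
    · rw [Equiv.Perm.mul_apply]; exact B.symm.fiY (B.fiY htX)
    · rw [Equiv.Perm.mul_apply, Equiv.Perm.sameCycle_inv_apply_right,
        Equiv.Perm.sameCycle_inv_apply_right]
      exact htsc
    · rw [Equiv.Perm.mul_apply]; exact hQ'
  have hffcl : ∀ t ∈ T, (f * f) t ∈ T := by
    have h5 := perm_closed_inv (f⁻¹ * f⁻¹) T hTcl
    intro t ht
    have h6 := h5 t ht
    rw [show (f⁻¹ * f⁻¹ : Perm V)⁻¹ = f * f by rw [mul_inv_rev, inv_inv]] at h6
    exact h6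
  have hw'T : f⁻¹ e₂ ∈ T := (hTmem _).2 ⟨hw'X, hsc_uw', hfIw'⟩
  have hTpow : ∀ k : ℕ, ((f * f) ^ k) (f⁻¹ e₂) ∈ T := by
    intro k
    induction k with
    | zero => simpa using hw'T
    | succ m ih =>
        have hs : ((f * f) ^ (m + 1)) (f⁻¹ e₂) = (f * f) (((f * f) ^ m) (f⁻¹ e₂)) := by
          rw [pow_succ', Equiv.Perm.mul_apply]
        rw [hs]
        exact hffcl _ ih
  have hTall : ∀ x ∈ X, f.SameCycle u x → x ∈ T := by
    intro x hx hscx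
    obtain ⟨k, hk⟩ := B.sc_even hw'X hx (hsc_uw'.symm.trans hscx)
    rw [← hk]
    exact hTpow k
  have hQall : ∀ x ∈ X, f.SameCycle u x → ∀ y ∈ Y, A y x := by
    intro x hx hscx
    exact ((hTmem x).1 (hTall x hx hscx)).2.2
  have hIz : ∀ y ∈ Y, f.SameCycle u y → ¬ A y z := by
    intro y hy hsc
    have hxX : f y ∈ X := B.symm.fY hy
    have hscx : f.SameCycle u (f y) := Equiv.Perm.sameCycle_apply_right.2 hsc
    obtain ⟨_, hm1, _⟩ := hstep (f y) hxX hscx (hQall _ hxX hscx)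
    rwa [Equiv.Perm.inv_apply_self] at hm1
  have hIms : ∀ x ∈ X, f.SameCycle u x → ¬ A x (f z) := by
    intro x hx hsc
    have hxX : f (f x) ∈ X := B.symm.fY (B.fY hx)
    have hscx : f.SameCycle u (f (f x)) := by
      rw [Equiv.Perm.sameCycle_apply_right, Equiv.Perm.sameCycle_apply_right]
      exact hsc
    obtain ⟨_, _, hm2⟩ := hstep (f (f x)) hxX hscx (hQall _ hxX hscx)
    rwa [Equiv.Perm.inv_apply_self, Equiv.Perm.inv_apply_self] at hm2
  -- contradиction with strong connectivity
  have hune1 : u ≠ z := fun h => h1 (h ▸ Equiv.Perm.SameCycle.refl f u)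
  have hune2 : u ≠ f z := by
    intro h
    apply h1
    have h5 : f.SameCycle u (f z) := h ▸ Equiv.Perm.SameCycle.refl f u
    rwa [Equiv.Perm.sameCycle_apply_right] at h5
  set S : Finset V := (univ.erase z).erase (f z) with hSdef
  have hSne : S.Nonempty := ⟨u, Finset.mem_erase.2 ⟨hune2, Finset.mem_erase.2 ⟨hune1, Finset.mem_univ u⟩⟩⟩
  have hSneq : S ≠ univ := by
    intro h
    have : z ∈ S := h ▸ Finset.mem_univ z
    exact (Finset.mem_erase.1 (Finset.mem_of_mem_erase this)).1 rfl
  obtain ⟨p, hpS, q, hqS, hApq⟩ := B.H.hstr S hSne hSneq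
  have hq : q = f z ∨ q = z := by
    by_contra hcon
    push_neg at hcon
    exact hqS (Finset.mem_erase.2 ⟨hcon.1, Finset.mem_erase.2 ⟨hcon.2, Finset.mem_univ q⟩⟩)
  have hpne1 : p ≠ f z := (Finset.mem_erase.1 hpS).1
  have hpne2 : p ≠ z := (Finset.mem_erase.1 (Finset.mem_of_mem_erase hpS)).1
  rcases hq with hq | hq
  · -- arc into f z
    subst hq
    have hpX : p ∈ X := B.H.arc_mem_right hApq hfzY
    have hscp : f.SameCycle u p := by
      by_contra h
      exact hpne2 (huniqX p hpX h)
    exact hIms p hpX hscp hApq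
  · -- arc into z
    subst hq
    have hpY : p ∈ Y := B.H.symm.arc_mem_right hApq hzX
    have hscp : f.SameCycle u p := by
      by_contra h
      exact hpne1 (huniqY p hpY h)
    exact hIz p hpY hscp hApq

lemma cc_contra (B : BS A X Y a f) {u : V} (hall : ∀ v, BigV A a v → f.SameCycle u v)
    (hex : ∃ t, ¬ f.SameCycle u t) : False := by
  classical
  obtain ⟨s₀, hs₀⟩ := hex
  set S : Finset V := univ.filter (fun t => f.SameCycle s₀ t) with hS
  have hSne : S.Nonempty :=
    ⟨s₀, by rw [hS, Finset.mem_filter]; exact ⟨Finset.mem_univ _, Equiv.Perm.SameCycle.refl f s₀⟩⟩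
  have hSneq : S ≠ univ := by
    intro h
    have h2 : u ∈ S := h ▸ Finset.mem_univ u
    rw [hS, Finset.mem_filter] at h2
    exact hs₀ h2.2.symm
  obtain ⟨z, hzS, e₂, he₂, hA⟩ := B.H.hstr S hSne hSneq
  have hscz : f.SameCycle s₀ z := by
    rw [hS, Finset.mem_filter] at hzS
    exact hzS.2
  have h1 : ¬ f.SameCycle u z := fun h => hs₀ (h.trans hscz.symm)
  have h3 : ¬ f.SameCycle z e₂ := by
    intro h
    apply he₂
    rw [hS, Finset.mem_filter]
    exact ⟨Finset.mem_univ e₂, hscz.trans h⟩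
  rcases B.H.hunion z with hz | hz
  · exact B.cc_aux hall hz hA h1 h3
  · exact B.symm.cc_aux hall hz hA h1 h3


lemma big_opposite (B : BS A X Y a f) {b : V} (hb : BigV A a b) (hbX : b ∈ X) :
    ∃ y ∈ Y, BigV A a y := by
  have hcard : a - 1 ≤ (ins A b).card := B.H.big_ins_card hb hbX
  have h2 : 1 < (ins A b).card := by have := B.H.ha; omega
  obtain ⟨y₁, hy₁, y₂, hy₂, hne⟩ := Finset.one_lt_card.1 h2
  by_cases h : BigV A a y₁
  · exact ⟨y₁, B.H.ins_subset hbX hy₁, h⟩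
  · by_cases h' : BigV A a y₂
    · exact ⟨y₂, B.H.ins_subset hbX hy₂, h'⟩
    · exact absurd (B.H.small_in_unique (mem_ins.1 hy₁) (mem_ins.1 hy₂) h h') hne

open scoped Classical in
lemma smalls_le_two (B : BS A X Y a f) {b : V} (hb : BigV A a b) (hbX : b ∈ X) :
    (Y.filter (fun y => ¬ BigV A a y)).card ≤ 2 := by
  classical
  by_contra hcon
  push_neg at hcon
  obtain ⟨y₁, hy₁, y₂, hy₂, y₃, hy₃, h12, h13, h23⟩ := Finset.two_lt_card.1 hcon
  rw [Finset.mem_filter] at hy₁ hy₂ hy₃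
  have hins : a - 1 ≤ (ins A b).card := B.H.big_ins_card hb hbX
  have hkey : ∀ p q : V, p ≠ q → ¬ BigV A a p → ¬ BigV A a q →
      p ∉ ins A b ∨ q ∉ ins A b := by
    intro p q hpq hsp hsq
    by_contra hc
    push_neg at hc
    exact hpq (B.H.small_in_unique (mem_ins.1 hc.1) (mem_ins.1 hc.2) hsp hsq)
  have hout : ∀ p q : V, p ∈ Y → q ∈ Y → p ≠ q → p ∉ ins A b → q ∉ ins A b → False := by
    intro p q hpY hqY hpq hp hq
    have hsub : ins A b ⊆ (Y.erase p).erase q := by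
      intro t ht
      refine Finset.mem_erase.2 ⟨?_, Finset.mem_erase.2 ⟨?_, B.H.ins_subset hbX ht⟩⟩
      · rintro rfl; exact hq ht
      · rintro rfl; exact hp ht
    have hle := Finset.card_le_card hsub
    rw [Finset.card_erase_of_mem (Finset.mem_erase.2 ⟨fun h => hpq h.symm, hqY⟩),
      Finset.card_erase_of_mem hpY, B.H.hY] at hle
    have := B.H.ha
    omega
  rcases hkey y₁ y₂ h12 hy₁.2 hy₂.2 with h | h
  · rcases hkey y₂ y₃ h23 hy₂.2 hy₃.2 with h' | h'
    · exact hout y₁ y₂ hy₁.1 hy₂.1 h12 h h'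
    · exact hout y₁ y₃ hy₁.1 hy₃.1 h13 h h'
  · rcases hkey y₁ y₃ h13 hy₁.2 hy₃.2 with h' | h'
    · exact hout y₂ y₁ hy₂.1 hy₁.1 (fun hh => h12 hh.symm) h h'
    · exact hout y₂ y₃ hy₂.1 hy₃.1 h23 h h'

lemma alt_card (B : BS A X Y a f) (v : V) :
    (X.filter (fun x => f.SameCycle v x)).card = (Y.filter (fun y => f.SameCycle v y)).card := by
  classical
  have himg : (X.filter (fun x => f.SameCycle v x)).image f
      = Y.filter (fun y => f.SameCycle v y) := by
    ext y
    constructor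
    · intro hy
      obtain ⟨x, hx, rfl⟩ := Finset.mem_image.1 hy
      rw [Finset.mem_filter] at hx
      rw [Finset.mem_filter]
      exact ⟨B.fY hx.1, Equiv.Perm.sameCycle_apply_right.2 hx.2⟩
    · intro hy
      rw [Finset.mem_filter] at hy
      refine Finset.mem_image.2 ⟨f⁻¹ y, ?_, Equiv.Perm.apply_inv_self f y⟩
      rw [Finset.mem_filter]
      exact ⟨B.symm.fiY hy.1, Equiv.Perm.sameCycle_inv_apply_right.2 hy.2⟩
  rw [← himg, Finset.card_image_of_injective _ f.injective]

lemma extract (B : BS A X Y a f) {v : V} (hv : v ∈ X)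
    (hc : (X.filter (fun x => f.SameCycle v x)).card = 2) :
    f (f v) ≠ v ∧ f (f (f (f v))) = v ∧
      X.filter (fun x => f.SameCycle v x) = {v, f (f v)} ∧
      Y.filter (fun y => f.SameCycle v y) = {f v, f (f (f v))} := by
  classical
  have hffX : f (f v) ∈ X := B.symm.fY (B.fY hv)
  have hffsc : f.SameCycle v (f (f v)) := (sc_fv f v).trans (sc_fv f (f v))
  have hne : f (f v) ≠ v := by
    intro hp
    have hsub : X.filter (fun x => f.SameCycle v x) ⊆ {v} := by
      intro x hx
      rw [Finset.mem_filter] at hx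
      rcases orb_two f hp x hx.2 with h | h
      · exact Finset.mem_singleton.2 h
      · exact absurd (h ▸ hx.1) (fun hm => B.H.hdisj x hm (h ▸ B.fY hv))
    have := Finset.card_le_card hsub
    rw [Finset.card_singleton] at this
    omega
  have hpairX : ({v, f (f v)} : Finset V) = X.filter (fun x => f.SameCycle v x) := by
    apply Finset.eq_of_subset_of_card_le
    · intro x hx
      rcases Finset.mem_insert.1 hx with h | h
      · rw [h]; exact Finset.mem_filter.2 ⟨hv, Equiv.Perm.SameCycle.refl f v⟩
      · rw [Finset.mem_singleton.1 h]
        exact Finset.mem_filter.2 ⟨hffX, hffsc⟩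
    · rw [hc, Finset.card_insert_of_notMem (fun h => hne (Finset.mem_singleton.1 h).symm),
        Finset.card_singleton]
  have h4X : f (f (f (f v))) ∈ X := B.symm.fY (B.fY hffX)
  have h4sc : f.SameCycle v (f (f (f (f v)))) :=
    hffsc.trans ((sc_fv f (f (f v))).trans (sc_fv f (f (f (f v)))))
  have h4mem : f (f (f (f v))) ∈ ({v, f (f v)} : Finset V) := by
    rw [hpairX]
    exact Finset.mem_filter.2 ⟨h4X, h4sc⟩
  have h4 : f (f (f (f v))) = v := by
    rcases Finset.mem_insert.1 h4mem with h | h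
    · exact h
    · exfalso
      have h5 := Finset.mem_singleton.1 h
      have h6 : f (f v) = v := f.injective (f.injective h5)
      exact hne h6
  refine ⟨hne, h4, hpairX.symm, ?_⟩
  have hcY : (Y.filter (fun y => f.SameCycle v y)).card = 2 := by
    rw [← B.alt_card v, hc]
  have hfvY : f v ∈ Y := B.fY hv
  have hf3Y : f (f (f v)) ∈ Y := B.fY hffX
  have hneY : f v ≠ f (f (f v)) := by
    intro h
    exact hne (f.injective h.symm)
  have hsubY : ({f v, f (f (f v))} : Finset V) ⊆ Y.filter (fun y => f.SameCycle v y) := by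
    intro y hy
    rcases Finset.mem_insert.1 hy with h | h
    · rw [h]; exact Finset.mem_filter.2 ⟨hfvY, sc_fv f v⟩
    · rw [Finset.mem_singleton.1 h]
      exact Finset.mem_filter.2 ⟨hf3Y, hffsc.trans (sc_fv f (f (f v)))⟩
  symm
  apply Finset.eq_of_subset_of_card_le hsubY
  rw [hcY, Finset.card_insert_of_notMem (fun h => hneY (Finset.mem_singleton.1 h)),
    Finset.card_singleton]


open scoped Classical in
lemma blocked_main (B : BS A X Y a f) (hur : ∃ v w : V, ¬ f.SameCycle v w) :
    ∃ e : V ≃ Fin 8, ∀ u v, A u v ↔ D8 (e u) (e v) := by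
  classical
  obtain ⟨v₁, w₁, hvw⟩ := hur
  have hbig : ∃ b, BigV A a b := by
    set S : Finset V := univ.filter (fun t => f.SameCycle v₁ t) with hS
    have hSne : S.Nonempty :=
      ⟨v₁, by rw [hS, Finset.mem_filter]; exact ⟨Finset.mem_univ _, Equiv.Perm.SameCycle.refl f v₁⟩⟩
    have hSneq : S ≠ univ := by
      intro h
      have h2 : w₁ ∈ S := h ▸ Finset.mem_univ w₁
      rw [hS, Finset.mem_filter] at h2
      exact hvw h2.2
    obtain ⟨z, hzS, e₂, he₂, hA⟩ := B.H.hstr S hSne hSneq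
    have hscz : f.SameCycle v₁ z := by rw [hS, Finset.mem_filter] at hzS; exact hzS.2
    have h3 : ¬ f.SameCycle z e₂ := by
      intro h
      exact he₂ (by rw [hS, Finset.mem_filter]; exact ⟨Finset.mem_univ _, hscz.trans h⟩)
    have hne : z ≠ f⁻¹ e₂ := by
      intro h
      apply h3
      have h4 : f z = e₂ := by rw [h, Equiv.Perm.apply_inv_self]
      exact h4 ▸ sc_fv f z
    have hAe : A (f⁻¹ e₂) e₂ := by
      have := B.harc (f⁻¹ e₂); rwa [Equiv.Perm.apply_inv_self] at this
    rcases B.H.hdom z (f⁻¹ e₂) e₂ hne hA hAe with h | h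
    · exact ⟨z, h⟩
    · exact ⟨_, h⟩
  have hbigX : ∃ x, x ∈ X ∧ BigV A a x := by
    obtain ⟨b, hb⟩ := hbig
    rcases B.H.hunion b with h | h
    · exact ⟨b, h, hb⟩
    · obtain ⟨x, hx, hbx⟩ := B.symm.big_opposite hb h
      exact ⟨x, hx, hbx⟩
  obtain ⟨ux, huxX, hbux⟩ := hbigX
  obtain ⟨uy, huyY, hbuy⟩ := B.big_opposite hbux huxX
  have hallX : ∀ x, x ∈ X → BigV A a x → f.SameCycle ux x := by
    intro x hx hbx
    by_contra h
    exact B.gap1 huxX hx hbux hbx h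
  have hallY : ∀ y, y ∈ Y → BigV A a y → f.SameCycle uy y := by
    intro y hy hby
    by_contra h
    exact B.symm.gap1 huyY hy hbuy hby h
  have hsplit : ¬ f.SameCycle ux uy := by
    intro h
    have hall : ∀ v, BigV A a v → f.SameCycle ux v := by
      intro v hbv
      rcases B.H.hunion v with hv | hv
      · exact hallX v hv hbv
      · exact h.trans (hallY v hv hbv)
    apply B.cc_contra hall
    by_contra hc
    push_neg at hc
    exact hvw ((hc v₁).symm.trans (hc w₁))
  -- counting
  have hsX : (X.filter (fun x => ¬ BigV A a x)).card ≤ 2 := B.symm.smalls_le_two hbuy huyY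
  have hsY : (Y.filter (fun y => ¬ BigV A a y)).card ≤ 2 := B.smalls_le_two hbux huxX
  have hfcX := Finset.card_filter_add_card_filter_not (s := X) (p := fun x => BigV A a x)
  have hfcY := Finset.card_filter_add_card_filter_not (s := Y) (p := fun y => BigV A a y)
  rw [B.H.hX] at hfcX
  rw [B.H.hY] at hfcY
  have hbXc : a - 2 ≤ (X.filter (fun x => BigV A a x)).card := by omega
  have hbYc : a - 2 ≤ (Y.filter (fun y => BigV A a y)).card := by omega
  have hsub1 : X.filter (fun x => BigV A a x) ⊆ X.filter (fun x => f.SameCycle ux x) := by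
    intro x hx
    rw [Finset.mem_filter] at hx ⊢
    exact ⟨hx.1, hallX x hx.1 hx.2⟩
  have hsub2 : Y.filter (fun y => BigV A a y) ⊆ Y.filter (fun y => f.SameCycle uy y) := by
    intro y hy
    rw [Finset.mem_filter] at hy ⊢
    exact ⟨hy.1, hallY y hy.1 hy.2⟩
  have hc1 : a - 2 ≤ (X.filter (fun x => f.SameCycle ux x)).card :=
    le_trans hbXc (Finset.card_le_card hsub1)
  have hc2Y : a - 2 ≤ (Y.filter (fun y => f.SameCycle uy y)).card :=
    le_trans hbYc (Finset.card_le_card hsub2)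
  have haltuy := B.alt_card uy
  have haltux := B.alt_card ux
  have hc2 : a - 2 ≤ (X.filter (fun x => f.SameCycle uy x)).card := by omega
  have hdisj12 : Disjoint (X.filter (fun x => f.SameCycle ux x))
      (X.filter (fun x => f.SameCycle uy x)) := by
    rw [Finset.disjoint_left]
    intro t ht1 ht2
    rw [Finset.mem_filter] at ht1 ht2
    exact hsplit (ht1.2.trans ht2.2.symm)
  have hsumle : (X.filter (fun x => f.SameCycle ux x)).card
      + (X.filter (fun x => f.SameCycle uy x)).card ≤ a := by
    rw [← Finset.card_union_of_disjoint hdisj12, ← B.H.hX]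
    apply Finset.card_le_card
    intro t ht
    rcases Finset.mem_union.1 ht with h | h
    · exact (Finset.mem_filter.1 h).1
    · exact (Finset.mem_filter.1 h).1
  have ha4 : a = 4 := by have := B.H.ha; omega
  have hcux : (X.filter (fun x => f.SameCycle ux x)).card = 2 := by omega
  have hcuy : (X.filter (fun x => f.SameCycle uy x)).card = 2 := by omega
  have hcuyY : (Y.filter (fun y => f.SameCycle uy y)).card = 2 := by omega
  have hcuxY : (Y.filter (fun y => f.SameCycle ux y)).card = 2 := by omega
  have hbigeqX : X.filter (fun x => BigV A a x) = X.filter (fun x => f.SameCycle ux x) :=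
    Finset.eq_of_subset_of_card_le hsub1 (by omega)
  have hbigeqY : Y.filter (fun y => BigV A a y) = Y.filter (fun y => f.SameCycle uy y) :=
    Finset.eq_of_subset_of_card_le hsub2 (by omega)
  have hXsplit : ∀ x ∈ X, f.SameCycle ux x ∨ f.SameCycle uy x := by
    intro x hx
    by_contra hcon
    push_neg at hcon
    have hnm : x ∉ (X.filter (fun x => f.SameCycle ux x)) ∪ (X.filter (fun x => f.SameCycle uy x)) := by
      intro h
      rcases Finset.mem_union.1 h with h | h
      · exact hcon.1 (Finset.mem_filter.1 h).2
      · exact hcon.2 (Finset.mem_filter.1 h).2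
    have hsub3 : insert x ((X.filter (fun x => f.SameCycle ux x))
        ∪ (X.filter (fun x => f.SameCycle uy x))) ⊆ X := by
      intro t ht
      rcases Finset.mem_insert.1 ht with h | h
      · exact h ▸ hx
      · rcases Finset.mem_union.1 h with h | h
        · exact (Finset.mem_filter.1 h).1
        · exact (Finset.mem_filter.1 h).1
    have := Finset.card_le_card hsub3
    rw [Finset.card_insert_of_notMem hnm, Finset.card_union_of_disjoint hdisj12, B.H.hX] at this
    omega
  have hdisj12Y : Disjoint (Y.filter (fun y => f.SameCycle uy y))
      (Y.filter (fun y => f.SameCycle ux y)) := by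
    rw [Finset.disjoint_left]
    intro t ht1 ht2
    rw [Finset.mem_filter] at ht1 ht2
    exact hsplit (ht2.2.trans ht1.2.symm)
  have hYsplit : ∀ y ∈ Y, f.SameCycle uy y ∨ f.SameCycle ux y := by
    intro y hy
    by_contra hcon
    push_neg at hcon
    have hnm : y ∉ (Y.filter (fun t => f.SameCycle uy t)) ∪ (Y.filter (fun t => f.SameCycle ux t)) := by
      intro h
      rcases Finset.mem_union.1 h with h | h
      · exact hcon.1 (Finset.mem_filter.1 h).2
      · exact hcon.2 (Finset.mem_filter.1 h).2
    have hsub3 : insert y ((Y.filter (fun t => f.SameCycle uy t))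
        ∪ (Y.filter (fun t => f.SameCycle ux t))) ⊆ Y := by
      intro t ht
      rcases Finset.mem_insert.1 ht with h | h
      · exact h ▸ hy
      · rcases Finset.mem_union.1 h with h | h
        · exact (Finset.mem_filter.1 h).1
        · exact (Finset.mem_filter.1 h).1
    have := Finset.card_le_card hsub3
    rw [Finset.card_insert_of_notMem hnm, Finset.card_union_of_disjoint hdisj12Y, B.H.hY] at this
    omega
  have hbigcyc : ∀ x ∈ X, f.SameCycle ux x → BigV A a x := by
    intro x hx h
    have h2 : x ∈ X.filter (fun x => f.SameCycle ux x) := Finset.mem_filter.2 ⟨hx, h⟩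
    rw [← hbigeqX] at h2
    exact (Finset.mem_filter.1 h2).2
  have hsmallcyc : ∀ x ∈ X, f.SameCycle uy x → ¬ BigV A a x := by
    intro x hx h hb
    exact hsplit ((hallX x hx hb).trans h.symm)
  have hbigcycY : ∀ y ∈ Y, f.SameCycle uy y → BigV A a y := by
    intro y hy h
    have h2 : y ∈ Y.filter (fun t => f.SameCycle uy t) := Finset.mem_filter.2 ⟨hy, h⟩
    rw [← hbigeqY] at h2
    exact (Finset.mem_filter.1 h2).2
  have hsmallcycY : ∀ y ∈ Y, f.SameCycle ux y → ¬ BigV A a y := by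
    intro y hy h hb
    exact hsplit (h.trans (hallY y hy hb).symm)
  obtain ⟨hne_x, hf4x, hXfilux, hYfilux⟩ := B.extract huxX hcux
  obtain ⟨hne_y, hf4y, hYfiluy, hXfiluy⟩ := B.symm.extract huyY hcuyY
  -- names
  set xc := ux with hxc
  set yc := f xc with hyc
  set xd := f yc with hxd
  set yd := f xd with hyd
  set ya := uy with hya
  set xb := f ya with hxb
  set yb := f xb with hyb
  set xa := f yb with hxa
  -- memberships
  have hycY : yc ∈ Y := by rw [hyc]; exact B.fY huxX
  have hxdX : xd ∈ X := by rw [hxd]; exact B.symm.fY hycY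
  have hydY : yd ∈ Y := by rw [hyd]; exact B.fY hxdX
  have hxbX : xb ∈ X := by rw [hxb]; exact B.symm.fY huyY
  have hybY : yb ∈ Y := by rw [hyb]; exact B.fY hxbX
  have hxaX : xa ∈ X := by rw [hxa]; exact B.symm.fY hybY
  -- same-cycle facts
  have hscyc : f.SameCycle xc yc := hyc ▸ sc_fv f xc
  have hscxd : f.SameCycle xc xd := hscyc.trans (hxd ▸ sc_fv f yc)
  have hscyd : f.SameCycle xc yd := hscxd.trans (hyd ▸ sc_fv f xd)
  have hscxb : f.SameCycle ya xb := hxb ▸ sc_fv f ya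
  have hscyb : f.SameCycle ya yb := hscxb.trans (hyb ▸ sc_fv f xb)
  have hscxa : f.SameCycle ya xa := hscyb.trans (hxa ▸ sc_fv f yb)
  -- big/small per vertex
  have hbxc : BigV A a xc := hbux
  have hbxd : BigV A a xd := hbigcyc xd hxdX hscxd
  have hbya : BigV A a ya := hbuy
  have hbyb : BigV A a yb := hbigcycY yb hybY hscyb
  have hsyc : ¬ BigV A a yc := hsmallcycY yc hycY hscyc
  have hsyd : ¬ BigV A a yd := hsmallcycY yd hydY hscyd
  have hsxa : ¬ BigV A a xa := hsmallcyc xa hxaX hscxa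
  have hsxb : ¬ BigV A a xb := hsmallcyc xb hxbX hscxb
  -- distinctions
  have hne_ycyd : yc ≠ yd := by
    intro h
    apply hne_x
    have h2 := congrArg f h
    rw [← hxd, hf4x] at h2
    exact h2
  have hne_xaxb : xa ≠ xb := by
    intro h
    apply hne_y
    have h2 := congrArg f h
    rw [hf4y, ← hyb] at h2
    exact h2.symm
  -- full-out for big vertices
  have hxcO : ∀ y ∈ Y, A xc y := by
    by_contra hcon
    push_neg at hcon
    obtain ⟨y₀, hy₀, hm⟩ := hcon
    have hfI := B.H.big_fullI hbxc huxX hy₀ hm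
    exact hne_ycyd (B.H.small_in_unique (hfI yc hycY) (hfI yd hydY) hsyc hsyd)
  have hxdO : ∀ y ∈ Y, A xd y := by
    by_contra hcon
    push_neg at hcon
    obtain ⟨y₀, hy₀, hm⟩ := hcon
    have hfI := B.H.big_fullI hbxd hxdX hy₀ hm
    exact hne_ycyd (B.H.small_in_unique (hfI yc hycY) (hfI yd hydY) hsyc hsyd)
  have hyaO : ∀ x ∈ X, A ya x := by
    by_contra hcon
    push_neg at hcon
    obtain ⟨x₀, hx₀, hm⟩ := hcon
    have hfI := B.H.symm.big_fullI hbya huyY hx₀ hm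
    exact hne_xaxb (B.H.small_in_unique (hfI xa hxaX) (hfI xb hxbX) hsxa hsxb)
  have hybO : ∀ x ∈ X, A yb x := by
    by_contra hcon
    push_neg at hcon
    obtain ⟨x₀, hx₀, hm⟩ := hcon
    have hfI := B.H.symm.big_fullI hbyb hybY hx₀ hm
    exact hne_xaxb (B.H.small_in_unique (hfI xa hxaX) (hfI xb hxbX) hsxa hsxb)
  -- enumerations
  have hYenum : ∀ y ∈ Y, y = ya ∨ y = yb ∨ y = yc ∨ y = yd := by
    intro y hy
    rcases hYsplit y hy with h | h
    · have h2 : y ∈ Y.filter (fun t => f.SameCycle uy t) := Finset.mem_filter.2 ⟨hy, h⟩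
      rw [hYfiluy] at h2
      rcases Finset.mem_insert.1 h2 with h3 | h3
      · exact Or.inl h3
      · exact Or.inr (Or.inl (Finset.mem_singleton.1 h3))
    · have h2 : y ∈ Y.filter (fun t => f.SameCycle ux t) := Finset.mem_filter.2 ⟨hy, h⟩
      rw [hYfilux] at h2
      rcases Finset.mem_insert.1 h2 with h3 | h3
      · exact Or.inr (Or.inr (Or.inl h3))
      · exact Or.inr (Or.inr (Or.inr (Finset.mem_singleton.1 h3)))
  have hXenum : ∀ x ∈ X, x = xa ∨ x = xb ∨ x = xc ∨ x = xd := by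
    intro x hx
    rcases hXsplit x hx with h | h
    · have h2 : x ∈ X.filter (fun t => f.SameCycle ux t) := Finset.mem_filter.2 ⟨hx, h⟩
      rw [hXfilux] at h2
      rcases Finset.mem_insert.1 h2 with h3 | h3
      · exact Or.inr (Or.inr (Or.inl h3))
      · exact Or.inr (Or.inr (Or.inr (Finset.mem_singleton.1 h3)))
    · have h2 : x ∈ X.filter (fun t => f.SameCycle uy t) := Finset.mem_filter.2 ⟨hx, h⟩
      rw [hXfiluy] at h2
      rcases Finset.mem_insert.1 h2 with h3 | h3
      · exact Or.inr (Or.inl h3)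
      · exact Or.inl (Finset.mem_singleton.1 h3)
  -- factor arcs
  have hAxcyc : A xc yc := by rw [hyc]; exact B.harc xc
  have hAxdyd : A xd yd := by rw [hyd]; exact B.harc xd
  have hAycxd : A yc xd := by rw [hxd]; exact B.harc yc
  have hAydxc : A yd xc := by rw [← hf4x]; exact B.harc yd
  have hAyaxb : A ya xb := by rw [hxb]; exact B.harc ya
  have hAybxa : A yb xa := by rw [hxa]; exact B.harc yb
  have hAxayb2 : A xa ya := by rw [← hf4y]; exact B.harc xa
  have hAxbyb : A xb yb := by rw [hyb]; exact B.harc xb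
  -- cross-cycle inequality facts
  have hne_xaxc : xa ≠ xc := by intro h; exact hsplit ((h ▸ hscxa).symm)
  have hne_xaxd : xa ≠ xd := by intro h; exact hsplit (hscxd.trans (h ▸ hscxa).symm)
  have hne_xbxc : xb ≠ xc := by intro h; exact hsplit ((h ▸ hscxb).symm)
  have hne_xbxd : xb ≠ xd := by intro h; exact hsplit (hscxd.trans (h ▸ hscxb).symm)
  have hne_ycya : yc ≠ ya := by intro h; exact hsplit (h ▸ hscyc)
  have hne_ycyb : yc ≠ yb := by intro h; exact hsplit ((h ▸ hscyc).trans hscyb.symm)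
  have hne_ydya : yd ≠ ya := by intro h; exact hsplit (h ▸ hscyd)
  have hne_ydyb : yd ≠ yb := by intro h; exact hsplit ((h ▸ hscyd).trans hscyb.symm)
  -- blocked-pair non-arcs for the small vertices
  have hnsc_xaxc : ¬ f.SameCycle xa xc := fun h => hsplit (hscxa.trans h).symm
  have hnsc_xaxd : ¬ f.SameCycle xa xd := fun h => hsplit ((hscxa.trans h).trans hscxd.symm).symm
  have hnsc_xbxc : ¬ f.SameCycle xb xc := fun h => hsplit (hscxb.trans h).symm
  have hnsc_xbxd : ¬ f.SameCycle xb xd := fun h => hsplit ((hscxb.trans h).trans hscxd.symm).symm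
  have hnsc_ycya : ¬ f.SameCycle yc ya := fun h => hsplit (hscyc.trans h)
  have hnsc_ycyb : ¬ f.SameCycle yc yb := fun h => hsplit ((hscyc.trans h).trans hscyb.symm)
  have hnsc_ydya : ¬ f.SameCycle yd ya := fun h => hsplit (hscyd.trans h)
  have hnsc_ydyb : ¬ f.SameCycle yd yb := fun h => hsplit ((hscyd.trans h).trans hscyb.symm)
  have hm_xayc : ¬ A xa yc := by
    intro hA
    apply B.hblk xa xc hnsc_xaxc
    rw [← hyc, hf4y]
    exact ⟨hA, hxcO _ huyY⟩
  have hm_xayd : ¬ A xa yd := by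
    intro hA
    apply B.hblk xa xd hnsc_xaxd
    rw [← hyd, hf4y]
    exact ⟨hA, hxdO _ huyY⟩
  have hm_xbyc : ¬ A xb yc := by
    intro hA
    apply B.hblk xb xc hnsc_xbxc
    rw [← hyc, ← hyb]
    exact ⟨hA, hxcO _ hybY⟩
  have hm_xbyd : ¬ A xb yd := by
    intro hA
    apply B.hblk xb xd hnsc_xbxd
    rw [← hyd, ← hyb]
    exact ⟨hA, hxdO _ hybY⟩
  have hm_ycxa : ¬ A yc xa := by
    intro hA
    apply B.hblk yc yb hnsc_ycyb
    rw [← hxa, ← hxd]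
    exact ⟨hA, hybO _ hxdX⟩
  have hm_ycxb : ¬ A yc xb := by
    intro hA
    apply B.hblk yc ya hnsc_ycya
    rw [← hxb, ← hxd]
    exact ⟨hA, hyaO _ hxdX⟩
  have hm_ydxa : ¬ A yd xa := by
    intro hA
    apply B.hblk yd yb hnsc_ydyb
    rw [← hxa, hf4x]
    exact ⟨hA, hybO _ huxX⟩
  have hm_ydxb : ¬ A yd xb := by
    intro hA
    apply B.hblk yd ya hnsc_ydya
    rw [← hxb, hf4x]
    exact ⟨hA, hyaO _ huxX⟩
  -- out-neighbour determination for the small vertices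
  have hxaO : ∀ z, A xa z → z = ya := by
    intro z hz
    have hzY : z ∈ Y := B.H.arc_mem_left hz hxaX
    rcases hYenum z hzY with h | h | h | h
    · exact h
    · exfalso
      subst h
      exact hne_xaxb (B.H.small_in_unique hz hAxbyb hsxa hsxb)
    · exact absurd (h ▸ hz) hm_xayc
    · exact absurd (h ▸ hz) hm_xayd
  have hxbO : ∀ z, A xb z → z = yb := by
    intro z hz
    have hzY : z ∈ Y := B.H.arc_mem_left hz hxbX
    rcases hYenum z hzY with h | h | h | h
    · exfalso
      subst h
      exact hne_xaxb (B.H.small_in_unique hAxayb2 hz hsxa hsxb)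
    · exact h
    · exact absurd (h ▸ hz) hm_xbyc
    · exact absurd (h ▸ hz) hm_xbyd
  have hycO : ∀ z, A yc z → z = xd := by
    intro z hz
    have hzX : z ∈ X := B.H.symm.arc_mem_left hz hycY
    rcases hXenum z hzX with h | h | h | h
    · exact absurd (h ▸ hz) hm_ycxa
    · exact absurd (h ▸ hz) hm_ycxb
    · exfalso
      subst h
      exact hne_ycyd (B.H.small_in_unique hz hAydxc hsyc hsyd)
    · exact h
  have hydO : ∀ z, A yd z → z = xc := by
    intro z hz
    have hzX : z ∈ X := B.H.symm.arc_mem_left hz hydY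
    rcases hXenum z hzX with h | h | h | h
    · exact absurd (h ▸ hz) hm_ydxa
    · exact absurd (h ▸ hz) hm_ydxb
    · exact h
    · exfalso
      subst h
      exact hne_ycyd (B.H.small_in_unique hAycxd hz hsyc hsyd)
  -- cross-part inequalities
  have hXneY : ∀ {p q : V}, p ∈ X → q ∈ Y → p ≠ q := by
    intro p q hp hq h
    exact B.H.hdisj p hp (h ▸ hq)
  have hne_xaya : xa ≠ ya := hXneY hxaX huyY
  have hne_xayb : xa ≠ yb := hXneY hxaX hybY
  have hne_xayc : xa ≠ yc := hXneY hxaX hycY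
  have hne_xayd : xa ≠ yd := hXneY hxaX hydY
  have hne_xbya : xb ≠ ya := hXneY hxbX huyY
  have hne_xbyb : xb ≠ yb := hXneY hxbX hybY
  have hne_xbyc : xb ≠ yc := hXneY hxbX hycY
  have hne_xbyd : xb ≠ yd := hXneY hxbX hydY
  have hne_xcya : xc ≠ ya := hXneY huxX huyY
  have hne_xcyb : xc ≠ yb := hXneY huxX hybY
  have hne_xcyc : xc ≠ yc := hXneY huxX hycY
  have hne_xcyd : xc ≠ yd := hXneY huxX hydY
  have hne_xdya : xd ≠ ya := hXneY hxdX huyY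
  have hne_xdyb : xd ≠ yb := hXneY hxdX hybY
  have hne_xdyc : xd ≠ yc := hXneY hxdX hycY
  have hne_xdyd : xd ≠ yd := hXneY hxdX hydY
  have hne_xcxd : xc ≠ xd := fun h => hne_x h.symm
  have hne_yayb : ya ≠ yb := fun h => hne_y h.symm
  -- rows
  have hr0 : ∀ z, A xa z ↔ z = ya := fun z => ⟨hxaO z, fun h => h ▸ hAxayb2⟩
  have hr1 : ∀ z, A xb z ↔ z = yb := fun z => ⟨hxbO z, fun h => h ▸ hAxbyb⟩
  have hr2 : ∀ z, A xc z ↔ z ∈ Y := fun z => ⟨fun h => B.H.arc_mem_left h huxX, hxcO z⟩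
  have hr3 : ∀ z, A xd z ↔ z ∈ Y := fun z => ⟨fun h => B.H.arc_mem_left h hxdX, hxdO z⟩
  have hr4 : ∀ z, A ya z ↔ z ∈ X := fun z => ⟨fun h => B.H.symm.arc_mem_left h huyY, hyaO z⟩
  have hr5 : ∀ z, A yb z ↔ z ∈ X := fun z => ⟨fun h => B.H.symm.arc_mem_left h hybY, hybO z⟩
  have hr6 : ∀ z, A yd z ↔ z = xc := fun z => ⟨hydO z, fun h => h ▸ hAydxc⟩
  have hr7 : ∀ z, A yc z ↔ z = xd := fun z => ⟨hycO z, fun h => h ▸ hAycxd⟩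
  -- nonmemberships
  have hxaNY : xa ∉ Y := fun h => B.H.hdisj xa hxaX h
  have hxbNY : xb ∉ Y := fun h => B.H.hdisj xb hxbX h
  have hxcNY : xc ∉ Y := fun h => B.H.hdisj xc huxX h
  have hxdNY : xd ∉ Y := fun h => B.H.hdisj xd hxdX h
  have hyaNX : ya ∉ X := fun h => B.H.hdisj ya h huyY
  have hybNX : yb ∉ X := fun h => B.H.hdisj yb h hybY
  have hycNX : yc ∉ X := fun h => B.H.hdisj yc h hycY
  have hydNX : yd ∉ X := fun h => B.H.hdisj yd h hydY
  -- the equivalence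
  have henum : ∀ u : V, u = xa ∨ u = xb ∨ u = xc ∨ u = xd ∨ u = ya ∨ u = yb ∨ u = yd ∨ u = yc := by
    intro u
    rcases B.H.hunion u with h | h
    · rcases hXenum u h with h | h | h | h
      · exact Or.inl h
      · exact Or.inr (Or.inl h)
      · exact Or.inr (Or.inr (Or.inl h))
      · exact Or.inr (Or.inr (Or.inr (Or.inl h)))
    · rcases hYenum u h with h | h | h | h
      · exact Or.inr (Or.inr (Or.inr (Or.inr (Or.inl h))))
      · exact Or.inr (Or.inr (Or.inr (Or.inr (Or.inr (Or.inl h)))))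
      · exact Or.inr (Or.inr (Or.inr (Or.inr (Or.inr (Or.inr (Or.inr h))))))
      · exact Or.inr (Or.inr (Or.inr (Or.inr (Or.inr (Or.inr (Or.inl h))))))
  have hglinj : Function.Injective (![xa, xb, xc, xd, ya, yb, yd, yc] : Fin 8 → V) := by
    intro i j hij
    fin_cases i <;> fin_cases j <;>
      first
      | rfl
      | exact absurd hij (by assumption)
      | exact absurd hij.symm (by assumption)
      | exact absurd hij (Ne.symm (by assumption))
      | exact absurd hij.symm (Ne.symm (by assumption))
  have hcard8 : Fintype.card V = 8 := by rw [B.H.card_univ_eq, ha4]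
  have hglbij : Function.Bijective (![xa, xb, xc, xd, ya, yb, yd, yc] : Fin 8 → V) := by
    rw [Fintype.bijective_iff_injective_and_card]
    exact ⟨hglinj, by rw [hcard8]; simp⟩
  set g8 : Fin 8 ≃ V := Equiv.ofBijective _ hglbij with hg8
  refine ⟨g8.symm, ?_⟩
  have hval : ∀ i : Fin 8, g8 i = (![xa, xb, xc, xd, ya, yb, yd, yc] : Fin 8 → V) i := fun i => rfl
  have he_xa : g8.symm xa = 0 := by rw [Equiv.symm_apply_eq, hval]; rfl
  have he_xb : g8.symm xb = 1 := by rw [Equiv.symm_apply_eq, hval]; rfl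
  have he_xc : g8.symm xc = 2 := by rw [Equiv.symm_apply_eq, hval]; rfl
  have he_xd : g8.symm xd = 3 := by rw [Equiv.symm_apply_eq, hval]; rfl
  have he_ya : g8.symm ya = 4 := by rw [Equiv.symm_apply_eq, hval]; rfl
  have he_yb : g8.symm yb = 5 := by rw [Equiv.symm_apply_eq, hval]; rfl
  have he_yd : g8.symm yd = 6 := by rw [Equiv.symm_apply_eq, hval]; rfl
  have he_yc : g8.symm yc = 7 := by rw [Equiv.symm_apply_eq, hval]; rfl
  intro u v
  rcases henum u with hu | hu | hu | hu | hu | hu | hu | hu <;>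
    rcases henum v with hv | hv | hv | hv | hv | hv | hv | hv <;> rw [hu, hv] <;>
    simp only [he_xa, he_xb, he_xc, he_xd, he_ya, he_yb, he_yd, he_yc] <;>
    (first
      | rw [hr0] | rw [hr1] | rw [hr2] | rw [hr3] | rw [hr4] | rw [hr5] | rw [hr6] | rw [hr7]) <;>
    (first
      | exact iff_of_true rfl (by unfold D8; decide)
      | exact iff_of_true (by assumption) (by unfold D8; decide)
      | exact iff_of_false (by assumption) (by unfold D8; decide)
      | exact iff_of_false (Ne.symm (by assumption)) (by unfold D8; decide))

end BS

end BBD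

/-- Theorem 1.9: a strongly connected balanced bipartite digraph of order `2a ≥ 8` in
which `max {d(x), d(y)} ≥ 2a − 1` for every pair of distinct vertices with a common
out-neighbour is hamiltonian, unless it is isomorphic to `D(8)`. -/
theorem stmt5 [Fintype V] (A : V → V → Prop) (X Y : Set V) (a : ℕ) (ha : 4 ≤ a)
    (hX : X.ncard = a) (hY : Y.ncard = a) (hbip : IsBipartition A X Y)
    (hstrong : StrongConn A)
    (hdeg : ∀ x y : V, DomPair A x y → 2 * a - 1 ≤ max (deg A x) (deg A y))
    (hnotD8 : ¬ ∃ e : V ≃ Fin 8, ∀ u v, A u v ↔ D8 (e u) (e v)) :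
    Hamiltonian A := by
  classical
  obtain ⟨hdisj, hunion, harcs⟩ := hbip
  have hbridge : ∀ S : Set V, S.ncard = (Finset.univ.filter (· ∈ S)).card := by
    intro S
    haveI : Fintype S := Fintype.ofFinite S
    rw [Set.ncard_eq_toFinset_card' S]
    congr 1
    ext v
    simp
  have hdegeq : ∀ x, deg A x = BBD.DegF A x := by
    intro x
    unfold deg BBD.DegF BBD.outs BBD.ins
    rw [hbridge {y | A x y}, hbridge {y | A y x}]
    rfl
  set Xf : Finset V := Finset.univ.filter (· ∈ X) with hXf
  set Yf : Finset V := Finset.univ.filter (· ∈ Y) with hYf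
  have hmemX : ∀ v, v ∈ Xf ↔ v ∈ X := by intro v; simp [hXf]
  have hmemY : ∀ v, v ∈ Yf ↔ v ∈ Y := by intro v; simp [hYf]
  have H : BBD.Hyps A Xf Yf a := by
    refine ⟨ha, by rw [← hbridge X, hX], by rw [← hbridge Y, hY], ?_, ?_, ?_, ?_, ?_⟩
    · intro v hx hy
      exact Set.disjoint_left.1 hdisj ((hmemX v).1 hx) ((hmemY v).1 hy)
    · intro v
      have : v ∈ X ∪ Y := hunion ▸ Set.mem_univ v
      rcases this with h | h
      · exact Or.inl ((hmemX v).2 h)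
      · exact Or.inr ((hmemY v).2 h)
    · intro u v h
      rcases harcs u v h with ⟨h1, h2⟩ | ⟨h1, h2⟩
      · exact Or.inl ⟨(hmemX u).2 h1, (hmemY v).2 h2⟩
      · exact Or.inr ⟨(hmemY u).2 h1, (hmemX v).2 h2⟩
    · intro u v z hne h1 h2
      have := hdeg u v ⟨hne, z, h1, h2⟩
      rw [hdegeq u, hdegeq v] at this
      unfold BBD.BigV
      rcases le_max_iff.1 this with h | h
      · exact Or.inl h
      · exact Or.inr h
    · intro S hSne hSneq
      obtain ⟨u, hu⟩ := hSne
      have hex : ∃ v, v ∉ S := by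
        by_contra hcon
        push_neg at hcon
        exact hSneq (Finset.eq_univ_iff_forall.2 hcon)
      obtain ⟨v, hv⟩ := hex
      have key : ∀ {p q : V}, Relation.ReflTransGen A p q → p ∈ S → q ∉ S →
          ∃ p' ∈ S, ∃ q', q' ∉ S ∧ A p' q' := by
        intro p q h
        induction h with
        | refl => intro hp hq; exact absurd hp hq
        | @tail b c hab hbc ih =>
            intro hp hq
            by_cases hb : b ∈ S
            · exact ⟨b, hb, c, hq, hbc⟩
            · exact ih hp hb
      exact key (hstrong u v) hu hv
  obtain ⟨f, harc, hcase⟩ := H.exists_min_factor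
  have hcard2 : 2 ≤ Fintype.card V := by
    rw [H.card_univ_eq]; omega
  by_cases hone : ∀ v w : V, f.SameCycle v w
  · exact BBD.ham_single f harc hone hcard2
  · rcases hcase with hone' | hblk
    · exact BBD.ham_single f harc hone' hcard2
    · push_neg at hone
      obtain ⟨v, w, hvw⟩ := hone
      have B : BBD.BS A Xf Yf a f := ⟨H, harc, hblk⟩
      obtain ⟨e, he⟩ := B.blocked_main ⟨v, w, hvw⟩
      exact absurd ⟨e, he⟩ hnotD8
end
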